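/- arXiv:1109.5426 — 4 statements merged into one kernel-verified Lean document; each statement's English description precedes it below -/
import Mathlib

section
/- Fix real numbers a, b with ab ≠ 0 and σ > 0, P > 0, γ > 0. For every positive integer n, the maximization of (1/2n) Σ_{i=1}^n log(1 + (μ_i/σ²)·(1+abλ_i)²/(1+b²λ_i²)) over μ ∈ ℝⁿ, λ ∈ ℝⁿ subject to μ_i ≥ 0 for all i, Σ_{i=1}^n μ_i ≤ nP, and Σ_{i=1}^n (a²μ_i + σ²)λ_i² ≤ nγP admits a maximizer (μ*, λ*) such that the set of values {λ*_1, …, λ*_n} has at most 8 elements, at most 7 of which are nonzero, and such that μ*_i = μ*_j whenever λ*_i = λ*_j. -/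
open Polynomial


noncomputable def Fob (a b σ m t : ℝ) : ℝ :=
  Real.log (1 + m / σ ^ 2 * (1 + a * b * t) ^ 2 / (1 + b ^ 2 * t ^ 2))

noncomputable def Lm (a b σ m t : ℝ) : ℝ :=
  ((1/σ^2) * (1 + a*b*t)^2 / (1 + b^2*t^2))
    / (1 + m / σ ^ 2 * (1 + a * b * t) ^ 2 / (1 + b ^ 2 * t ^ 2))

noncomputable def Lt (a b σ m t : ℝ) : ℝ :=
  (m/σ^2 * (2*(1 + a*b*t)*(a*b - b^2*t)) / (1 + b^2*t^2)^2)
    / (1 + m / σ ^ 2 * (1 + a * b * t) ^ 2 / (1 + b ^ 2 * t ^ 2))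

/-- general chain rule for `Fob` along a curve `s ↦ (w s, u s)`. -/
lemma Fob_comp_hasDerivAt (a b σ : ℝ) {w u : ℝ → ℝ} {w' u' s : ℝ}
    (hw : HasDerivAt w w' s) (hu : HasDerivAt u u' s)
    (hσ : σ ≠ 0) (hm : 0 ≤ w s) :
    HasDerivAt (fun x => Fob a b σ (w x) (u x))
      (w' * Lm a b σ (w s) (u s) + u' * Lt a b σ (w s) (u s)) s := by
  have hD : (0:ℝ) < 1 + b ^ 2 * (u s) ^ 2 := by positivity
  have harg : (0:ℝ) < 1 + w s / σ ^ 2 * (1 + a * b * u s) ^ 2 / (1 + b ^ 2 * (u s) ^ 2) := by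
    have : 0 ≤ w s / σ ^ 2 * (1 + a * b * u s) ^ 2 / (1 + b ^ 2 * (u s) ^ 2) := by positivity
    linarith
  have hE : HasDerivAt (fun x => 1 + a*b*u x) (a*b*u') s := by
    simpa using ((hu.const_mul (a*b)).const_add 1)
  have hnum : HasDerivAt (fun x => w x / σ ^ 2 * (1 + a*b*u x) ^ 2)
      (w' / σ ^ 2 * (1 + a*b*u s) ^ 2 + w s / σ ^ 2 * (2 * (1 + a*b*u s) * (a*b*u'))) s := by
    have h1 : HasDerivAt (fun x => w x / σ ^ 2) (w' / σ ^ 2) s := hw.div_const _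
    have h2 : HasDerivAt (fun x => (1 + a*b*u x) ^ 2) (2 * (1 + a*b*u s) * (a*b*u')) s := by
      have := hE.fun_pow 2
      simpa [mul_comm, mul_assoc, mul_left_comm] using this
    simpa [mul_comm] using h1.fun_mul h2
  have hden : HasDerivAt (fun x => 1 + b ^ 2 * (u x) ^ 2) (2*b^2*(u s)*u') s := by
    have h1 : HasDerivAt (fun x => (u x) ^ 2) (2 * u s * u') s := by
      simpa [mul_comm, mul_assoc] using (hu.fun_pow 2)
    simpa [mul_comm, mul_assoc, mul_left_comm] using (h1.const_mul (b^2)).const_add 1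
  have hq := hnum.div hden (ne_of_gt hD)
  have hlog := (Real.hasDerivAt_log (ne_of_gt harg)).comp s (hq.const_add 1)
  unfold Fob Lm Lt
  refine hlog.congr_deriv ?_
  field_simp
  ring

lemma Fob_hasDerivAt_t (a b σ m : ℝ) (t : ℝ) (hσ : σ ≠ 0) (hm : 0 ≤ m) :
    HasDerivAt (fun x => Fob a b σ m x) (Lt a b σ m t) t := by
  have := Fob_comp_hasDerivAt a b σ (w := fun _ => m) (u := fun x => x)
    (hasDerivAt_const t m) (hasDerivAt_id t) hσ hm
  simpa using this

lemma exchange_lambda (a b σ m1 m2 t1 t2 : ℝ) (hσ : 0 < σ)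
    (hm1 : 0 ≤ m1) (hm2 : 0 ≤ m2) (ht1 : t1 ≠ 0)
    (hmax : ∀ u1 u2 : ℝ,
      (a^2*m1+σ^2)*u1^2 + (a^2*m2+σ^2)*u2^2 = (a^2*m1+σ^2)*t1^2 + (a^2*m2+σ^2)*t2^2 →
      Fob a b σ m1 u1 + Fob a b σ m2 u2 ≤ Fob a b σ m1 t1 + Fob a b σ m2 t2) :
    Lt a b σ m2 t2 * ((a^2*m1+σ^2)*t1) = Lt a b σ m1 t1 * ((a^2*m2+σ^2)*t2) := by
  set D1 : ℝ := a^2*m1+σ^2 with hD1def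
  set D2 : ℝ := a^2*m2+σ^2 with hD2def
  have hD1 : 0 < D1 := by rw [hD1def]; positivity
  have hD2 : 0 < D2 := by rw [hD2def]; positivity
  set K : ℝ := D1*t1^2 + D2*t2^2 with hKdef
  have habs : |t1| ≠ 0 := abs_ne_zero.mpr ht1
  have hinner2 : (K - D2*t2^2)/D1 = t1^2 := by
    rw [hKdef]; field_simp; ring
  set ψ : ℝ → ℝ := fun t => (t1/|t1|) * Real.sqrt ((K - D2*t^2)/D1) with hψdef
  have hψt2 : ψ t2 = t1 := by
    rw [hψdef]; simp only [hinner2, Real.sqrt_sq_eq_abs]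
    field_simp
  -- derivative of ψ at t2
  have hN : HasDerivAt (fun t : ℝ => (K - D2*t^2)/D1) (-(D2*(2*t2))/D1) t2 := by
    have h1 : HasDerivAt (fun t : ℝ => t^2) (2*t2) t2 := by simpa using hasDerivAt_pow 2 t2
    exact ((h1.const_mul D2).const_sub K).div_const D1 |>.congr_deriv (by ring)
  have hsqrtarg : (K - D2*t2^2)/D1 ≠ 0 := by rw [hinner2]; exact pow_ne_zero 2 ht1
  have hsq := (Real.hasDerivAt_sqrt hsqrtarg).comp t2 hN
  have hψd : HasDerivAt ψ (-(D2*t2)/(D1*t1)) t2 := by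
    have := hsq.const_mul (t1/|t1|)
    refine this.congr_deriv ?_
    rw [hinner2, Real.sqrt_sq_eq_abs]
    rcases lt_or_gt_of_ne ht1 with h | h
    · rw [abs_of_neg h]; field_simp
    · rw [abs_of_pos h]; field_simp
  have hFd1 := Fob_hasDerivAt_t a b σ m1 t1 (ne_of_gt hσ) hm1
  have hFd2 := Fob_hasDerivAt_t a b σ m2 t2 (ne_of_gt hσ) hm2
  set φ : ℝ → ℝ := fun t => Fob a b σ m1 (ψ t) + Fob a b σ m2 t with hφdef
  have hcomp : HasDerivAt (fun t => Fob a b σ m1 (ψ t))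
      (Lt a b σ m1 t1 * (-(D2*t2)/(D1*t1))) t2 := by
    have hFd1' : HasDerivAt (fun x => Fob a b σ m1 x) (Lt a b σ m1 t1) (ψ t2) := by
      rw [hψt2]; exact hFd1
    exact hFd1'.comp t2 hψd
  have hφd : HasDerivAt φ (Lt a b σ m1 t1 * (-(D2*t2)/(D1*t1)) + Lt a b σ m2 t2) t2 :=
    hcomp.add hFd2
  -- local max
  have hloc : IsLocalMax φ t2 := by
    have hcont : Continuous (fun t : ℝ => K - D2*t^2) := by continuity
    have hpos : (0:ℝ) < K - D2*t2^2 := by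
      have : K - D2*t2^2 = D1*t1^2 := by rw [hKdef]; ring
      rw [this]; positivity
    have hev : ∀ᶠ t in nhds t2, 0 < K - D2*t^2 :=
      hcont.continuousAt.eventually_mem (Ioi_mem_nhds hpos) |>.mono (fun t ht => ht)
    filter_upwards [hev] with t ht
    have hψsq : D1 * (ψ t)^2 = K - D2*t^2 := by
      rw [hψdef]
      have h1 : ((t1/|t1|) * Real.sqrt ((K - D2*t^2)/D1))^2
          = (t1^2/|t1|^2) * ((K - D2*t^2)/D1) := by
        rw [mul_pow, div_pow, Real.sq_sqrt (by positivity)]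
      rw [h1, sq_abs]
      field_simp
    have := hmax (ψ t) t (by rw [hψsq]; ring)
    calc φ t = Fob a b σ m1 (ψ t) + Fob a b σ m2 t := rfl
      _ ≤ Fob a b σ m1 t1 + Fob a b σ m2 t2 := this
      _ = φ t2 := by rw [hφdef]; simp [hψt2]
  have heq : Lt a b σ m1 t1 * (-(D2*t2)/(D1*t1)) + Lt a b σ m2 t2 = 0 := by
    have := hloc.deriv_eq_zero
    rwa [hφd.deriv] at this
  have hD1t1 : D1*t1 ≠ 0 := mul_ne_zero (ne_of_gt hD1) ht1
  field_simp at heq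
  linarith [heq]

lemma exchange_mu (a b σ m1 m2 t1 t2 : ℝ) (hσ : 0 < σ)
    (hm1 : 0 < m1) (hm2 : 0 < m2) (ht1 : t1 ≠ 0)
    (hmax : ∀ w1 w2 u1 : ℝ, 0 ≤ w1 → 0 ≤ w2 → w1 + w2 = m1 + m2 →
      (a^2*w1+σ^2)*u1^2 + (a^2*w2+σ^2)*t2^2 = (a^2*m1+σ^2)*t1^2 + (a^2*m2+σ^2)*t2^2 →
      Fob a b σ w1 u1 + Fob a b σ w2 t2 ≤ Fob a b σ m1 t1 + Fob a b σ m2 t2) :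
    Lm a b σ m2 t2 * (2*t1*(a^2*m1+σ^2))
      = Lm a b σ m1 t1 * (2*t1*(a^2*m1+σ^2)) - Lt a b σ m1 t1 * (a^2*(t1^2-t2^2)) := by
  set D1 : ℝ := a^2*m1+σ^2 with hD1def
  have hD1 : 0 < D1 := by rw [hD1def]; positivity
  set K : ℝ := D1*t1^2 + (a^2*m2+σ^2)*t2^2 with hKdef
  set M : ℝ := m1 + m2 with hMdef
  have habs : |t1| ≠ 0 := abs_ne_zero.mpr ht1
  set N : ℝ → ℝ := fun s => K - (a^2*s+σ^2)*t2^2 with hNdef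
  set Dn : ℝ → ℝ := fun s => a^2*(M-s)+σ^2 with hDndef
  have hNm2 : N m2 = D1*t1^2 := by rw [hNdef, hKdef]; ring
  have hDnm2 : Dn m2 = D1 := by rw [hDndef, hD1def, hMdef]; ring
  have hinner : N m2 / Dn m2 = t1^2 := by
    rw [hNm2, hDnm2]; field_simp
  set χ : ℝ → ℝ := fun s => (t1/|t1|) * Real.sqrt (N s / Dn s) with hχdef
  have hχm2 : χ m2 = t1 := by
    rw [hχdef]; simp only [hinner, Real.sqrt_sq_eq_abs]
    field_simp
  -- derivative of the ratio
  have hNd : HasDerivAt N (-(a^2*t2^2)) m2 := by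
    have : HasDerivAt (fun s : ℝ => (a^2*s+σ^2)*t2^2) (a^2*t2^2) m2 := by
      simpa using (((hasDerivAt_id m2).const_mul (a^2)).add_const (σ^2)).mul_const (t2^2)
    simpa using this.const_sub K
  have hDnd : HasDerivAt Dn (-a^2) m2 := by
    have : HasDerivAt (fun s : ℝ => M - s) (-1) m2 := by
      simpa using (hasDerivAt_id m2).const_sub M
    have h2 := (this.const_mul (a^2)).add_const (σ^2)
    exact h2.congr_deriv (show a^2 * -1 = -a^2 by ring)
  have hRd : HasDerivAt (fun s => N s / Dn s)
      ((-(a^2*t2^2) * Dn m2 - N m2 * (-a^2)) / (Dn m2)^2) m2 :=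
    hNd.div hDnd (by rw [hDnm2]; exact ne_of_gt hD1)
  have hsqrtarg : N m2 / Dn m2 ≠ 0 := by rw [hinner]; exact pow_ne_zero 2 ht1
  have hsq := (Real.hasDerivAt_sqrt hsqrtarg).comp m2 hRd
  have hχd : HasDerivAt χ (a^2*(t1^2-t2^2)/(2*t1*D1)) m2 := by
    have := hsq.const_mul (t1/|t1|)
    refine this.congr_deriv ?_
    rw [hinner, Real.sqrt_sq_eq_abs, hNm2, hDnm2]
    rcases lt_or_gt_of_ne ht1 with h | h
    · rw [abs_of_neg h]; field_simp; ring
    · rw [abs_of_pos h]; field_simp; ring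
  -- the curve objective
  set φ : ℝ → ℝ := fun s => Fob a b σ (M - s) (χ s) + Fob a b σ s t2 with hφdef
  have hwd : HasDerivAt (fun s : ℝ => M - s) (-1) m2 := by
    simpa using (hasDerivAt_id m2).const_sub M
  have hw0 : (0:ℝ) ≤ M - m2 := by rw [hMdef]; linarith
  have hc1 := Fob_comp_hasDerivAt a b σ hwd hχd (ne_of_gt hσ) hw0
  have hMm2 : M - m2 = m1 := by rw [hMdef]; ring
  rw [hMm2, hχm2] at hc1
  have hc2 := Fob_comp_hasDerivAt a b σ (hasDerivAt_id m2)
      (hasDerivAt_const m2 t2) (ne_of_gt hσ) (le_of_lt hm2)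
  have hφd : HasDerivAt φ
      ((-1) * Lm a b σ m1 t1 + (a^2*(t1^2-t2^2)/(2*t1*D1)) * Lt a b σ m1 t1
        + (1 * Lm a b σ m2 t2 + 0 * Lt a b σ m2 t2)) m2 := by
    exact hc1.add (by simpa using hc2)
  -- local maximality
  have hloc : IsLocalMax φ m2 := by
    have hcontN : Continuous N := by rw [hNdef]; fun_prop
    have hcontDn : Continuous Dn := by rw [hDndef]; fun_prop
    have hNpos : 0 < N m2 := by rw [hNm2]; positivity
    have hDnpos : 0 < Dn m2 := by rw [hDnm2]; exact hD1
    have hevN : ∀ᶠ s in nhds m2, 0 < N s :=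
      hcontN.continuousAt.eventually_mem (Ioi_mem_nhds hNpos) |>.mono (fun s hs => hs)
    have hevDn : ∀ᶠ s in nhds m2, 0 < Dn s :=
      hcontDn.continuousAt.eventually_mem (Ioi_mem_nhds hDnpos) |>.mono (fun s hs => hs)
    have hevs : ∀ᶠ s in nhds m2, 0 < s := eventually_gt_nhds hm2
    have hevM : ∀ᶠ s in nhds m2, 0 < M - s := by
      have : ∀ᶠ s in nhds m2, s < M := eventually_lt_nhds (by rw [hMdef]; linarith)
      exact this.mono (fun s hs => by linarith)
    filter_upwards [hevN, hevDn, hevs, hevM] with s hN' hDn' hs hMs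
    have hχsq : Dn s * (χ s)^2 = N s := by
      rw [hχdef]
      have h1 : ((t1/|t1|) * Real.sqrt (N s / Dn s))^2
          = (t1^2/|t1|^2) * (N s / Dn s) := by
        rw [mul_pow, div_pow, Real.sq_sqrt (by positivity)]
      rw [h1, sq_abs]
      field_simp
    have hcons : (a^2*(M-s)+σ^2)*(χ s)^2 + (a^2*s+σ^2)*t2^2
        = (a^2*m1+σ^2)*t1^2 + (a^2*m2+σ^2)*t2^2 := by
      have : (a^2*(M-s)+σ^2) = Dn s := by rw [hDndef]
      rw [this, hχsq, hNdef, hKdef, hD1def]; ring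
    have := hmax (M-s) s (χ s) (le_of_lt hMs) (le_of_lt hs) (by ring) hcons
    calc φ s = Fob a b σ (M-s) (χ s) + Fob a b σ s t2 := rfl
      _ ≤ Fob a b σ m1 t1 + Fob a b σ m2 t2 := this
      _ = φ m2 := by rw [hφdef]; simp only [hMm2, hχm2]
  have heq : (-1) * Lm a b σ m1 t1 + (a^2*(t1^2-t2^2)/(2*t1*D1)) * Lt a b σ m1 t1
      + (1 * Lm a b σ m2 t2 + 0 * Lt a b σ m2 t2) = 0 := by
    have := hloc.deriv_eq_zero
    rwa [hφd.deriv] at this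
  have h2t1D1 : 2*t1*D1 ≠ 0 :=
    mul_ne_zero (mul_ne_zero two_ne_zero ht1) (ne_of_gt hD1)
  have hfrac : (a^2*(t1^2-t2^2)/(2*t1*D1)) * (2*t1*D1) = a^2*(t1^2-t2^2) :=
    div_mul_cancel₀ _ h2t1D1
  linear_combination (2*t1*D1) * heq - Lt a b σ m1 t1 * hfrac

lemma polyA (a b σ m t ν η : ℝ) (hσ : σ ≠ 0) (hm : 0 ≤ m)
    (hA : Lm a b σ m t = ν + η*a^2*t^2) :
    (1+a*b*t)^2 = (ν + η*a^2*t^2) * (σ^2*(1+b^2*t^2) + m*(1+a*b*t)^2) := by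
  have hD0 : (1+b^2*t^2) ≠ 0 := by positivity
  have hS0 : (1 + m / σ ^ 2 * (1 + a * b * t) ^ 2 / (1 + b ^ 2 * t ^ 2)) ≠ 0 := by
    have : 0 ≤ m / σ ^ 2 * (1 + a * b * t) ^ 2 / (1 + b ^ 2 * t ^ 2) := by positivity
    positivity
  have e1 : (1+a*b*t)^2 = Lm a b σ m t * (σ^2*(1+b^2*t^2) + m*(1+a*b*t)^2) := by
    unfold Lm
    field_simp
  rw [hA] at e1
  exact e1

lemma polyB (a b σ m t ν η : ℝ) (hσ : σ ≠ 0) (hm : 0 ≤ m)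
    (hB : Lt a b σ m t = 2*η*(a^2*m+σ^2)*t) :
    m*(1+a*b*t)*(a*b - b^2*t)
      = η*t*(1+b^2*t^2)*(a^2*m+σ^2)*(σ^2*(1+b^2*t^2) + m*(1+a*b*t)^2) := by
  have hD0 : (1+b^2*t^2) ≠ 0 := by positivity
  have hS0 : (1 + m / σ ^ 2 * (1 + a * b * t) ^ 2 / (1 + b ^ 2 * t ^ 2)) ≠ 0 := by
    have : 0 ≤ m / σ ^ 2 * (1 + a * b * t) ^ 2 / (1 + b ^ 2 * t ^ 2) := by positivity
    positivity
  have e1 : m*(1+a*b*t)*(a*b - b^2*t)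
      = Lt a b σ m t * ((1+b^2*t^2)*(σ^2*(1+b^2*t^2) + m*(1+a*b*t)^2)/2) := by
    unfold Lt
    field_simp
  rw [hB] at e1
  rw [e1]
  ring



noncomputable def qpoly (a b σ ν η : ℝ) : Polynomial ℝ :=
  C (a*b*ν - a*b*σ^2*ν^2)
  + C (-(σ^2*ν*η) - b^2*ν + b^2*σ^2*ν^2 - a^2*η + a^2*σ^2*ν*η + 2*a^2*b^2*ν) * X
  + C (-(3*a*b*σ^2*ν*η) - 2*a*b^3*ν - a*b^3*σ^2*ν^2 - 2*a^3*b*η - a^3*b*σ^2*ν*η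
      + a^3*b^3*ν) * X^2
  + C (-(b^2*σ^2*ν*η) + b^4*σ^2*ν^2 - a^2*σ^2*η^2 - 2*a^2*b^2*η + a^2*b^2*σ^2*ν*η
      - a^2*b^4*ν + a^4*σ^2*η^2 - a^4*b^2*η) * X^3
  + C (-(3*a*b^3*σ^2*ν*η) - 3*a^3*b*σ^2*η^2 - 5*a^3*b^3*η - a^3*b^3*σ^2*ν*η) * X^4
  + C (-(a^2*b^2*σ^2*η^2) - 4*a^4*b^4*η) * X^5
  + C (-(3*a^3*b^3*σ^2*η^2) - a^5*b^5*η) * X^6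
  + C (-(a^4*b^4*σ^2*η^2)) * X^7

lemma qpoly_natDegree_le (a b σ ν η : ℝ) : (qpoly a b σ ν η).natDegree ≤ 7 := by
  unfold qpoly
  compute_degree

lemma qpoly_coeff7 (a b σ ν η : ℝ) : (qpoly a b σ ν η).coeff 7 = -(a^4*b^4*σ^2*η^2) := by
  unfold qpoly
  simp only [coeff_add, coeff_C_mul, coeff_X_pow, coeff_C, coeff_X]
  norm_num

lemma qpoly_ne_zero (a b σ ν η : ℝ) (hab : a * b ≠ 0) (hσ : σ ≠ 0) (hη : η ≠ 0) :
    qpoly a b σ ν η ≠ 0 := by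
  intro h
  have h7 := qpoly_coeff7 a b σ ν η
  rw [h, coeff_zero] at h7
  have ha : a ≠ 0 := fun h' => hab (by simp [h'])
  have hb : b ≠ 0 := fun h' => hab (by simp [h'])
  have : a^4*b^4*σ^2*η^2 ≠ 0 := by positivity
  simp_all

lemma qpoly_root (a b σ ν η m t : ℝ)
    (hA : (1+a*b*t)^2 = (ν + η*a^2*t^2) * (σ^2*(1+b^2*t^2) + m*(1+a*b*t)^2))
    (hB : m*(1+a*b*t)*(a*b - b^2*t)
        = η*t*(1+b^2*t^2)*(a^2*m+σ^2)*(σ^2*(1+b^2*t^2) + m*(1+a*b*t)^2)) :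
    (qpoly a b σ ν η).eval t = 0 := by
  unfold qpoly
  simp only [eval_add, eval_mul, eval_pow, eval_C, eval_X]
  linear_combination
    ((ν + η*a^2*t^2)*(a*b - b^2*t) - η*a^2*t*(1+b^2*t^2)*(1+a*b*t)
      - η*t*(1+b^2*t^2)*(ν + η*a^2*t^2)*(1+a*b*t)*(a^2*m+σ^2)) * hA
    + ((ν + η*a^2*t^2)^2*(1+a*b*t)) * hB

lemma card_le_of_roots (q : Polynomial ℝ) (hq : q ≠ 0) (hdeg : q.natDegree ≤ 7)
    (T : Finset ℝ) (hT : ∀ x ∈ T, q.IsRoot x) : T.card ≤ 7 := by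
  have hsub : T ⊆ q.roots.toFinset := by
    intro x hx
    rw [Multiset.mem_toFinset, mem_roots hq]
    exact hT x hx
  calc T.card ≤ q.roots.toFinset.card := Finset.card_le_card hsub
    _ ≤ Multiset.card q.roots := Multiset.toFinset_card_le _
    _ ≤ q.natDegree := q.card_roots'
    _ ≤ 7 := hdeg


lemma concave_log_one_add (κ : ℝ) (hκ : 0 ≤ κ) :
    ConcaveOn ℝ (Set.Ici 0) (fun x => Real.log (1 + κ * x)) := by
  refine ⟨convex_Ici 0, ?_⟩
  intro x hx y hy p q hp hq hpq
  simp only [smul_eq_mul]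
  have h1 : (0:ℝ) < 1 + κ * x := by
    have : 0 ≤ κ * x := mul_nonneg hκ hx
    linarith
  have h2 : (0:ℝ) < 1 + κ * y := by
    have : 0 ≤ κ * y := mul_nonneg hκ hy
    linarith
  have hcc := (strictConcaveOn_log_Ioi.concaveOn).2 (Set.mem_Ioi.mpr h1)
    (Set.mem_Ioi.mpr h2) hp hq hpq
  simp only [smul_eq_mul] at hcc
  have heq : p * (1 + κ * x) + q * (1 + κ * y) = 1 + κ * (p * x + q * y) := by
    linear_combination hpq
  rwa [heq] at hcc

/-- Jensen for `x ↦ log (1 + κ x)` over a nonempty finset. -/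
lemma jensen_log (κ : ℝ) (hκ : 0 ≤ κ) {ι : Type*} (G : Finset ι) (hG : G.Nonempty)
    (m : ι → ℝ) (hm : ∀ j ∈ G, 0 ≤ m j) :
    ∑ j ∈ G, Real.log (1 + κ * m j)
      ≤ (G.card : ℝ) * Real.log (1 + κ * ((∑ j ∈ G, m j) / (G.card : ℝ))) := by
  have hc : (0:ℝ) < (G.card : ℝ) := by exact_mod_cast Finset.card_pos.mpr hG
  have hj := (concave_log_one_add κ hκ).le_map_sum (t := G)
    (w := fun _ => 1 / (G.card : ℝ)) (p := m)
    (fun j _ => by positivity)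
    (by rw [Finset.sum_const, nsmul_eq_mul]; field_simp)
    (fun j hj => Set.mem_Ici.mpr (hm j hj))
  simp only [smul_eq_mul] at hj
  have h1 : ∑ j ∈ G, 1 / (G.card:ℝ) * m j = (∑ j ∈ G, m j) / (G.card:ℝ) := by
    rw [Finset.sum_div]
    apply Finset.sum_congr rfl
    intro j _; ring
  have h2 : ∑ j ∈ G, 1 / (G.card:ℝ) * Real.log (1 + κ * m j)
      = (∑ j ∈ G, Real.log (1 + κ * m j)) / (G.card:ℝ) := by
    rw [Finset.sum_div]
    apply Finset.sum_congr rfl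
    intro j _; ring
  rw [h1, h2] at hj
  rw [div_le_iff₀ hc] at hj
  linarith [hj]

lemma sum_two_split {n : ℕ} (φ ψ : Fin n → ℝ) (i j : Fin n) (hij : i ≠ j)
    (hoff : ∀ k, k ≠ i → k ≠ j → φ k = ψ k) :
    (∑ k, φ k) - (∑ k, ψ k) = (φ i + φ j) - (ψ i + ψ j) := by
  classical
  have hji : j ∈ Finset.univ.erase i := Finset.mem_erase.mpr ⟨(Ne.symm hij), Finset.mem_univ j⟩
  have e1 : ∑ k, φ k = φ i + ∑ k ∈ Finset.univ.erase i, φ k :=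
    (Finset.add_sum_erase _ _ (Finset.mem_univ i)).symm
  have e2 : ∑ k ∈ Finset.univ.erase i, φ k
      = φ j + ∑ k ∈ (Finset.univ.erase i).erase j, φ k :=
    (Finset.add_sum_erase _ _ hji).symm
  have e3 : ∑ k, ψ k = ψ i + ∑ k ∈ Finset.univ.erase i, ψ k :=
    (Finset.add_sum_erase _ _ (Finset.mem_univ i)).symm
  have e4 : ∑ k ∈ Finset.univ.erase i, ψ k
      = ψ j + ∑ k ∈ (Finset.univ.erase i).erase j, ψ k :=
    (Finset.add_sum_erase _ _ hji).symm
  have etail : ∑ k ∈ (Finset.univ.erase i).erase j, φ k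
      = ∑ k ∈ (Finset.univ.erase i).erase j, ψ k := by
    apply Finset.sum_congr rfl
    intro k hk
    rw [Finset.mem_erase, Finset.mem_erase] at hk
    exact hoff k hk.2.1 hk.1
  rw [e1, e2, e3, e4, etail]
  ring

lemma exists_maximizer (a b σ P γ : ℝ) (hσ : 0 < σ) (hP : 0 < P) (hγ : 0 < γ)
    (n : ℕ) (hn : 0 < n) :
    ∃ p : (Fin n → ℝ) × (Fin n → ℝ),
      ((∀ i, 0 ≤ p.1 i) ∧ (∑ i, p.1 i ≤ (n:ℝ) * P) ∧
        (∑ i, (a^2 * p.1 i + σ^2) * (p.2 i)^2 ≤ (n:ℝ) * γ * P)) ∧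
      ∀ q : (Fin n → ℝ) × (Fin n → ℝ),
        ((∀ i, 0 ≤ q.1 i) ∧ (∑ i, q.1 i ≤ (n:ℝ) * P) ∧
          (∑ i, (a^2 * q.1 i + σ^2) * (q.2 i)^2 ≤ (n:ℝ) * γ * P)) →
        (∑ i, Fob a b σ (q.1 i) (q.2 i)) ≤ ∑ i, Fob a b σ (p.1 i) (p.2 i) := by
  set K : Set ((Fin n → ℝ) × (Fin n → ℝ)) :=
    {p | (∀ i, 0 ≤ p.1 i) ∧ (∑ i, p.1 i ≤ (n:ℝ) * P) ∧
      (∑ i, (a^2 * p.1 i + σ^2) * (p.2 i)^2 ≤ (n:ℝ) * γ * P)} with hKdef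
  have hnP : (0:ℝ) < (n:ℝ) * P := by
    have : (0:ℝ) < (n:ℝ) := by exact_mod_cast hn
    positivity
  have hnγP : (0:ℝ) ≤ (n:ℝ) * γ * P := by positivity
  have hKne : K.Nonempty := by
    refine ⟨(fun _ => 0, fun _ => 0), ?_, ?_, ?_⟩ <;> simp [le_of_lt hnP, hnγP]
  have hKclosed : IsClosed K := by
    have h1 : IsClosed {p : (Fin n → ℝ) × (Fin n → ℝ) | ∀ i, 0 ≤ p.1 i} := by
      have : {p : (Fin n → ℝ) × (Fin n → ℝ) | ∀ i, 0 ≤ p.1 i}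
          = ⋂ i, {p : (Fin n → ℝ) × (Fin n → ℝ) | 0 ≤ p.1 i} := by
        ext p; simp
      rw [this]
      exact isClosed_iInter fun i =>
        isClosed_le continuous_const ((continuous_apply i).comp continuous_fst)
    have h2 : IsClosed {p : (Fin n → ℝ) × (Fin n → ℝ) | ∑ i, p.1 i ≤ (n:ℝ) * P} :=
      isClosed_le (by fun_prop) continuous_const
    have h3 : IsClosed {p : (Fin n → ℝ) × (Fin n → ℝ) |
        ∑ i, (a^2 * p.1 i + σ^2) * (p.2 i)^2 ≤ (n:ℝ) * γ * P} :=
      isClosed_le (by fun_prop) continuous_const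
    have : K = {p : (Fin n → ℝ) × (Fin n → ℝ) | ∀ i, 0 ≤ p.1 i}
        ∩ ({p | ∑ i, p.1 i ≤ (n:ℝ) * P}
          ∩ {p | ∑ i, (a^2 * p.1 i + σ^2) * (p.2 i)^2 ≤ (n:ℝ) * γ * P}) := by
      ext p; simp [hKdef, and_assoc]
    rw [this]
    exact h1.inter (h2.inter h3)
  set B : ℝ := Real.sqrt ((n:ℝ) * γ * P / σ^2) with hBdef
  have hB0 : 0 ≤ B := Real.sqrt_nonneg _
  have hKcompact : IsCompact K := by
    have hsub : K ⊆ (Set.univ.pi fun _ : Fin n => Set.Icc (0:ℝ) ((n:ℝ)*P)) ×ˢ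
        (Set.univ.pi fun _ : Fin n => Set.Icc (-B) B) := by
      rintro ⟨μ, l⟩ ⟨h1, h2, h3⟩
      constructor
      · intro i _
        refine ⟨h1 i, ?_⟩
        calc μ i ≤ ∑ j, μ j := Finset.single_le_sum (fun j _ => h1 j) (Finset.mem_univ i)
          _ ≤ (n:ℝ)*P := h2
      · intro i _
        have hterm : σ^2 * (l i)^2 ≤ (n:ℝ)*γ*P := by
          have hle : (a^2 * μ i + σ^2) * (l i)^2 ≤ ∑ j, (a^2 * μ j + σ^2) * (l j)^2 := by
            apply Finset.single_le_sum (f := fun j => (a^2 * μ j + σ^2) * (l j)^2)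
              (fun j _ => by have := h1 j; positivity) (Finset.mem_univ i)
          have h4 : (a^2 * μ i + σ^2) * (l i)^2 ≤ (n:ℝ)*γ*P := le_trans hle h3
          nlinarith [mul_nonneg (mul_nonneg (sq_nonneg a) (h1 i)) (sq_nonneg (l i))]
        have hsq : (l i)^2 ≤ (n:ℝ)*γ*P/σ^2 := by
          rw [le_div_iff₀ (by positivity : (0:ℝ) < σ^2)]
          nlinarith [hterm]
        have habs : |l i| ≤ B := by
          rw [hBdef]
          calc |l i| = Real.sqrt ((l i)^2) := (Real.sqrt_sq_eq_abs _).symm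
            _ ≤ Real.sqrt ((n:ℝ)*γ*P/σ^2) := Real.sqrt_le_sqrt hsq
        exact abs_le.mp habs
    exact IsCompact.of_isClosed_subset
      ((isCompact_univ_pi fun _ => isCompact_Icc).prod
        (isCompact_univ_pi fun _ => isCompact_Icc)) hKclosed hsub
  have hO : ContinuousOn (fun p : (Fin n → ℝ) × (Fin n → ℝ) =>
      ∑ i, Fob a b σ (p.1 i) (p.2 i)) K := by
    apply continuousOn_finset_sum
    intro i _
    have hg : Continuous (fun p : (Fin n → ℝ) × (Fin n → ℝ) =>
        1 + p.1 i / σ ^ 2 * (1 + a * b * p.2 i) ^ 2 / (1 + b ^ 2 * (p.2 i) ^ 2)) := by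
      have hd : ∀ p : (Fin n → ℝ) × (Fin n → ℝ), (1 + b ^ 2 * (p.2 i) ^ 2) ≠ 0 :=
        fun p => by positivity
      fun_prop (disch := intros; first | positivity | exact hd _)
    apply ContinuousOn.log hg.continuousOn
    rintro ⟨μ, l⟩ ⟨h1, _, _⟩
    have : 0 ≤ μ i / σ ^ 2 * (1 + a * b * l i) ^ 2 / (1 + b ^ 2 * (l i) ^ 2) := by
      have := h1 i; positivity
    simp only []
    positivity
  obtain ⟨p, hpK, hmax⟩ := hKcompact.exists_isMaxOn hKne hO
  exact ⟨p, hpK, fun q hq => hmax hq⟩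


set_option maxHeartbeats 1000000 in
/-- Structural reduction for real (symmetric) LTI relaying over `n` frequency
bins: the rate maximization admits a maximizer whose real relay gains take at
most 8 distinct values, at most 7 of them nonzero, with equal source power in
bins sharing the same gain. -/
theorem lti_maximizer_eight_modes_real (a b : ℝ) (hab : a * b ≠ 0) (σ P γ : ℝ)
    (hσ : 0 < σ) (hP : 0 < P) (hγ : 0 < γ) (n : ℕ) (hn : 0 < n) :
    ∃ (μ : Fin n → ℝ) (l : Fin n → ℝ),
      (∀ i, 0 ≤ μ i) ∧ (∑ i, μ i ≤ (n : ℝ) * P) ∧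
      (∑ i, (a ^ 2 * μ i + σ ^ 2) * (l i) ^ 2 ≤ (n : ℝ) * γ * P) ∧
      (∀ (μ' : Fin n → ℝ) (l' : Fin n → ℝ), (∀ i, 0 ≤ μ' i) →
        (∑ i, μ' i ≤ (n : ℝ) * P) →
        (∑ i, (a ^ 2 * μ' i + σ ^ 2) * (l' i) ^ 2 ≤ (n : ℝ) * γ * P) →
        (1 / (2 * (n : ℝ))) * ∑ i, Real.log
            (1 + (μ' i / σ ^ 2) * (1 + a * b * l' i) ^ 2 / (1 + b ^ 2 * (l' i) ^ 2))
          ≤ (1 / (2 * (n : ℝ))) * ∑ i, Real.log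
            (1 + (μ i / σ ^ 2) * (1 + a * b * l i) ^ 2 / (1 + b ^ 2 * (l i) ^ 2))) ∧
      (Finset.image l Finset.univ).card ≤ 8 ∧
      ((Finset.image l Finset.univ).filter (· ≠ 0)).card ≤ 7 ∧
      (∀ i j, l i = l j → μ i = μ j) := by
  classical
  obtain ⟨p, ⟨hμ0, hsum0, hrel0⟩, hpmax⟩ := exists_maximizer a b σ P γ hσ hP hγ n hn
  set μ0 : Fin n → ℝ := p.1 with hμ0def
  set l0 : Fin n → ℝ := p.2 with hl0def
  set l1 : Fin n → ℝ := fun i => if μ0 i = 0 then 0 else l0 i with hl1def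
  have hl1zero : ∀ i, μ0 i = 0 → l1 i = 0 := fun i h => by simp [hl1def, h]
  have hrel1 : ∑ i, (a^2 * μ0 i + σ^2) * (l1 i)^2 ≤ (n:ℝ)*γ*P := by
    refine le_trans (Finset.sum_le_sum ?_) hrel0
    intro i _
    by_cases h : μ0 i = 0
    · simp only [hl1def, if_pos h]
      have : (0:ℝ) ≤ (a^2 * μ0 i + σ^2) * (l0 i)^2 := by
        have := hμ0 i; positivity
      simpa using this
    · simp [hl1def, if_neg h]
  have hobj01 : ∑ i, Fob a b σ (μ0 i) (l1 i) = ∑ i, Fob a b σ (μ0 i) (l0 i) := by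
    refine Finset.sum_congr rfl (fun i _ => ?_)
    by_cases h : μ0 i = 0
    · simp [hl1def, if_pos h, Fob, h]
    · simp [hl1def, if_neg h]
  have hmax1 : ∀ μ' l' : Fin n → ℝ, (∀ i, 0 ≤ μ' i) → (∑ i, μ' i ≤ (n:ℝ)*P) →
      (∑ i, (a^2 * μ' i + σ^2) * (l' i)^2 ≤ (n:ℝ)*γ*P) →
      ∑ i, Fob a b σ (μ' i) (l' i) ≤ ∑ i, Fob a b σ (μ0 i) (l1 i) := by
    intro μ' l' h1 h2 h3
    rw [hobj01]
    exact hpmax (μ', l') ⟨h1, h2, h3⟩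
  -- Phase B : at most 7 nonzero values of l1
  have hTbound : ((Finset.image l1 Finset.univ).filter (· ≠ 0)).card ≤ 7 := by
    by_cases hI : ∃ i0, 0 < μ0 i0 ∧ l1 i0 ≠ 0
    case neg =>
      have hall : ∀ i, l1 i = 0 := by
        intro i
        by_contra h
        rcases eq_or_lt_of_le (hμ0 i) with he | hlt
        · exact h (hl1zero i he.symm)
        · exact hI ⟨i, hlt, h⟩
      have hemp : ((Finset.image l1 Finset.univ).filter (· ≠ 0)) = ∅ := by
        ext x
        simp only [Finset.mem_filter, Finset.mem_image, Finset.mem_univ, true_and,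
          Finset.notMem_empty, iff_false, not_and]
        rintro ⟨i, rfl⟩
        simp [hall i]
      rw [hemp]; simp
    case pos =>
      obtain ⟨i0, hμi0, hli0⟩ := hI
      have hD0 : (0:ℝ) < a^2 * μ0 i0 + σ^2 := by positivity
      set η : ℝ := Lt a b σ (μ0 i0) (l1 i0) / (2*(a^2 * μ0 i0 + σ^2)*(l1 i0)) with hηdef
      set ν : ℝ := Lm a b σ (μ0 i0) (l1 i0) - η*a^2*(l1 i0)^2 with hνdef
      have key : ∀ j, 0 < μ0 j → l1 j ≠ 0 →
          Lt a b σ (μ0 j) (l1 j) = 2*η*(a^2 * μ0 j + σ^2)*(l1 j) ∧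
          Lm a b σ (μ0 j) (l1 j) = ν + η*a^2*(l1 j)^2 := by
        intro j hμj hlj
        by_cases hji : j = i0
        · subst hji
          constructor
          · rw [hηdef]
            field_simp
          · rw [hνdef]; ring
        · have hijne : i0 ≠ j := fun h => hji h.symm
          -- λ-exchange
          have hmaxL : ∀ u1 u2 : ℝ,
              (a^2*(μ0 i0)+σ^2)*u1^2 + (a^2*(μ0 j)+σ^2)*u2^2
                = (a^2*(μ0 i0)+σ^2)*(l1 i0)^2 + (a^2*(μ0 j)+σ^2)*(l1 j)^2 →
              Fob a b σ (μ0 i0) u1 + Fob a b σ (μ0 j) u2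
                ≤ Fob a b σ (μ0 i0) (l1 i0) + Fob a b σ (μ0 j) (l1 j) := by
            intro u1 u2 hcon
            set l' : Fin n → ℝ := Function.update (Function.update l1 i0 u1) j u2
              with hl'def
            have hl'j : l' j = u2 := by simp [hl'def]
            have hl'i0 : l' i0 = u1 := by
              simp [hl'def, Function.update_of_ne hijne]
            have hl'off : ∀ k, k ≠ i0 → k ≠ j → l' k = l1 k := by
              intro k h1 h2
              simp [hl'def, Function.update_of_ne h2, Function.update_of_ne h1]
            have hsplit := sum_two_split (fun k => (a^2 * μ0 k + σ^2)*(l' k)^2)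
                (fun k => (a^2 * μ0 k + σ^2)*(l1 k)^2) i0 j hijne
                (fun k h1 h2 => by simp only [hl'off k h1 h2])
            simp only [hl'i0, hl'j] at hsplit
            have hrel' : ∑ k, (a^2 * μ0 k + σ^2)*(l' k)^2 ≤ (n:ℝ)*γ*P := by
              have he : ∑ k, (a^2 * μ0 k + σ^2)*(l' k)^2
                  = ∑ k, (a^2 * μ0 k + σ^2)*(l1 k)^2 := by linarith [hsplit, hcon]
              rw [he]; exact hrel1
            have hobj := hmax1 μ0 l' hμ0 hsum0 hrel'
            have hsplit2 := sum_two_split (fun k => Fob a b σ (μ0 k) (l' k))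
                (fun k => Fob a b σ (μ0 k) (l1 k)) i0 j hijne
                (fun k h1 h2 => by simp only [hl'off k h1 h2])
            simp only [hl'i0, hl'j] at hsplit2
            linarith [hobj, hsplit2]
          have hBcross := exchange_lambda a b σ (μ0 i0) (μ0 j) (l1 i0) (l1 j) hσ
            (le_of_lt hμi0) (le_of_lt hμj) hli0 hmaxL
          -- μ-exchange
          have hmaxμ : ∀ w1 w2 u1 : ℝ, 0 ≤ w1 → 0 ≤ w2 → w1 + w2 = μ0 i0 + μ0 j →
              (a^2*w1+σ^2)*u1^2 + (a^2*w2+σ^2)*(l1 j)^2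
                = (a^2*(μ0 i0)+σ^2)*(l1 i0)^2 + (a^2*(μ0 j)+σ^2)*(l1 j)^2 →
              Fob a b σ w1 u1 + Fob a b σ w2 (l1 j)
                ≤ Fob a b σ (μ0 i0) (l1 i0) + Fob a b σ (μ0 j) (l1 j) := by
            intro w1 w2 u1 hw1 hw2 hwsum hcon
            set μ' : Fin n → ℝ := Function.update (Function.update μ0 i0 w1) j w2
              with hμ'def
            set l' : Fin n → ℝ := Function.update l1 i0 u1 with hl'def
            have hμ'j : μ' j = w2 := by simp [hμ'def]
            have hμ'i0 : μ' i0 = w1 := by simp [hμ'def, Function.update_of_ne hijne]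
            have hμ'off : ∀ k, k ≠ i0 → k ≠ j → μ' k = μ0 k := by
              intro k h1 h2
              simp [hμ'def, Function.update_of_ne h2, Function.update_of_ne h1]
            have hl'i0 : l' i0 = u1 := by simp [hl'def]
            have hl'j : l' j = l1 j := by
              simp [hl'def, Function.update_of_ne hji]
            have hl'off : ∀ k, k ≠ i0 → l' k = l1 k := by
              intro k h1
              simp [hl'def, Function.update_of_ne h1]
            have hnneg : ∀ k, 0 ≤ μ' k := by
              intro k
              by_cases h1 : k = i0
              · subst h1; rw [hμ'i0]; exact hw1
              · by_cases h2 : k = j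
                · subst h2; rw [hμ'j]; exact hw2
                · rw [hμ'off k h1 h2]; exact hμ0 k
            have hsplitμ := sum_two_split μ' μ0 i0 j hijne (fun k h1 h2 => by simp only [hμ'off k h1 h2])
            simp only [hμ'i0, hμ'j] at hsplitμ
            have hsum' : ∑ k, μ' k ≤ (n:ℝ)*P := by
              have : ∑ k, μ' k = ∑ k, μ0 k := by linarith [hsplitμ, hwsum]
              rw [this]; exact hsum0
            have hsplitr := sum_two_split (fun k => (a^2 * μ' k + σ^2)*(l' k)^2)
                (fun k => (a^2 * μ0 k + σ^2)*(l1 k)^2) i0 j hijne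
                (fun k h1 h2 => by simp only [hμ'off k h1 h2, hl'off k h1])
            simp only [hμ'i0, hμ'j, hl'i0, hl'j] at hsplitr
            have hrel' : ∑ k, (a^2 * μ' k + σ^2)*(l' k)^2 ≤ (n:ℝ)*γ*P := by
              have : ∑ k, (a^2 * μ' k + σ^2)*(l' k)^2
                  = ∑ k, (a^2 * μ0 k + σ^2)*(l1 k)^2 := by linarith [hsplitr, hcon]
              rw [this]; exact hrel1
            have hobj := hmax1 μ' l' hnneg hsum' hrel'
            have hsplit2 := sum_two_split (fun k => Fob a b σ (μ' k) (l' k))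
                (fun k => Fob a b σ (μ0 k) (l1 k)) i0 j hijne
                (fun k h1 h2 => by simp only [hμ'off k h1 h2, hl'off k h1])
            simp only [hμ'i0, hμ'j, hl'i0, hl'j] at hsplit2
            linarith [hobj, hsplit2]
          have hAcross := exchange_mu a b σ (μ0 i0) (μ0 j) (l1 i0) (l1 j) hσ
            hμi0 hμj hli0 hmaxμ
          constructor
          · apply mul_right_cancel₀ (mul_ne_zero (ne_of_gt hD0) hli0)
            have hcalc : 2*η*(a^2 * μ0 j + σ^2)*(l1 j) * ((a^2*μ0 i0+σ^2)*(l1 i0))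
                = Lt a b σ (μ0 i0) (l1 i0) * ((a^2 * μ0 j + σ^2)*(l1 j)) := by
              rw [hηdef]
              field_simp
            rw [hcalc]
            exact hBcross
          · apply mul_right_cancel₀ (show 2*(l1 i0)*(a^2*μ0 i0+σ^2) ≠ 0 from
              mul_ne_zero (mul_ne_zero two_ne_zero hli0) (ne_of_gt hD0))
            have hrhs : (ν + η*a^2*(l1 j)^2)*(2*(l1 i0)*(a^2*μ0 i0+σ^2))
                = Lm a b σ (μ0 i0) (l1 i0) * (2*(l1 i0)*(a^2*μ0 i0+σ^2))
                  - Lt a b σ (μ0 i0) (l1 i0) * (a^2*((l1 i0)^2-(l1 j)^2)) := by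
              rw [hνdef, hηdef]
              field_simp
              ring
            rw [hrhs]
            exact hAcross
      -- use key to bound the number of nonzero values
      by_cases hη0 : η = 0
      · have hsub : ((Finset.image l1 Finset.univ).filter (· ≠ 0))
            ⊆ {-(a*b)⁻¹, a/b} := by
          intro x hx
          simp only [Finset.mem_filter, Finset.mem_image, Finset.mem_univ, true_and] at hx
          obtain ⟨⟨i, rfl⟩, hxne⟩ := hx
          have hμi : 0 < μ0 i := by
            rcases eq_or_lt_of_le (hμ0 i) with he | hlt
            · exact absurd (hl1zero i he.symm) hxne
            · exact hlt
          obtain ⟨hBi, _⟩ := key i hμi hxne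
          rw [hη0] at hBi
          simp only [mul_zero, zero_mul] at hBi
          have hB' := polyB a b σ (μ0 i) (l1 i) ν 0 (ne_of_gt hσ) (le_of_lt hμi)
            (by simpa using hBi)
          simp only [zero_mul] at hB'
          have hfac : (1 + a*b*(l1 i)) * (a*b - b^2*(l1 i)) = 0 := by
            rcases mul_eq_zero.mp (by linarith [hB'] :
                μ0 i * ((1 + a*b*(l1 i)) * (a*b - b^2*(l1 i))) = 0) with h | h
            · exact absurd h (ne_of_gt hμi)
            · exact h
          have hb : b ≠ 0 := fun h' => hab (by simp [h'])
          rw [Finset.mem_insert, Finset.mem_singleton]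
          rcases mul_eq_zero.mp hfac with h | h
          · left
            rw [eq_neg_iff_add_eq_zero, ← mul_left_inj' hab, add_mul, inv_mul_cancel₀ hab]
            linear_combination h
          · right
            rw [eq_div_iff hb]
            rcases mul_eq_zero.mp (show b*(a - b*(l1 i)) = 0 by linear_combination h)
              with h2 | h2
            · exact absurd h2 hb
            · linarith [h2]
        calc ((Finset.image l1 Finset.univ).filter (· ≠ 0)).card
            ≤ ({-(a*b)⁻¹, a/b} : Finset ℝ).card := Finset.card_le_card hsub
          _ ≤ 2 := Finset.card_insert_le _ _ |>.trans (by simp)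
          _ ≤ 7 := by norm_num
      · apply card_le_of_roots (qpoly a b σ ν η)
          (qpoly_ne_zero a b σ ν η hab (ne_of_gt hσ) hη0)
          (qpoly_natDegree_le a b σ ν η)
        intro x hx
        simp only [Finset.mem_filter, Finset.mem_image, Finset.mem_univ, true_and] at hx
        obtain ⟨⟨i, rfl⟩, hxne⟩ := hx
        have hμi : 0 < μ0 i := by
          rcases eq_or_lt_of_le (hμ0 i) with he | hlt
          · exact absurd (hl1zero i he.symm) hxne
          · exact hlt
        obtain ⟨hBi, hAi⟩ := key i hμi hxne
        exact qpoly_root a b σ ν η (μ0 i) (l1 i)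
          (polyA a b σ (μ0 i) (l1 i) ν η (ne_of_gt hσ) (le_of_lt hμi) hAi)
          (polyB a b σ (μ0 i) (l1 i) ν η (ne_of_gt hσ) (le_of_lt hμi) hBi)
  -- Phase C : average μ over the fibers of l1
  set Gf : Fin n → Finset (Fin n) :=
    fun i => Finset.univ.filter (fun k => l1 k = l1 i) with hGdef
  have hGmem : ∀ i, i ∈ Gf i := by intro i; simp [hGdef]
  have hGcard : ∀ i, (0:ℝ) < ((Gf i).card : ℝ) := by
    intro i
    exact_mod_cast Finset.card_pos.mpr ⟨i, hGmem i⟩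
  set μ1 : Fin n → ℝ := fun i => (∑ j ∈ Gf i, μ0 j) / ((Gf i).card : ℝ) with hμ1def
  have hμ1eq : ∀ i j, l1 i = l1 j → μ1 i = μ1 j := by
    intro i j h
    have : Gf i = Gf j := by
      apply Finset.filter_congr
      intro k _
      simp [h]
    simp [hμ1def, this]
  have hμ1nonneg : ∀ i, 0 ≤ μ1 i := by
    intro i
    apply div_nonneg _ (le_of_lt (hGcard i))
    exact Finset.sum_nonneg (fun j _ => hμ0 j)
  have hfib : ∀ f : Fin n → ℝ,
      ∑ v ∈ Finset.image l1 Finset.univ, ∑ i ∈ Finset.univ.filter (fun k => l1 k = v), f i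
        = ∑ i, f i :=
    fun f => Finset.sum_fiberwise_of_maps_to
      (fun x _ => Finset.mem_image_of_mem l1 (Finset.mem_univ x)) f
  have hGfv : ∀ v, ∀ i ∈ Finset.univ.filter (fun k => l1 k = v),
      Gf i = Finset.univ.filter (fun k => l1 k = v) := by
    intro v i hi
    rw [Finset.mem_filter] at hi
    rw [hGdef]
    simp only []
    rw [hi.2]
  have hvne : ∀ v ∈ Finset.image l1 Finset.univ,
      (0:ℝ) < ((Finset.univ.filter (fun k => l1 k = v)).card : ℝ) := by
    intro v hv
    obtain ⟨i, _, rfl⟩ := Finset.mem_image.mp hv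
    exact_mod_cast Finset.card_pos.mpr ⟨i, by simp⟩
  have hsum1 : ∑ i, μ1 i = ∑ i, μ0 i := by
    rw [← hfib μ1, ← hfib μ0]
    refine Finset.sum_congr rfl (fun v hv => ?_)
    have : ∀ i ∈ Finset.univ.filter (fun k => l1 k = v),
        μ1 i = (∑ j ∈ Finset.univ.filter (fun k => l1 k = v), μ0 j)
          / ((Finset.univ.filter (fun k => l1 k = v)).card : ℝ) := by
      intro i hi
      rw [hμ1def]
      simp only []
      rw [hGfv v i hi]
    rw [Finset.sum_congr rfl this, Finset.sum_const, nsmul_eq_mul]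
    field_simp
    rw [mul_comm, mul_div_assoc, div_self (ne_of_gt (hvne v hv)), mul_one]
  have hrel1' : ∑ i, (a^2 * μ1 i + σ^2)*(l1 i)^2
      = ∑ i, (a^2 * μ0 i + σ^2)*(l1 i)^2 := by
    rw [← hfib (fun i => (a^2 * μ1 i + σ^2)*(l1 i)^2),
      ← hfib (fun i => (a^2 * μ0 i + σ^2)*(l1 i)^2)]
    refine Finset.sum_congr rfl (fun v hv => ?_)
    have hcv : (0:ℝ) < ((Finset.univ.filter (fun k => l1 k = v)).card : ℝ) := hvne v hv
    have hμ1v : ∀ i ∈ Finset.univ.filter (fun k => l1 k = v),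
        μ1 i = (∑ j ∈ Finset.univ.filter (fun k => l1 k = v), μ0 j)
          / ((Finset.univ.filter (fun k => l1 k = v)).card : ℝ) := by
      intro i hi
      rw [hμ1def]
      simp only []
      rw [hGfv v i hi]
    have hl1v : ∀ i ∈ Finset.univ.filter (fun k => l1 k = v), l1 i = v :=
      fun i hi => (Finset.mem_filter.mp hi).2
    calc ∑ i ∈ Finset.univ.filter (fun k => l1 k = v), (a^2 * μ1 i + σ^2)*(l1 i)^2
        = ∑ i ∈ Finset.univ.filter (fun k => l1 k = v),
            (a^2 * ((∑ j ∈ Finset.univ.filter (fun k => l1 k = v), μ0 j)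
              / ((Finset.univ.filter (fun k => l1 k = v)).card : ℝ)) + σ^2)*v^2 := by
          refine Finset.sum_congr rfl (fun i hi => ?_)
          rw [hμ1v i hi, hl1v i hi]
      _ = (a^2 * (∑ j ∈ Finset.univ.filter (fun k => l1 k = v), μ0 j)
            + σ^2 * ((Finset.univ.filter (fun k => l1 k = v)).card : ℝ))*v^2 := by
          rw [Finset.sum_const, nsmul_eq_mul]
          field_simp
      _ = ∑ i ∈ Finset.univ.filter (fun k => l1 k = v), (a^2 * μ0 i + σ^2)*(l1 i)^2 := by
          have h1 : ∑ i ∈ Finset.univ.filter (fun k => l1 k = v), (a^2 * μ0 i + σ^2)*(l1 i)^2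
              = ∑ i ∈ Finset.univ.filter (fun k => l1 k = v), (a^2 * μ0 i + σ^2)*v^2 :=
            Finset.sum_congr rfl (fun i hi => by rw [hl1v i hi])
          rw [h1, ← Finset.sum_mul, Finset.sum_add_distrib, ← Finset.mul_sum,
            Finset.sum_const, nsmul_eq_mul]
          ring
  have hobjC : ∑ i, Fob a b σ (μ0 i) (l1 i) ≤ ∑ i, Fob a b σ (μ1 i) (l1 i) := by
    rw [← hfib (fun i => Fob a b σ (μ0 i) (l1 i)),
      ← hfib (fun i => Fob a b σ (μ1 i) (l1 i))]
    refine Finset.sum_le_sum (fun v hv => ?_)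
    have hcv : (0:ℝ) < ((Finset.univ.filter (fun k => l1 k = v)).card : ℝ) := hvne v hv
    have hFvne : (Finset.univ.filter (fun k => l1 k = v)).Nonempty := by
      rw [← Finset.card_pos]
      exact_mod_cast hcv
    set κ : ℝ := (1 + a*b*v)^2/(1 + b^2*v^2)/σ^2 with hκdef
    have hκ0 : 0 ≤ κ := by rw [hκdef]; positivity
    have hFobκ : ∀ m : ℝ, Fob a b σ m v = Real.log (1 + κ*m) := by
      intro m
      unfold Fob
      congr 1
      rw [hκdef]
      ring
    have hμ1v : ∀ i ∈ Finset.univ.filter (fun k => l1 k = v),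
        μ1 i = (∑ j ∈ Finset.univ.filter (fun k => l1 k = v), μ0 j)
          / ((Finset.univ.filter (fun k => l1 k = v)).card : ℝ) := by
      intro i hi
      rw [hμ1def]
      simp only []
      rw [hGfv v i hi]
    have hl1v : ∀ i ∈ Finset.univ.filter (fun k => l1 k = v), l1 i = v :=
      fun i hi => (Finset.mem_filter.mp hi).2
    have hjen := jensen_log κ hκ0 (Finset.univ.filter (fun k => l1 k = v)) hFvne μ0
      (fun j _ => hμ0 j)
    calc ∑ i ∈ Finset.univ.filter (fun k => l1 k = v), Fob a b σ (μ0 i) (l1 i)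
        = ∑ i ∈ Finset.univ.filter (fun k => l1 k = v), Real.log (1 + κ * μ0 i) := by
          refine Finset.sum_congr rfl (fun i hi => ?_)
          rw [hl1v i hi, hFobκ]
      _ ≤ ((Finset.univ.filter (fun k => l1 k = v)).card : ℝ)
            * Real.log (1 + κ * ((∑ j ∈ Finset.univ.filter (fun k => l1 k = v), μ0 j)
              / ((Finset.univ.filter (fun k => l1 k = v)).card : ℝ))) := hjen
      _ = ∑ i ∈ Finset.univ.filter (fun k => l1 k = v), Fob a b σ (μ1 i) (l1 i) := by
          have : ∀ i ∈ Finset.univ.filter (fun k => l1 k = v),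
              Fob a b σ (μ1 i) (l1 i)
                = Real.log (1 + κ * ((∑ j ∈ Finset.univ.filter (fun k => l1 k = v), μ0 j)
                  / ((Finset.univ.filter (fun k => l1 k = v)).card : ℝ))) := by
            intro i hi
            rw [hl1v i hi, hFobκ, hμ1v i hi]
          rw [Finset.sum_congr rfl this, Finset.sum_const, nsmul_eq_mul]
  -- final assembly
  refine ⟨μ1, l1, hμ1nonneg, ?_, ?_, ?_, ?_, hTbound, fun i j h => hμ1eq i j h⟩
  · rw [hsum1]; exact hsum0
  · rw [hrel1']; exact hrel1
  · intro μ' l' h1 h2 h3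
    have hle : ∑ i, Fob a b σ (μ' i) (l' i) ≤ ∑ i, Fob a b σ (μ1 i) (l1 i) :=
      le_trans (hmax1 μ' l' h1 h2 h3) hobjC
    have hfac : (0:ℝ) ≤ 1 / (2 * (n:ℝ)) := by positivity
    exact mul_le_mul_of_nonneg_left hle hfac
  · have hsub : Finset.image l1 Finset.univ
        ⊆ insert (0:ℝ) ((Finset.image l1 Finset.univ).filter (· ≠ 0)) := by
      intro x hx
      by_cases hx0 : x = 0
      · simp [hx0]
      · exact Finset.mem_insert_of_mem (Finset.mem_filter.mpr ⟨hx, hx0⟩)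
    calc (Finset.image l1 Finset.univ).card
        ≤ (insert (0:ℝ) ((Finset.image l1 Finset.univ).filter (· ≠ 0))).card :=
          Finset.card_le_card hsub
      _ ≤ ((Finset.image l1 Finset.univ).filter (· ≠ 0)).card + 1 :=
          Finset.card_insert_le _ _
      _ ≤ 8 := by linarith [hTbound]
end

section
/- Fix real numbers a, b, σ > 0, P > 0, γ > 0, and let 𝒞(x) := (1/2)log(1+x). For each positive integer n define F_n := max{ (1/2n) Σ_{i=1}^n log(1 + (μ_i/σ²)·|1+abλ_i|²/(1+b²|λ_i|²)) : μ ∈ ℝⁿ, λ ∈ ℂⁿ, μ_i ≥ 0 for all i, Σ_{i=1}^n μ_i ≤ nP, Σ_{i=1}^n (a²μ_i + σ²)|λ_i|² ≤ nγP }. Define C₅₀ := sup over τ ∈ ℝ^{50}, θ ∈ ℝ^{50}, λ̄ ∈ ℂ^{49} (indexed j = 0,…,49 for τ, θ and j = 1,…,49 for λ̄) with τ_j ≥ 0, θ_j ≥ 0, Σ_{j=0}^{49} τ_j = 1, Σ_{j=0}^{49} θ_j = 1, θ_j = 0 whenever τ_j = 0, and Σ_{j=1}^{49} |λ̄_j|²(a²θ_j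 P + τ_j σ²) ≤ γP, of the quantity τ₀·𝒞(θ₀P/(τ₀σ²)) + Σ_{j=1}^{49} τ_j·𝒞((θ_j/τ_j)·(P/σ²)·|1+abλ̄_j|²/(1+b²|λ̄_j|²)), where any term with τ_j = 0 is taken to be 0. Then lim_{n→∞} F_n = C₅₀. -/
set_option maxHeartbeats 1000000

noncomputable def rt (a b σ : ℝ) (μ : ℝ) (l : ℂ) : ℝ :=
  (1/2) * Real.log (1 + (μ / σ^2) * ‖1 + ((a*b:ℝ):ℂ) * l‖^2 / (1 + b^2*‖l‖^2))

section helpers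
variable {a b σ : ℝ} (hσ : 0 < σ)

lemma den_pos (b : ℝ) (l : ℂ) : 0 < 1 + b^2*‖l‖^2 := by positivity

lemma arg_nonneg (hσ : 0 < σ) {μ : ℝ} (hμ : 0 ≤ μ) (l : ℂ) :
    0 ≤ (μ / σ^2) * ‖1 + ((a*b:ℝ):ℂ) * l‖^2 / (1 + b^2*‖l‖^2) := by positivity

lemma rt_nonneg (hσ : 0 < σ) {μ : ℝ} (hμ : 0 ≤ μ) (l : ℂ) : 0 ≤ rt a b σ μ l := by
  have := arg_nonneg (a := a) (b := b) hσ hμ l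
  have h1 : (1:ℝ) ≤ 1 + (μ / σ^2) * ‖1 + ((a*b:ℝ):ℂ) * l‖^2 / (1 + b^2*‖l‖^2) := by linarith
  have := Real.log_nonneg h1
  unfold rt; linarith

lemma rt_mono (hσ : 0 < σ) {μ μ' : ℝ} (hμ : 0 ≤ μ) (h : μ ≤ μ') (l : ℂ) :
    rt a b σ μ l ≤ rt a b σ μ' l := by
  unfold rt
  have hd := den_pos b l
  have h1 : (0:ℝ) < 1 + (μ / σ^2) * ‖1 + ((a*b:ℝ):ℂ) * l‖^2 / (1 + b^2*‖l‖^2) := by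
    have := arg_nonneg (a := a) (b := b) hσ hμ l; linarith
  have h2 : (μ / σ^2) * ‖1 + ((a*b:ℝ):ℂ) * l‖^2 / (1 + b^2*‖l‖^2)
      ≤ (μ' / σ^2) * ‖1 + ((a*b:ℝ):ℂ) * l‖^2 / (1 + b^2*‖l‖^2) := by gcongr
  exact mul_le_mul_of_nonneg_left (Real.log_le_log h1 (by linarith)) (by norm_num)

lemma K_le (a b : ℝ) (l : ℂ) : ‖1 + ((a*b:ℝ):ℂ) * l‖^2 / (1 + b^2*‖l‖^2) ≤ 2 + 2*a^2 := by
  have hd := den_pos b l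
  rw [div_le_iff₀ hd]
  have h1 : ‖1 + ((a*b:ℝ):ℂ) * l‖^2 ≤ 2*‖(1:ℂ)‖^2 + 2*‖((a*b:ℝ):ℂ) * l‖^2 := by
    have h := norm_add_le (1:ℂ) (((a*b:ℝ):ℂ) * l)
    have h0 := norm_nonneg (1 + ((a*b:ℝ):ℂ) * l)
    nlinarith [sq_nonneg (‖(1:ℂ)‖ - ‖((a*b:ℝ):ℂ) * l‖), norm_nonneg (((a*b:ℝ):ℂ) * l)]
  have h2 : ‖((a*b:ℝ):ℂ) * l‖^2 = a^2*b^2*‖l‖^2 := by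
    rw [norm_mul, mul_pow, Complex.norm_real]
    rw [Real.norm_eq_abs, sq_abs]; ring
  simp only [norm_one] at h1
  nlinarith [norm_nonneg l, sq_nonneg (‖l‖*a), sq_nonneg ‖l‖]

lemma rt_le (hσ : 0 < σ) {μ : ℝ} (hμ : 0 ≤ μ) (l : ℂ) :
    rt a b σ μ l ≤ (1/2) * ((μ/σ^2) * (2+2*a^2)) := by
  unfold rt
  have h1 : (0:ℝ) < 1 + (μ / σ^2) * ‖1 + ((a*b:ℝ):ℂ) * l‖^2 / (1 + b^2*‖l‖^2) := by
    have := arg_nonneg (a := a) (b := b) hσ hμ l; linarith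
  have h2 := Real.log_le_sub_one_of_pos h1
  have h3 : (μ / σ^2) * ‖1 + ((a*b:ℝ):ℂ) * l‖^2 / (1 + b^2*‖l‖^2)
      ≤ (μ/σ^2) * (2+2*a^2) := by
    rw [mul_div_assoc]
    have := K_le a b l
    have hμσ : 0 ≤ μ / σ^2 := by positivity
    exact mul_le_mul_of_nonneg_left this hμσ
  linarith

lemma rt_zero (a b σ : ℝ) {μ : ℝ} : rt a b σ μ 0 = (1/2) * Real.log (1 + μ/σ^2) := by
  unfold rt
  simp

end helpers

section partition
variable {X : Type*} [AddCommMonoid X]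

lemma indicator_sum_eq (c : ℕ → ℕ) (hmono : Monotone c) {K j i : ℕ} (hj : j < K)
    (h1 : c j ≤ i) (h2 : i < c (j+1)) (v : ℕ → X) :
    (∑ j' ∈ Finset.range K, if c j' ≤ i ∧ i < c (j'+1) then v j' else 0) = v j := by
  rw [Finset.sum_eq_single_of_mem j (Finset.mem_range.2 hj)]
  · rw [if_pos ⟨h1, h2⟩]
  · intro j' _ hne
    rw [if_neg]
    rintro ⟨g1, g2⟩
    rcases lt_or_gt_of_ne hne with h | h
    · exact absurd (le_trans (hmono (Nat.succ_le_of_lt h)) h1) (not_le.2 g2)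
    · exact absurd (le_trans (hmono (Nat.succ_le_of_lt h)) g1) (not_le.2 h2)

lemma indicator_sum_eq_zero (c : ℕ → ℕ) (hmono : Monotone c) {K i : ℕ} (hi : c K ≤ i)
    (v : ℕ → X) :
    (∑ j' ∈ Finset.range K, if c j' ≤ i ∧ i < c (j'+1) then v j' else 0) = 0 := by
  apply Finset.sum_eq_zero
  intro j' hj'
  rw [if_neg]
  rintro ⟨g1, g2⟩
  exact absurd (le_trans (hmono (Finset.mem_range.1 hj')) hi) (not_le.2 g2)

lemma sum_blocks (c : ℕ → ℕ) (hmono : Monotone c) (hc0 : c 0 = 0) {n K : ℕ} (hcn : c K ≤ n)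
    (F : ℕ → X) (f : ℕ → X)
    (hF : ∀ j < K, ∀ i, c j ≤ i → i < c (j+1) → F i = f j)
    (hF0 : ∀ i, c K ≤ i → F i = 0) :
    ∑ i ∈ Finset.range n, F i = ∑ j ∈ Finset.range K, (c (j+1) - c j) • f j := by
  have key : ∀ k, k ≤ K → ∑ i ∈ Finset.Ico 0 (c k), F i
      = ∑ j ∈ Finset.range k, (c (j+1) - c j) • f j := by
    intro k
    induction k with
    | zero => intro _; rw [hc0]; simp
    | succ k ih =>
      intro hk
      rw [← Finset.sum_Ico_consecutive F (Nat.zero_le (c k)) (hmono (Nat.le_succ k)),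
        ih (le_of_lt hk), Finset.sum_range_succ]
      congr 1
      have : ∑ i ∈ Finset.Ico (c k) (c (k+1)), F i
          = ∑ _i ∈ Finset.Ico (c k) (c (k+1)), f k := by
        apply Finset.sum_congr rfl
        intro i hi
        obtain ⟨hi1, hi2⟩ := Finset.mem_Ico.1 hi
        exact hF k hk i hi1 hi2
      rw [this, Finset.sum_const, Nat.card_Ico]
  have h2 : ∑ i ∈ Finset.Ico (c K) n, F i = 0 :=
    Finset.sum_eq_zero fun i hi => hF0 i (Finset.mem_Ico.1 hi).1
  calc ∑ i ∈ Finset.range n, F i = ∑ i ∈ Finset.Ico 0 n, F i := by rw [Finset.range_eq_Ico]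
    _ = ∑ i ∈ Finset.Ico 0 (c K), F i + ∑ i ∈ Finset.Ico (c K) n, F i :=
        (Finset.sum_Ico_consecutive F (Nat.zero_le _) hcn).symm
    _ = _ := by rw [h2, add_zero, key K le_rfl]

end partition

lemma lower_bound (a b σ P γ : ℝ) (hσ : 0 < σ) (hP : 0 < P)
    (τ θ : Fin 50 → ℝ) (lb : Fin 49 → ℂ)
    (hτnn : ∀ j, 0 ≤ τ j) (hθnn : ∀ j, 0 ≤ θ j)
    (hτ1 : ∑ j, τ j = 1) (hθ1 : ∑ j, θ j = 1)
    (hτθ : ∀ j, τ j = 0 → θ j = 0)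
    (hr : ∑ j : Fin 49, ‖lb j‖ ^ 2 * (a ^ 2 * θ j.succ * P + τ j.succ * σ ^ 2) ≤ γ * P)
    (ε : ℝ) (hε : 0 < ε) :
    ∃ N : ℕ, 0 < N ∧ ∀ n : ℕ, N ≤ n → ∃ (μ : Fin n → ℝ) (l : Fin n → ℂ),
      (∀ i, 0 ≤ μ i) ∧ (∑ i, μ i ≤ (n : ℝ) * P) ∧
      (∑ i, (a ^ 2 * μ i + σ ^ 2) * ‖l i‖ ^ 2 ≤ (n : ℝ) * γ * P) ∧
      (τ 0 * ((1 / 2) * Real.log (1 + θ 0 * P / (τ 0 * σ ^ 2)))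
        + ∑ j : Fin 49, τ j.succ * ((1 / 2) * Real.log
            (1 + (θ j.succ / τ j.succ) * (P / σ ^ 2)
              * ‖1 + ((a * b : ℝ) : ℂ) * lb j‖ ^ 2 / (1 + b ^ 2 * ‖lb j‖ ^ 2)))) - ε
        ≤ (1 / (2 * (n : ℝ))) * ∑ i, Real.log
          (1 + (μ i / σ ^ 2) * ‖1 + ((a * b : ℝ) : ℂ) * l i‖ ^ 2
            / (1 + b ^ 2 * ‖l i‖ ^ 2)) := by
  classical
  -- ℕ-indexed mode data
  let τ' : ℕ → ℝ := fun j => if h : j < 50 then τ ⟨j, h⟩ else 0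
  let θ' : ℕ → ℝ := fun j => if h : j < 50 then θ ⟨j, h⟩ else 0
  let Λ : ℕ → ℂ := fun j => if h : 0 < j ∧ j < 50 then lb ⟨j - 1, by omega⟩ else 0
  have hτ'eval : ∀ j : Fin 50, τ' (j : ℕ) = τ j := by
    intro j; show dite _ _ _ = _; rw [dif_pos j.isLt, Fin.eta]
  have hθ'eval : ∀ j : Fin 50, θ' (j : ℕ) = θ j := by
    intro j; show dite _ _ _ = _; rw [dif_pos j.isLt, Fin.eta]
  have hΛeval : ∀ j : Fin 49, Λ ((j : ℕ) + 1) = lb j := by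
    intro j
    show dite _ _ _ = _
    rw [dif_pos ⟨Nat.succ_pos _, by omega⟩]
    exact congrArg lb (by ext; simp)
  have hτ'0 : ∀ j, 0 ≤ τ' j := by
    intro j; show 0 ≤ dite _ _ _; split_ifs; exacts [hτnn _, le_rfl]
  have hθ'0 : ∀ j, 0 ≤ θ' j := by
    intro j; show 0 ≤ dite _ _ _; split_ifs; exacts [hθnn _, le_rfl]
  have hΛ0 : Λ 0 = 0 := by
    show dite _ _ _ = _; rw [dif_neg]; simp
  let μs : ℕ → ℝ := fun j => θ' j * P / τ' j
  have hμs0 : ∀ j, 0 ≤ μs j := fun j => div_nonneg (mul_nonneg (hθ'0 j) hP.le) (hτ'0 j)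
  have hμseval0 : μs 0 = θ 0 * P / τ 0 := by
    show θ' 0 * P / τ' 0 = _
    rw [show θ' 0 = θ 0 from hθ'eval 0, show τ' 0 = τ 0 from hτ'eval 0]
  have hμsevalsucc : ∀ j : Fin 49, μs ((j : ℕ) + 1) = θ j.succ * P / τ j.succ := by
    intro j
    show θ' ((j:ℕ)+1) * P / τ' ((j:ℕ)+1) = _
    rw [show θ' ((j:ℕ)+1) = θ j.succ from hθ'eval j.succ,
      show τ' ((j:ℕ)+1) = τ j.succ from hτ'eval j.succ]
  let G : ℕ → ℝ := fun j => rt a b σ (μs j) (Λ j)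
  have hG0 : ∀ j, 0 ≤ G j := fun j => rt_nonneg hσ (hμs0 j) _
  have hGeval0 : G 0 = (1 / 2) * Real.log (1 + θ 0 * P / (τ 0 * σ ^ 2)) := by
    show rt a b σ (μs 0) (Λ 0) = _
    rw [hΛ0, rt_zero, hμseval0, div_div]
  have hGevalsucc : ∀ j : Fin 49, G ((j : ℕ) + 1)
      = (1 / 2) * Real.log (1 + (θ j.succ / τ j.succ) * (P / σ ^ 2)
          * ‖1 + ((a * b : ℝ) : ℂ) * lb j‖ ^ 2 / (1 + b ^ 2 * ‖lb j‖ ^ 2)) := by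
    intro j
    show rt a b σ (μs ((j:ℕ)+1)) (Λ ((j:ℕ)+1)) = _
    rw [hΛeval j, hμsevalsucc j]
    unfold rt
    have hX : θ j.succ * P / τ j.succ / σ ^ 2 = θ j.succ / τ j.succ * (P / σ ^ 2) := by
      rw [div_div, div_mul_div_comm]
    rw [hX]
  let Y : ℝ := ∑ j ∈ Finset.range 50, G j
  have hY0 : 0 ≤ Y := Finset.sum_nonneg fun j _ => hG0 j
  have hτ'sum : ∑ j ∈ Finset.range 50, τ' j = 1 := by
    rw [← Fin.sum_univ_eq_sum_range τ' 50, ← hτ1]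
    exact Finset.sum_congr rfl fun j _ => hτ'eval j
  have hθ'sum : ∑ j ∈ Finset.range 50, θ' j ≤ 1 := by
    rw [← Fin.sum_univ_eq_sum_range θ' 50, ← hθ1]
    exact le_of_eq (Finset.sum_congr rfl fun j _ => hθ'eval j)
  -- the target value y equals ∑_{j<50} τ' j * G j
  have hy : ∑ j ∈ Finset.range 50, τ' j * G j
      = τ 0 * ((1 / 2) * Real.log (1 + θ 0 * P / (τ 0 * σ ^ 2)))
        + ∑ j : Fin 49, τ j.succ * ((1 / 2) * Real.log
            (1 + (θ j.succ / τ j.succ) * (P / σ ^ 2)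
              * ‖1 + ((a * b : ℝ) : ℂ) * lb j‖ ^ 2 / (1 + b ^ 2 * ‖lb j‖ ^ 2))) := by
    rw [← Fin.sum_univ_eq_sum_range (fun j => τ' j * G j) 50]
    conv_lhs => rw [Fin.sum_univ_succ]
    congr 1
    · rw [show ((0 : Fin 50) : ℕ) = 0 from rfl,
        show τ' 0 = τ 0 from hτ'eval 0, hGeval0]
    · apply Finset.sum_congr rfl
      intro j _
      rw [show ((j.succ : Fin 50) : ℕ) = (j : ℕ) + 1 from rfl,
        show τ' ((j:ℕ)+1) = τ j.succ from hτ'eval j.succ, hGevalsucc j]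
  refine ⟨⌈Y / ε⌉₊ + 1, Nat.succ_pos _, fun n hn => ?_⟩
  have hn1 : 1 ≤ n := le_trans (Nat.le_add_left 1 _) hn
  have hnR : (0 : ℝ) < (n : ℝ) := by exact_mod_cast hn1
  have hnY : (1 / (n : ℝ)) * Y ≤ ε := by
    have h1 : Y / ε ≤ (⌈Y / ε⌉₊ : ℝ) := Nat.le_ceil _
    have h2 : ((⌈Y / ε⌉₊ : ℕ) : ℝ) + 1 ≤ (n : ℝ) := by exact_mod_cast hn
    have h3 : Y ≤ (n : ℝ) * ε := by
      rw [div_le_iff₀ hε] at h1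
      nlinarith
    rw [one_div, inv_mul_le_iff₀ hnR]
    linarith
  -- block sizes and cut points
  let nj : ℕ → ℕ := fun j => ⌊τ' j * (n : ℝ)⌋₊
  let c : ℕ → ℕ := fun j => ∑ j' ∈ Finset.range j, nj j'
  have hc0 : c 0 = 0 := by simp [c]
  have hcsucc : ∀ k, c (k + 1) = c k + nj k := fun k => Finset.sum_range_succ _ k
  have hmono : Monotone c := monotone_nat_of_le_succ fun k => by
    rw [hcsucc]; exact Nat.le_add_right _ _
  have hdiff : ∀ j, c (j + 1) - c j = nj j := fun j => by
    rw [hcsucc]; omega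
  have hnjle : ∀ j, (nj j : ℝ) ≤ τ' j * (n : ℝ) := fun j =>
    Nat.floor_le (mul_nonneg (hτ'0 j) hnR.le)
  have hnjge : ∀ j, τ' j * (n : ℝ) - 1 ≤ (nj j : ℝ) := fun j =>
    le_of_lt (Nat.sub_one_lt_floor _)
  have hcn : c 50 ≤ n := by
    have hreal : ((c 50 : ℕ) : ℝ) ≤ (n : ℝ) := by
      have : ((c 50 : ℕ) : ℝ) = ∑ j ∈ Finset.range 50, ((nj j : ℕ) : ℝ) := by
        push_cast [c]; rfl
      rw [this]
      calc ∑ j ∈ Finset.range 50, ((nj j : ℕ) : ℝ)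
          ≤ ∑ j ∈ Finset.range 50, τ' j * (n : ℝ) :=
            Finset.sum_le_sum fun j _ => hnjle j
        _ = (n : ℝ) := by rw [← Finset.sum_mul, hτ'sum, one_mul]
    exact_mod_cast hreal
  -- per-bin data
  let pw : ℕ → ℝ := fun j => if nj j = 0 then 0 else θ' j * P * (n : ℝ) / (nj j : ℝ)
  have hpw0 : ∀ j, 0 ≤ pw j := by
    intro j
    show 0 ≤ ite _ _ _
    split_ifs with h
    · exact le_rfl
    · have : (0:ℝ) < (nj j : ℝ) := by exact_mod_cast Nat.pos_of_ne_zero h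
      exact div_nonneg (mul_nonneg (mul_nonneg (hθ'0 j) hP.le) hnR.le) this.le
  let μf : ℕ → ℝ := fun i => ∑ j ∈ Finset.range 50, if c j ≤ i ∧ i < c (j + 1) then pw j else 0
  let lf : ℕ → ℂ := fun i => ∑ j ∈ Finset.range 50, if c j ≤ i ∧ i < c (j + 1) then Λ j else 0
  have hblockμ : ∀ j < 50, ∀ i, c j ≤ i → i < c (j + 1) → μf i = pw j :=
    fun j hj i h1 h2 => indicator_sum_eq c hmono hj h1 h2 pw
  have hblockl : ∀ j < 50, ∀ i, c j ≤ i → i < c (j + 1) → lf i = Λ j :=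
    fun j hj i h1 h2 => indicator_sum_eq c hmono hj h1 h2 Λ
  have hμzero : ∀ i, c 50 ≤ i → μf i = 0 := fun i hi => indicator_sum_eq_zero c hmono hi pw
  have hlzero : ∀ i, c 50 ≤ i → lf i = 0 := fun i hi => indicator_sum_eq_zero c hmono hi Λ
  refine ⟨fun i => μf (i : ℕ), fun i => lf (i : ℕ), ?_, ?_, ?_, ?_⟩
  · -- nonnegativity
    intro i
    apply Finset.sum_nonneg
    intro j _
    split_ifs
    · exact hpw0 j
    · exact le_rfl
  · -- source power constraint
    rw [Fin.sum_univ_eq_sum_range (fun i => μf i) n]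
    rw [sum_blocks c hmono hc0 hcn μf pw hblockμ hμzero]
    have hterm : ∀ j ∈ Finset.range 50, (c (j+1) - c j) • pw j ≤ θ' j * P * (n : ℝ) := by
      intro j _
      rw [hdiff j, nsmul_eq_mul]
      show ((nj j : ℕ) : ℝ) * pw j ≤ _
      by_cases h : nj j = 0
      · rw [h, Nat.cast_zero, zero_mul]
        exact mul_nonneg (mul_nonneg (hθ'0 j) hP.le) hnR.le
      · have hne : ((nj j : ℕ) : ℝ) ≠ 0 := Nat.cast_ne_zero.2 h
        rw [show pw j = θ' j * P * (n : ℝ) / (nj j : ℝ) from if_neg h]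
        rw [mul_div_cancel₀ _ hne]
    calc ∑ j ∈ Finset.range 50, (c (j+1) - c j) • pw j
        ≤ ∑ j ∈ Finset.range 50, θ' j * P * (n : ℝ) := Finset.sum_le_sum hterm
      _ = (∑ j ∈ Finset.range 50, θ' j) * (P * (n : ℝ)) := by
          rw [Finset.sum_mul]; exact Finset.sum_congr rfl fun j _ => by ring
      _ ≤ 1 * (P * (n : ℝ)) := by
          have : (0:ℝ) ≤ P * n := by positivity
          exact mul_le_mul_of_nonneg_right hθ'sum this
      _ = (n : ℝ) * P := by ring
  · -- relay power constraint
    rw [Fin.sum_univ_eq_sum_range (fun i => (a ^ 2 * μf i + σ ^ 2) * ‖lf i‖ ^ 2) n]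
    rw [sum_blocks c hmono hc0 hcn _ (fun j => (a ^ 2 * pw j + σ ^ 2) * ‖Λ j‖ ^ 2)
      (fun j hj i h1 h2 => by rw [hblockμ j hj i h1 h2, hblockl j hj i h1 h2])
      (fun i hi => by rw [hμzero i hi, hlzero i hi]; simp)]
    have hterm : ∀ j ∈ Finset.range 50, (c (j+1) - c j) • ((a ^ 2 * pw j + σ ^ 2) * ‖Λ j‖ ^ 2)
        ≤ (n : ℝ) * (‖Λ j‖ ^ 2 * (a ^ 2 * θ' j * P + τ' j * σ ^ 2)) := by
      intro j _
      rw [hdiff j, nsmul_eq_mul]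
      by_cases h : nj j = 0
      · rw [h, Nat.cast_zero, zero_mul]
        have h1 : 0 ≤ a ^ 2 * θ' j * P + τ' j * σ ^ 2 :=
          add_nonneg (mul_nonneg (mul_nonneg (sq_nonneg a) (hθ'0 j)) hP.le)
            (mul_nonneg (hτ'0 j) (sq_nonneg σ))
        positivity
      · have hpos : (0:ℝ) < (nj j : ℝ) := by exact_mod_cast Nat.pos_of_ne_zero h
        rw [show pw j = θ' j * P * (n : ℝ) / (nj j : ℝ) from if_neg h]
        have hkey : ((nj j : ℕ) : ℝ) * ((a ^ 2 * (θ' j * P * (n : ℝ) / (nj j : ℝ)) + σ ^ 2) * ‖Λ j‖ ^ 2)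
            = (a ^ 2 * θ' j * P * (n : ℝ) + (nj j : ℝ) * σ ^ 2) * ‖Λ j‖ ^ 2 := by
          have hne : ((nj j : ℕ) : ℝ) ≠ 0 := hpos.ne'
          field_simp
          try ring
          try exact Or.inl trivial
        rw [hkey]
        have h1 : (nj j : ℝ) * σ ^ 2 ≤ τ' j * (n : ℝ) * σ ^ 2 :=
          mul_le_mul_of_nonneg_right (hnjle j) (by positivity)
        have h2 : a ^ 2 * θ' j * P * (n : ℝ) + (nj j : ℝ) * σ ^ 2
            ≤ (n : ℝ) * (a ^ 2 * θ' j * P + τ' j * σ ^ 2) := by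
          have he : (n:ℝ) * (a ^ 2 * θ' j * P + τ' j * σ ^ 2)
              = a ^ 2 * θ' j * P * (n:ℝ) + τ' j * (n:ℝ) * σ ^ 2 := by ring
          rw [he]
          linarith
        calc (a ^ 2 * θ' j * P * (n : ℝ) + (nj j : ℝ) * σ ^ 2) * ‖Λ j‖ ^ 2
            ≤ ((n : ℝ) * (a ^ 2 * θ' j * P + τ' j * σ ^ 2)) * ‖Λ j‖ ^ 2 :=
              mul_le_mul_of_nonneg_right h2 (by positivity)
          _ = (n : ℝ) * (‖Λ j‖ ^ 2 * (a ^ 2 * θ' j * P + τ' j * σ ^ 2)) := by ring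
    have hsum2 : ∑ j ∈ Finset.range 50, ‖Λ j‖ ^ 2 * (a ^ 2 * θ' j * P + τ' j * σ ^ 2) ≤ γ * P := by
      rw [← Fin.sum_univ_eq_sum_range (fun j => ‖Λ j‖ ^ 2 * (a ^ 2 * θ' j * P + τ' j * σ ^ 2)) 50]
      rw [Fin.sum_univ_succ]
      have hz : ‖Λ ((0 : Fin 50) : ℕ)‖ ^ 2 * (a ^ 2 * θ' (((0:Fin 50)):ℕ) * P + τ' (((0:Fin 50)):ℕ) * σ ^ 2) = 0 := by
        rw [show ((0 : Fin 50) : ℕ) = 0 from rfl, hΛ0]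
        simp
      rw [hz, zero_add]
      refine le_trans (le_of_eq (Finset.sum_congr rfl fun j _ => ?_)) hr
      rw [show ((j.succ : Fin 50) : ℕ) = (j : ℕ) + 1 from rfl, hΛeval j,
        show θ' ((j:ℕ)+1) = θ j.succ from hθ'eval j.succ,
        show τ' ((j:ℕ)+1) = τ j.succ from hτ'eval j.succ]
    calc ∑ j ∈ Finset.range 50, (c (j+1) - c j) • ((a ^ 2 * pw j + σ ^ 2) * ‖Λ j‖ ^ 2)
        ≤ ∑ j ∈ Finset.range 50, (n : ℝ) * (‖Λ j‖ ^ 2 * (a ^ 2 * θ' j * P + τ' j * σ ^ 2)) :=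
          Finset.sum_le_sum hterm
      _ = (n : ℝ) * ∑ j ∈ Finset.range 50, ‖Λ j‖ ^ 2 * (a ^ 2 * θ' j * P + τ' j * σ ^ 2) := by
          rw [Finset.mul_sum]
      _ ≤ (n : ℝ) * (γ * P) := mul_le_mul_of_nonneg_left hsum2 hnR.le
      _ = (n : ℝ) * γ * P := by ring
  · -- rate lower bound
    rw [Fin.sum_univ_eq_sum_range (fun i => Real.log
        (1 + (μf i / σ ^ 2) * ‖1 + ((a * b : ℝ) : ℂ) * lf i‖ ^ 2 / (1 + b ^ 2 * ‖lf i‖ ^ 2))) n]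
    rw [sum_blocks c hmono hc0 hcn _ (fun j => 2 * rt a b σ (pw j) (Λ j))
      (fun j hj i h1 h2 => by
        rw [hblockμ j hj i h1 h2, hblockl j hj i h1 h2]
        unfold rt
        ring)
      (fun i hi => by
        rw [hμzero i hi, hlzero i hi]
        simp)]
    rw [Finset.mul_sum]
    have hterm : ∀ j ∈ Finset.range 50, τ' j * G j - (1 / (n:ℝ)) * G j
        ≤ (1 / (2 * (n : ℝ))) * ((c (j+1) - c j) • (2 * rt a b σ (pw j) (Λ j))) := by
      intro j _
      rw [hdiff j, nsmul_eq_mul]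
      have hrw : (1 / (2 * (n : ℝ))) * (((nj j : ℕ) : ℝ) * (2 * rt a b σ (pw j) (Λ j)))
          = ((nj j : ℝ) / (n : ℝ)) * rt a b σ (pw j) (Λ j) := by
        field_simp
      rw [hrw]
      by_cases h : nj j = 0
      · have hτsmall : τ' j * (n : ℝ) < 1 := by
          have := Nat.floor_eq_zero.1 h
          exact this
        have hfactor : τ' j - 1 / (n : ℝ) ≤ 0 := by
          rw [sub_nonpos, le_div_iff₀ hnR]
          linarith
        have : τ' j * G j - (1 / (n:ℝ)) * G j = (τ' j - 1 / (n:ℝ)) * G j := by ring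
        rw [this, h]
        show _ ≤ ((0:ℕ):ℝ) / (n:ℝ) * _
        rw [Nat.cast_zero, zero_div, zero_mul]
        exact mul_nonpos_of_nonpos_of_nonneg hfactor (hG0 j)
      · have hnjpos : (0:ℝ) < (nj j : ℝ) := by exact_mod_cast Nat.pos_of_ne_zero h
        have hτpos : 0 < τ' j := by
          rcases (hτ'0 j).lt_or_eq with hlt | heq
          · exact hlt
          · exfalso
            have h1 := hnjle j
            rw [← heq, zero_mul] at h1
            exact absurd h1 (not_le.2 hnjpos)
        have h0 : 0 ≤ θ' j * P := mul_nonneg (hθ'0 j) hP.le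
        have hple : μs j ≤ pw j := by
          rw [show pw j = θ' j * P * (n:ℝ) / (nj j : ℝ) from if_neg h,
            show μs j = θ' j * P / τ' j from rfl]
          rw [div_le_div_iff₀ hτpos hnjpos]
          calc θ' j * P * (nj j:ℝ) ≤ θ' j * P * (τ' j * (n:ℝ)) :=
                mul_le_mul_of_nonneg_left (hnjle j) h0
            _ = θ' j * P * (n:ℝ) * τ' j := by ring
        have hrtle : G j ≤ rt a b σ (pw j) (Λ j) := rt_mono hσ (hμs0 j) hple (Λ j)
        have hfrac : τ' j - 1/(n:ℝ) ≤ (nj j : ℝ)/(n:ℝ) := by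
          rw [le_div_iff₀ hnR]
          have he : (τ' j - 1/(n:ℝ)) * (n:ℝ) = τ' j * (n:ℝ) - 1 := by
            field_simp
          rw [he]
          exact hnjge j
        calc τ' j * G j - (1/(n:ℝ)) * G j = (τ' j - 1/(n:ℝ)) * G j := by ring
          _ ≤ ((nj j:ℝ)/(n:ℝ)) * G j := mul_le_mul_of_nonneg_right hfrac (hG0 j)
          _ ≤ ((nj j:ℝ)/(n:ℝ)) * rt a b σ (pw j) (Λ j) :=
              mul_le_mul_of_nonneg_left hrtle (by positivity)
    have hsum := Finset.sum_le_sum hterm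
    have hL : ∑ j ∈ Finset.range 50, (τ' j * G j - (1/(n:ℝ)) * G j)
        = (∑ j ∈ Finset.range 50, τ' j * G j) - (1/(n:ℝ)) * Y := by
      rw [Finset.sum_sub_distrib, ← Finset.mul_sum]
    rw [hL, hy] at hsum
    linarith

noncomputable def CSet (a b σ P γ : ℝ) : Set ℝ := {x : ℝ |
      ∃ (τ θ : Fin 50 → ℝ) (lb : Fin 49 → ℂ),
        (∀ j, 0 ≤ τ j) ∧ (∀ j, 0 ≤ θ j) ∧
        (∑ j, τ j = 1) ∧ (∑ j, θ j = 1) ∧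
        (∀ j, τ j = 0 → θ j = 0) ∧
        (∑ j : Fin 49, ‖lb j‖ ^ 2 * (a ^ 2 * θ j.succ * P + τ j.succ * σ ^ 2) ≤ γ * P) ∧
        x = τ 0 * ((1 / 2) * Real.log (1 + θ 0 * P / (τ 0 * σ ^ 2)))
          + ∑ j : Fin 49, τ j.succ * ((1 / 2) * Real.log
              (1 + (θ j.succ / τ j.succ) * (P / σ ^ 2)
                * ‖1 + ((a * b : ℝ) : ℂ) * lb j‖ ^ 2 / (1 + b ^ 2 * ‖lb j‖ ^ 2)))}

lemma CSet_bddAbove (a b σ P γ : ℝ) (hσ : 0 < σ) (hP : 0 < P) :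
    BddAbove (CSet a b σ P γ) := by
  refine ⟨(1/2) * (P/σ^2) * (2 + 2*a^2), ?_⟩
  rintro x ⟨τ, θ, lb, hτ0, hθ0, hτ1, hθ1, hτθ, hrel, rfl⟩
  have hbound0 : τ 0 * ((1 / 2) * Real.log (1 + θ 0 * P / (τ 0 * σ ^ 2)))
      ≤ (1/2) * (θ 0 * (P/σ^2) * (2 + 2*a^2)) := by
    rcases (hτ0 0).lt_or_eq with hpos | heq
    · have harg : 0 ≤ θ 0 * P / (τ 0 * σ ^ 2) :=
        div_nonneg (mul_nonneg (hθ0 0) hP.le) (by positivity)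
      have hlog := Real.log_le_sub_one_of_pos (by linarith : (0:ℝ) < 1 + θ 0 * P / (τ 0 * σ ^ 2))
      have h2 : τ 0 * (θ 0 * P / (τ 0 * σ ^ 2)) = θ 0 * (P / σ^2) := by
        field_simp [hpos.ne']
      have h3 : τ 0 * ((1 / 2) * Real.log (1 + θ 0 * P / (τ 0 * σ ^ 2)))
          ≤ τ 0 * ((1/2) * (θ 0 * P / (τ 0 * σ ^ 2))) := by
        apply mul_le_mul_of_nonneg_left _ hpos.le
        have := hlog; linarith
      have h4 : τ 0 * ((1/2) * (θ 0 * P / (τ 0 * σ ^ 2))) = (1/2) * (θ 0 * (P/σ^2)) := by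
        rw [← h2]; ring
      have h5 : (1/2) * (θ 0 * (P/σ^2)) ≤ (1/2) * (θ 0 * (P/σ^2) * (2 + 2*a^2)) := by
        have h6 : 0 ≤ θ 0 * (P/σ^2) := by have := hθ0 0; positivity
        nlinarith [sq_nonneg a]
      linarith
    · rw [← heq, zero_mul]
      have h6 : 0 ≤ θ 0 * (P/σ^2) := by have := hθ0 0; positivity
      nlinarith [sq_nonneg a]
  have hboundj : ∀ j : Fin 49, τ j.succ * ((1 / 2) * Real.log
        (1 + (θ j.succ / τ j.succ) * (P / σ ^ 2)
          * ‖1 + ((a * b : ℝ) : ℂ) * lb j‖ ^ 2 / (1 + b ^ 2 * ‖lb j‖ ^ 2)))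
      ≤ (1/2) * (θ j.succ * (P/σ^2) * (2 + 2*a^2)) := by
    intro j
    have hKle := K_le a b (lb j)
    have hKpos : (0:ℝ) ≤ ‖1 + ((a * b : ℝ) : ℂ) * lb j‖ ^ 2 / (1 + b ^ 2 * ‖lb j‖ ^ 2) := by
      have := den_pos b (lb j); positivity
    rcases (hτ0 j.succ).lt_or_eq with hpos | heq
    · have hθj := hθ0 j.succ
      have harg : 0 ≤ (θ j.succ / τ j.succ) * (P / σ ^ 2)
          * ‖1 + ((a * b : ℝ) : ℂ) * lb j‖ ^ 2 / (1 + b ^ 2 * ‖lb j‖ ^ 2) := by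
        rw [mul_div_assoc]
        have h1 : 0 ≤ (θ j.succ / τ j.succ) * (P / σ ^ 2) := by positivity
        exact mul_nonneg h1 hKpos
      have hlog := Real.log_le_sub_one_of_pos (by linarith : (0:ℝ) < 1 + (θ j.succ / τ j.succ) * (P / σ ^ 2)
          * ‖1 + ((a * b : ℝ) : ℂ) * lb j‖ ^ 2 / (1 + b ^ 2 * ‖lb j‖ ^ 2))
      have hXle : (θ j.succ / τ j.succ) * (P / σ ^ 2)
          * ‖1 + ((a * b : ℝ) : ℂ) * lb j‖ ^ 2 / (1 + b ^ 2 * ‖lb j‖ ^ 2)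
          ≤ (θ j.succ / τ j.succ) * (P / σ ^ 2) * (2 + 2*a^2) := by
        rw [mul_div_assoc]
        apply mul_le_mul_of_nonneg_left hKle
        positivity
      have h3 : τ j.succ * ((1 / 2) * Real.log (1 + (θ j.succ / τ j.succ) * (P / σ ^ 2)
          * ‖1 + ((a * b : ℝ) : ℂ) * lb j‖ ^ 2 / (1 + b ^ 2 * ‖lb j‖ ^ 2)))
          ≤ τ j.succ * ((1/2) * ((θ j.succ / τ j.succ) * (P / σ ^ 2) * (2 + 2*a^2))) := by
        apply mul_le_mul_of_nonneg_left _ hpos.le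
        have := hlog; linarith
      have h4 : τ j.succ * ((1/2) * ((θ j.succ / τ j.succ) * (P / σ ^ 2) * (2 + 2*a^2)))
          = (1/2) * (θ j.succ * (P/σ^2) * (2 + 2*a^2)) := by
        field_simp [hpos.ne']
      linarith
    · rw [← heq, zero_mul]
      have h6 : 0 ≤ θ j.succ * (P/σ^2) * (2+2*a^2) := by
        have := hθ0 j.succ; positivity
      linarith
  calc τ 0 * ((1 / 2) * Real.log (1 + θ 0 * P / (τ 0 * σ ^ 2)))
          + ∑ j : Fin 49, τ j.succ * ((1 / 2) * Real.log
              (1 + (θ j.succ / τ j.succ) * (P / σ ^ 2)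
                * ‖1 + ((a * b : ℝ) : ℂ) * lb j‖ ^ 2 / (1 + b ^ 2 * ‖lb j‖ ^ 2)))
      ≤ (1/2) * (θ 0 * (P/σ^2) * (2 + 2*a^2))
          + ∑ j : Fin 49, (1/2) * (θ j.succ * (P/σ^2) * (2 + 2*a^2)) :=
        add_le_add hbound0 (Finset.sum_le_sum fun j _ => hboundj j)
    _ = (∑ j : Fin 50, θ j) * ((1/2) * ((P/σ^2) * (2 + 2*a^2))) := by
        rw [Fin.sum_univ_succ (fun j => θ j), add_mul, Finset.sum_mul]
        congr 1
        · ring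
        · exact Finset.sum_congr rfl fun j _ => by ring
    _ = (1/2) * (P/σ^2) * (2 + 2*a^2) := by rw [hθ1]; ring

lemma upper_bound (a b σ P γ : ℝ) (hσ : 0 < σ) (hP : 0 < P) (hγ : 0 < γ)
    {n : ℕ} (hn : 0 < n) (μ : Fin n → ℝ) (l : Fin n → ℂ)
    (hμ0 : ∀ i, 0 ≤ μ i) (hμP : ∑ i, μ i ≤ (n : ℝ) * P)
    (hrel : ∑ i, (a ^ 2 * μ i + σ ^ 2) * ‖l i‖ ^ 2 ≤ (n : ℝ) * γ * P) :
    (1 / (2 * (n : ℝ))) * ∑ i, Real.log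
        (1 + (μ i / σ ^ 2) * ‖1 + ((a * b : ℝ) : ℂ) * l i‖ ^ 2
          / (1 + b ^ 2 * ‖l i‖ ^ 2)) ≤ sSup (CSet a b σ P γ) := by
  classical
  have hnR : (0:ℝ) < (n:ℝ) := by exact_mod_cast hn
  set x := (1 / (2 * (n : ℝ))) * ∑ i, Real.log
        (1 + (μ i / σ ^ 2) * ‖1 + ((a * b : ℝ) : ℂ) * l i‖ ^ 2
          / (1 + b ^ 2 * ‖l i‖ ^ 2)) with hxdef
  have hx0 : 0 ≤ x := by
    rw [hxdef]
    apply mul_nonneg (by positivity)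
    apply Finset.sum_nonneg
    intro i _
    apply Real.log_nonneg
    have h1 : 0 ≤ (μ i / σ ^ 2) * ‖1 + ((a * b : ℝ) : ℂ) * l i‖ ^ 2
        / (1 + b ^ 2 * ‖l i‖ ^ 2) := arg_nonneg hσ (hμ0 i) (l i)
    linarith
  -- Carathéodory setup
  set S : Set (ℝ × ℝ × ℝ) := {p | ∃ (m : ℝ) (lam : ℂ), 0 ≤ m ∧
    p = (rt a b σ m lam, m, (a ^ 2 * m + σ ^ 2) * ‖lam‖ ^ 2)} with hSdef
  set pt : Fin n → ℝ × ℝ × ℝ := fun i =>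
    (rt a b σ (μ i) (l i), μ i, (a ^ 2 * μ i + σ ^ 2) * ‖l i‖ ^ 2) with hptdef
  set v : ℝ × ℝ × ℝ := (n : ℝ)⁻¹ • ∑ i, pt i with hvdef
  have hv : v ∈ convexHull ℝ S := by
    have hmem : ∀ i ∈ (Finset.univ : Finset (Fin n)), pt i ∈ S := by
      intro i _
      rw [hSdef]
      exact ⟨μ i, l i, hμ0 i, rfl⟩
    have hc := Finset.centerMass_mem_convexHull (Finset.univ : Finset (Fin n))
      (w := fun _ => (1:ℝ)) (fun i _ => zero_le_one)
      (by simp [Finset.card_univ]; exact_mod_cast hn)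
      (z := pt) hmem
    have he : (Finset.univ : Finset (Fin n)).centerMass (fun _ => (1:ℝ)) pt = v := by
      rw [Finset.centerMass]
      simp [Finset.card_univ]
      exact hvdef.symm
    rwa [he] at hc
  obtain ⟨ι, hfin, z, w, hzS, hai, hw0, hw1, hwz⟩ := eq_pos_convex_span_of_mem_convexHull hv
  letI := hfin
  have hcard : Fintype.card ι ≤ 4 := by
    have h1 := hai.card_le_finrank_succ
    have h2 : Module.finrank ℝ ↥(vectorSpan ℝ (Set.range z)) ≤ Module.finrank ℝ (ℝ × ℝ × ℝ) :=
      Submodule.finrank_le _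
    have h3 : Module.finrank ℝ (ℝ × ℝ × ℝ) = 3 := by simp
    omega
  obtain ⟨e⟩ : Nonempty (ι ↪ Fin 49) := Function.Embedding.nonempty_of_card_le (by simp; omega)
  -- witnesses
  have hzS' : ∀ i : ι, ∃ (m : ℝ) (lam : ℂ), 0 ≤ m ∧
      z i = (rt a b σ m lam, m, (a ^ 2 * m + σ ^ 2) * ‖lam‖ ^ 2) :=
    fun i => hzS (Set.mem_range_self i)
  choose mm ll hmm0 hzeq using hzS'
  -- component equations
  have hv1 : v.1 = x := by
    rw [hvdef, hxdef, Prod.smul_fst, Prod.fst_sum]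
    rw [smul_eq_mul, Finset.mul_sum, Finset.mul_sum]
    apply Finset.sum_congr rfl
    intro i _
    rw [hptdef]
    show (n:ℝ)⁻¹ * rt a b σ (μ i) (l i) = _
    unfold rt
    ring
  have hv2 : v.2.1 ≤ P := by
    rw [hvdef, Prod.smul_snd, Prod.snd_sum, Prod.smul_fst, Prod.fst_sum, smul_eq_mul]
    rw [inv_mul_le_iff₀ hnR]
    calc ∑ i, (pt i).2.1 = ∑ i, μ i := by
          apply Finset.sum_congr rfl; intro i _; rw [hptdef]
      _ ≤ (n:ℝ) * P := hμP
  have hv3 : v.2.2 ≤ γ * P := by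
    rw [hvdef, Prod.smul_snd, Prod.snd_sum, Prod.smul_snd, Prod.snd_sum, smul_eq_mul]
    rw [inv_mul_le_iff₀ hnR]
    calc ∑ i, (pt i).2.2 = ∑ i, (a ^ 2 * μ i + σ ^ 2) * ‖l i‖ ^ 2 := by
          apply Finset.sum_congr rfl; intro i _; rw [hptdef]
      _ ≤ (n:ℝ) * γ * P := hrel
      _ = (n:ℝ) * (γ * P) := by ring
  have hw1' : ∑ i, w i * (z i).1 = v.1 := by
    rw [← hwz, Prod.fst_sum]
    exact Finset.sum_congr rfl fun i _ => by rw [Prod.smul_fst, smul_eq_mul]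
  have hw2' : ∑ i, w i * (z i).2.1 = v.2.1 := by
    rw [← hwz, Prod.snd_sum, Prod.fst_sum]
    exact Finset.sum_congr rfl fun i _ => by
      rw [Prod.smul_snd, Prod.smul_fst, smul_eq_mul]
  have hw3' : ∑ i, w i * (z i).2.2 = v.2.2 := by
    rw [← hwz, Prod.snd_sum, Prod.snd_sum]
    exact Finset.sum_congr rfl fun i _ => by
      rw [Prod.smul_snd, Prod.smul_snd, smul_eq_mul]
  -- re-express the three sums through the witnesses
  have hRx : ∑ i, w i * rt a b σ (mm i) (ll i) = x := by
    rw [← hv1, ← hw1']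
    exact Finset.sum_congr rfl fun i _ => by rw [hzeq i]
  have hMle : ∑ i, w i * mm i ≤ P := by
    rw [show ∑ i, w i * mm i = ∑ i, w i * (z i).2.1 from
      Finset.sum_congr rfl fun i _ => by rw [hzeq i], hw2']
    exact hv2
  have hQle : ∑ i, w i * ((a ^ 2 * mm i + σ ^ 2) * ‖ll i‖ ^ 2) ≤ γ * P := by
    rw [show ∑ i, w i * ((a ^ 2 * mm i + σ ^ 2) * ‖ll i‖ ^ 2) = ∑ i, w i * (z i).2.2 from
      Finset.sum_congr rfl fun i _ => by rw [hzeq i], hw3']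
    exact hv3
  -- spread the data over Fin 49
  set D : Fin 49 → ℝ × ℝ × ℂ := fun j =>
    if h : ∃ i, e i = j then (w h.choose, mm h.choose, ll h.choose) else (0, 0, 0) with hDdef
  have hDe : ∀ i : ι, D (e i) = (w i, mm i, ll i) := by
    intro i
    rw [hDdef]
    dsimp only
    have h : ∃ i', e i' = e i := ⟨i, rfl⟩
    rw [dif_pos h]
    have he' : h.choose = i := e.injective h.choose_spec
    rw [he']
  have hDoff : ∀ j, (¬ ∃ i, e i = j) → D j = (0, 0, 0) := fun j hj => by
    rw [hDdef]; exact dif_neg hj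
  have htrans : ∀ g : ℝ × ℝ × ℂ → ℝ, g (0, 0, 0) = 0 →
      ∑ j : Fin 49, g (D j) = ∑ i : ι, g (w i, mm i, ll i) := by
    intro g hg
    have h1 : ∑ j : Fin 49, g (D j) = ∑ j ∈ Finset.univ.image e, g (D j) := by
      symm
      apply Finset.sum_subset (Finset.subset_univ _)
      intro j _ hj
      have hne : ¬ ∃ i, e i = j := by
        rintro ⟨i, hi⟩
        exact hj (Finset.mem_image.2 ⟨i, Finset.mem_univ i, hi⟩)
      rw [hDoff j hne, hg]
    rw [h1, Finset.sum_image (fun i1 _ i2 _ h => e.injective h)]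
    exact Finset.sum_congr rfl fun i _ => by rw [hDe]
  set W : Fin 49 → ℝ := fun j => (D j).1 with hWdef
  set M : Fin 49 → ℝ := fun j => (D j).2.1 with hMdef
  set L : Fin 49 → ℂ := fun j => (D j).2.2 with hLdef
  have hW0 : ∀ j, 0 ≤ W j := by
    intro j
    rw [hWdef, hDdef]
    dsimp only
    by_cases h : ∃ i, e i = j
    · rw [dif_pos h]; exact (hw0 _).le
    · rw [dif_neg h]
  have hM0 : ∀ j, 0 ≤ M j := by
    intro j
    rw [hMdef, hDdef]
    dsimp only
    by_cases h : ∃ i, e i = j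
    · rw [dif_pos h]; exact hmm0 _
    · rw [dif_neg h]
  have hWsum : ∑ j : Fin 49, W j = 1 := by
    have h := htrans (fun p => p.1) rfl
    rw [hw1] at h
    exact h
  have hWM : ∑ j : Fin 49, W j * M j = ∑ i, w i * mm i :=
    htrans (fun p => p.1 * p.2.1) (by norm_num)
  have hWrt : ∑ j : Fin 49, W j * rt a b σ (M j) (L j) = ∑ i, w i * rt a b σ (mm i) (ll i) :=
    htrans (fun p => p.1 * rt a b σ p.2.1 p.2.2) (zero_mul _)
  have hWQ : ∑ j : Fin 49, W j * ((a ^ 2 * M j + σ ^ 2) * ‖L j‖ ^ 2)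
      = ∑ i, w i * ((a ^ 2 * mm i + σ ^ 2) * ‖ll i‖ ^ 2) :=
    htrans (fun p => p.1 * ((a ^ 2 * p.2.1 + σ ^ 2) * ‖p.2.2‖ ^ 2)) (zero_mul _)
  -- for every δ ∈ (0,1) the scaled rate is achievable
  have hmain : ∀ δ : ℝ, 0 < δ → δ < 1 → (1 - δ) * x ≤ sSup (CSet a b σ P γ) := by
    intro δ hδ0 hδ1
    set τv : Fin 50 → ℝ := Fin.cases δ (fun j => (1 - δ) * W j) with hτvdef
    set θv : Fin 50 → ℝ := Fin.cases (1 - (∑ i, w i * mm i) / P) (fun j => W j * M j / P)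
      with hθvdef
    have hτv0 : τv 0 = δ := rfl
    have hτvs : ∀ j : Fin 49, τv j.succ = (1 - δ) * W j := fun j => by
      rw [hτvdef]; exact Fin.cases_succ j
    have hθv0 : θv 0 = 1 - (∑ i, w i * mm i) / P := rfl
    have hθvs : ∀ j : Fin 49, θv j.succ = W j * M j / P := fun j => by
      rw [hθvdef]; exact Fin.cases_succ j
    have hδ1' : (0:ℝ) < 1 - δ := by linarith
    have hmem : (τv 0 * ((1 / 2) * Real.log (1 + θv 0 * P / (τv 0 * σ ^ 2)))
          + ∑ j : Fin 49, τv j.succ * ((1 / 2) * Real.log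
              (1 + (θv j.succ / τv j.succ) * (P / σ ^ 2)
                * ‖1 + ((a * b : ℝ) : ℂ) * L j‖ ^ 2 / (1 + b ^ 2 * ‖L j‖ ^ 2))))
        ∈ CSet a b σ P γ := by
      refine ⟨τv, θv, L, ?_, ?_, ?_, ?_, ?_, ?_, rfl⟩
      · intro j
        induction j using Fin.cases with
        | zero => rw [hτv0]; exact hδ0.le
        | succ j => rw [hτvs]; exact mul_nonneg hδ1'.le (hW0 j)
      · intro j
        induction j using Fin.cases with
        | zero =>
          rw [hθv0, sub_nonneg, div_le_one hP]
          exact hMle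
        | succ j =>
          rw [hθvs]
          exact div_nonneg (mul_nonneg (hW0 j) (hM0 j)) hP.le
      · rw [Fin.sum_univ_succ]
        have : ∑ j : Fin 49, τv j.succ = (1 - δ) * ∑ j : Fin 49, W j := by
          rw [Finset.mul_sum]
          exact Finset.sum_congr rfl fun j _ => hτvs j
        rw [this, hWsum, hτv0]
        ring
      · rw [Fin.sum_univ_succ]
        have h1 : ∑ j : Fin 49, θv j.succ = (∑ i, w i * mm i) / P := by
          have : ∑ j : Fin 49, θv j.succ = (∑ j : Fin 49, W j * M j) / P := by
            rw [Finset.sum_div]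
            exact Finset.sum_congr rfl fun j _ => hθvs j
          rw [this, hWM]
        rw [h1, hθv0]
        ring
      · intro j h0
        induction j using Fin.cases with
        | zero => rw [hτv0] at h0; exact absurd h0 hδ0.ne'
        | succ j =>
          rw [hτvs] at h0
          have hWj : W j = 0 := by
            rcases mul_eq_zero.1 h0 with h | h
            · exact absurd h hδ1'.ne'
            · exact h
          rw [hθvs, hWj, zero_mul, zero_div]
      · -- relay constraint
        have hterm : ∀ j : Fin 49, ‖L j‖ ^ 2 * (a ^ 2 * θv j.succ * P + τv j.succ * σ ^ 2)
            ≤ W j * ((a ^ 2 * M j + σ ^ 2) * ‖L j‖ ^ 2) := by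
          intro j
          have hθP : W j * M j / P * P = W j * M j := div_mul_cancel₀ _ hP.ne'
          have h2 : a ^ 2 * (W j * M j / P) * P + (1 - δ) * W j * σ ^ 2
              ≤ W j * (a ^ 2 * M j + σ ^ 2) := by
            have e1 : a ^ 2 * (W j * M j / P) * P = a ^ 2 * (W j * M j) := by
              field_simp
            rw [e1]
            have e2 : W j * (a ^ 2 * M j + σ ^ 2)
                - (a ^ 2 * (W j * M j) + (1 - δ) * W j * σ ^ 2) = δ * (W j * σ ^ 2) := by
              ring
            have e3 : 0 ≤ δ * (W j * σ ^ 2) :=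
              mul_nonneg hδ0.le (mul_nonneg (hW0 j) (sq_nonneg σ))
            linarith
          calc ‖L j‖ ^ 2 * (a ^ 2 * θv j.succ * P + τv j.succ * σ ^ 2)
              = ‖L j‖ ^ 2 * (a ^ 2 * (W j * M j / P) * P + (1 - δ) * W j * σ ^ 2) := by
                rw [hθvs, hτvs]
            _ ≤ ‖L j‖ ^ 2 * (W j * (a ^ 2 * M j + σ ^ 2)) :=
                mul_le_mul_of_nonneg_left h2 (by positivity)
            _ = W j * ((a ^ 2 * M j + σ ^ 2) * ‖L j‖ ^ 2) := by ring
        calc ∑ j : Fin 49, ‖L j‖ ^ 2 * (a ^ 2 * θv j.succ * P + τv j.succ * σ ^ 2)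
            ≤ ∑ j : Fin 49, W j * ((a ^ 2 * M j + σ ^ 2) * ‖L j‖ ^ 2) :=
              Finset.sum_le_sum fun j _ => hterm j
          _ = ∑ i, w i * ((a ^ 2 * mm i + σ ^ 2) * ‖ll i‖ ^ 2) := hWQ
          _ ≤ γ * P := hQle
    refine le_trans ?_ (le_csSup (CSet_bddAbove a b σ P γ hσ hP) hmem)
    -- the value dominates (1-δ) x
    have hmode0 : 0 ≤ τv 0 * ((1 / 2) * Real.log (1 + θv 0 * P / (τv 0 * σ ^ 2))) := by
      apply mul_nonneg (by rw [hτv0]; exact hδ0.le)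
      apply mul_nonneg (by norm_num)
      apply Real.log_nonneg
      have h1 : 0 ≤ θv 0 * P / (τv 0 * σ ^ 2) := by
        apply div_nonneg (mul_nonneg ?_ hP.le) (by rw [hτv0]; positivity)
        rw [hθv0, sub_nonneg, div_le_one hP]
        exact hMle
      linarith
    have htermj : ∀ j : Fin 49, (1 - δ) * (W j * rt a b σ (M j) (L j))
        ≤ τv j.succ * ((1 / 2) * Real.log
            (1 + (θv j.succ / τv j.succ) * (P / σ ^ 2)
              * ‖1 + ((a * b : ℝ) : ℂ) * L j‖ ^ 2 / (1 + b ^ 2 * ‖L j‖ ^ 2))) := by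
      intro j
      rcases (hW0 j).lt_or_eq with hWpos | hWzero
      · have hX : θv j.succ / τv j.succ * (P / σ ^ 2) = M j / ((1 - δ) * σ ^ 2) := by
          rw [hθvs, hτvs]
          field_simp
        have hXge : M j / σ ^ 2 ≤ θv j.succ / τv j.succ * (P / σ ^ 2) := by
          rw [hX]
          apply div_le_div_of_nonneg_left (hM0 j) (mul_pos hδ1' (pow_pos hσ 2))
          nlinarith [sq_nonneg σ, mul_nonneg hδ0.le (sq_nonneg σ)]
        have hargle : 1 + (M j / σ ^ 2) * ‖1 + ((a * b : ℝ) : ℂ) * L j‖ ^ 2 / (1 + b ^ 2 * ‖L j‖ ^ 2)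
            ≤ 1 + (θv j.succ / τv j.succ) * (P / σ ^ 2)
              * ‖1 + ((a * b : ℝ) : ℂ) * L j‖ ^ 2 / (1 + b ^ 2 * ‖L j‖ ^ 2) := by
          have hd := den_pos b (L j)
          gcongr
        have hpos1 : (0:ℝ) < 1 + (M j / σ ^ 2) * ‖1 + ((a * b : ℝ) : ℂ) * L j‖ ^ 2
            / (1 + b ^ 2 * ‖L j‖ ^ 2) := by
          have := arg_nonneg (a := a) (b := b) hσ (hM0 j) (L j)
          linarith
        have hlog := Real.log_le_log hpos1 hargle
        rw [hτvs]
        have hrt : rt a b σ (M j) (L j) = (1/2) * Real.log (1 + (M j / σ ^ 2)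
            * ‖1 + ((a * b : ℝ) : ℂ) * L j‖ ^ 2 / (1 + b ^ 2 * ‖L j‖ ^ 2)) := rfl
        rw [hrt]
        have hc : 0 ≤ (1 - δ) * W j := mul_nonneg hδ1'.le hWpos.le
        calc (1 - δ) * (W j * ((1/2) * Real.log (1 + (M j / σ ^ 2)
              * ‖1 + ((a * b : ℝ) : ℂ) * L j‖ ^ 2 / (1 + b ^ 2 * ‖L j‖ ^ 2))))
            = ((1 - δ) * W j) * ((1/2) * Real.log (1 + (M j / σ ^ 2)
              * ‖1 + ((a * b : ℝ) : ℂ) * L j‖ ^ 2 / (1 + b ^ 2 * ‖L j‖ ^ 2))) := by ring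
          _ ≤ ((1 - δ) * W j) * ((1/2) * Real.log
              (1 + (θv j.succ / τv j.succ) * (P / σ ^ 2)
                * ‖1 + ((a * b : ℝ) : ℂ) * L j‖ ^ 2 / (1 + b ^ 2 * ‖L j‖ ^ 2))) := by
            apply mul_le_mul_of_nonneg_left _ hc
            linarith
      · rw [hτvs, ← hWzero]
        simp
    calc (1 - δ) * x = ∑ j : Fin 49, (1 - δ) * (W j * rt a b σ (M j) (L j)) := by
          rw [← Finset.mul_sum, hWrt, hRx]
      _ ≤ ∑ j : Fin 49, τv j.succ * ((1 / 2) * Real.log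
            (1 + (θv j.succ / τv j.succ) * (P / σ ^ 2)
              * ‖1 + ((a * b : ℝ) : ℂ) * L j‖ ^ 2 / (1 + b ^ 2 * ‖L j‖ ^ 2))) :=
          Finset.sum_le_sum fun j _ => htermj j
      _ ≤ τv 0 * ((1 / 2) * Real.log (1 + θv 0 * P / (τv 0 * σ ^ 2)))
          + ∑ j : Fin 49, τv j.succ * ((1 / 2) * Real.log
            (1 + (θv j.succ / τv j.succ) * (P / σ ^ 2)
              * ‖1 + ((a * b : ℝ) : ℂ) * L j‖ ^ 2 / (1 + b ^ 2 * ‖L j‖ ^ 2))) := by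
          linarith
  -- conclude by letting δ → 0
  apply le_of_forall_pos_le_add
  intro ε hε
  set δ := min (1/2) (ε / (x + 1)) with hδdef
  have hδ0 : 0 < δ := lt_min (by norm_num) (by positivity)
  have hδ1 : δ < 1 := lt_of_le_of_lt (min_le_left _ _) (by norm_num)
  have h1 := hmain δ hδ0 hδ1
  have h2 : δ * x ≤ ε := by
    have h3 : δ ≤ ε / (x + 1) := min_le_right _ _
    have h4 : δ * x ≤ (ε / (x + 1)) * x := mul_le_mul_of_nonneg_right h3 hx0
    have h5 : (ε / (x + 1)) * x ≤ ε := by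
      rw [div_mul_eq_mul_div, div_le_iff₀ (by linarith : (0:ℝ) < x + 1)]
      nlinarith
    linarith
  have hxx : x = (1 - δ) * x + δ * x := by ring
  linarith



open Filter

/-- Finite-letter capacity of the LTI Gaussian relay channel (Theorem 2): the
maximum `n`-bin LTI relaying rate `Fₙ` converges to the 50-mode expression `C₅₀`
with complex instantaneous amplify-and-forward gains. -/
theorem lti_capacity_fifty_modes (a b σ P γ : ℝ) (hσ : 0 < σ) (hP : 0 < P)
    (hγ : 0 < γ) (F : ℕ → ℝ)
    (hF : ∀ n : ℕ, 0 < n → F n = sSup {x : ℝ | ∃ (μ : Fin n → ℝ) (l : Fin n → ℂ),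
      (∀ i, 0 ≤ μ i) ∧ (∑ i, μ i ≤ (n : ℝ) * P) ∧
      (∑ i, (a ^ 2 * μ i + σ ^ 2) * ‖l i‖ ^ 2 ≤ (n : ℝ) * γ * P) ∧
      x = (1 / (2 * (n : ℝ))) * ∑ i, Real.log
        (1 + (μ i / σ ^ 2) * ‖1 + ((a * b : ℝ) : ℂ) * l i‖ ^ 2
          / (1 + b ^ 2 * ‖l i‖ ^ 2))}) :
    Tendsto F atTop (nhds (sSup {x : ℝ |
      ∃ (τ θ : Fin 50 → ℝ) (lb : Fin 49 → ℂ),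
        (∀ j, 0 ≤ τ j) ∧ (∀ j, 0 ≤ θ j) ∧
        (∑ j, τ j = 1) ∧ (∑ j, θ j = 1) ∧
        (∀ j, τ j = 0 → θ j = 0) ∧
        (∑ j : Fin 49, ‖lb j‖ ^ 2 * (a ^ 2 * θ j.succ * P + τ j.succ * σ ^ 2) ≤ γ * P) ∧
        x = τ 0 * ((1 / 2) * Real.log (1 + θ 0 * P / (τ 0 * σ ^ 2)))
          + ∑ j : Fin 49, τ j.succ * ((1 / 2) * Real.log
              (1 + (θ j.succ / τ j.succ) * (P / σ ^ 2)
                * ‖1 + ((a * b : ℝ) : ℂ) * lb j‖ ^ 2 / (1 + b ^ 2 * ‖lb j‖ ^ 2)))})) := by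
  classical
  show Tendsto F atTop (nhds (sSup (CSet a b σ P γ)))
  set C := sSup (CSet a b σ P γ) with hCdef
  -- CSet is nonempty
  have hne : (CSet a b σ P γ).Nonempty := by
    refine ⟨_, (fun j => if j = 0 then 1 else 0), (fun j => if j = 0 then 1 else 0),
      (fun _ => 0), ?_, ?_, ?_, ?_, ?_, ?_, rfl⟩
    · intro j; by_cases h : j = 0 <;> simp [h]
    · intro j; by_cases h : j = 0 <;> simp [h]
    · simp
    · simp
    · intro j h; exact h
    · simp
      positivity
  -- every achievable rate is at most C
  have hub : ∀ n : ℕ, 0 < n → F n ≤ C := by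
    intro n hn
    rw [hF n hn]
    apply csSup_le
    · refine ⟨_, (fun _ => 0), (fun _ => 0), fun i => le_rfl, ?_, ?_, rfl⟩
      · simp
        positivity
      · simp
        positivity
    · rintro x ⟨μ, l, hμ0, hμP, hrel, rfl⟩
      exact upper_bound a b σ P γ hσ hP hγ hn μ l hμ0 hμP hrel
  rw [Metric.tendsto_atTop]
  intro ε hε
  have hlt : C - ε / 2 < C := by linarith
  obtain ⟨y, hy, hy2⟩ := exists_lt_of_lt_csSup hne hlt
  obtain ⟨τ, θ, lb, hτ0, hθ0, hτ1, hθ1, hτθ, hrel, hyeq⟩ := hy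
  obtain ⟨N, hN0, hNP⟩ := lower_bound a b σ P γ hσ hP τ θ lb hτ0 hθ0 hτ1 hθ1 hτθ hrel
    (ε / 4) (by linarith)
  refine ⟨N, fun n hn => ?_⟩
  have hnpos : 0 < n := lt_of_lt_of_le hN0 hn
  obtain ⟨μ, l, h1, h2, h3, h4⟩ := hNP n hn
  have hbdd : BddAbove {x : ℝ | ∃ (μ : Fin n → ℝ) (l : Fin n → ℂ),
      (∀ i, 0 ≤ μ i) ∧ (∑ i, μ i ≤ (n : ℝ) * P) ∧
      (∑ i, (a ^ 2 * μ i + σ ^ 2) * ‖l i‖ ^ 2 ≤ (n : ℝ) * γ * P) ∧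
      x = (1 / (2 * (n : ℝ))) * ∑ i, Real.log
        (1 + (μ i / σ ^ 2) * ‖1 + ((a * b : ℝ) : ℂ) * l i‖ ^ 2
          / (1 + b ^ 2 * ‖l i‖ ^ 2))} := by
    refine ⟨C, ?_⟩
    rintro x ⟨μ', l', a1, a2, a3, rfl⟩
    exact upper_bound a b σ P γ hσ hP hγ hnpos μ' l' a1 a2 a3
  have hmem : (1 / (2 * (n : ℝ))) * ∑ i, Real.log
        (1 + (μ i / σ ^ 2) * ‖1 + ((a * b : ℝ) : ℂ) * l i‖ ^ 2
          / (1 + b ^ 2 * ‖l i‖ ^ 2)) ∈ {x : ℝ | ∃ (μ : Fin n → ℝ) (l : Fin n → ℂ),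
      (∀ i, 0 ≤ μ i) ∧ (∑ i, μ i ≤ (n : ℝ) * P) ∧
      (∑ i, (a ^ 2 * μ i + σ ^ 2) * ‖l i‖ ^ 2 ≤ (n : ℝ) * γ * P) ∧
      x = (1 / (2 * (n : ℝ))) * ∑ i, Real.log
        (1 + (μ i / σ ^ 2) * ‖1 + ((a * b : ℝ) : ℂ) * l i‖ ^ 2
          / (1 + b ^ 2 * ‖l i‖ ^ 2))} := ⟨μ, l, h1, h2, h3, rfl⟩
  have hge : y - ε / 4 ≤ F n := by
    rw [hF n hnpos]
    refine le_trans ?_ (le_csSup hbdd hmem)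
    rw [hyeq]
    exact h4
  have hle : F n ≤ C := hub n hnpos
  rw [Real.dist_eq, abs_lt]
  constructor <;> linarith
end

section
/- Fix real numbers a, b with ab ≠ 0 and σ > 0, P > 0, γ > 0, and let 𝒞(x) := (1/2)log(1+x). For each positive integer n define F_n := max{ (1/2n) Σ_{i=1}^n log(1 + (μ_i/σ²)·|1+abλ_i|²/(1+b²|λ_i|²)) : μ ∈ ℝⁿ, λ ∈ ℂⁿ, μ_i ≥ 0 for all i, Σ_{i=1}^n μ_i ≤ nP, Σ_{i=1}^n (a²μ_i + σ²)|λ_i|² ≤ nγP }. Define C₈ := sup over τ ∈ ℝ^{8}, θ ∈ ℝ^{8}, λ̄ ∈ ℝ^{7} (indexed j = 0,…,7 for τ, θ and j = 1,…,7 for λ̄) with τ_j ≥ 0, θ_j ≥ 0, Σ_{j=0}^{7} τ_j = 1, Σ_{j=0}^{7} θ_j = 1, θ_j = 0 whenever τ_j = 0, and Σ_{j=1}^{7} λ̄_j²(a²θ_j P + τ_j σ²) ≤ γP, of the quantity τ₀·𝒞(θ₀P/(τ₀σ²)) + Σ_{j=1}^{7} τ_j·𝒞((θ_j/τ_j)·(P/σ²)·(1+abλ̄_j)²/(1+b²λ̄_j²)),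 where any term with τ_j = 0 is taken to be 0. Then lim_{n→∞} F_n = C₈. -/
open Filter

open Finset

lemma aux_norm_sq (c : ℝ) (l : ℂ) : ‖1 + (c:ℂ) * l‖^2 = 1 + 2*c*l.re + c^2*‖l‖^2 := by
  rw [Complex.sq_norm, Complex.normSq_apply]
  have h : ‖l‖^2 = l.re^2 + l.im^2 := by
    rw [Complex.sq_norm, Complex.normSq_apply]; ring
  rw [h]
  simp [Complex.add_re, Complex.add_im, Complex.mul_re, Complex.mul_im]
  ring

lemma aux_gain_le (a b : ℝ) (l : ℂ) :
    ‖1 + ((a*b : ℝ):ℂ) * l‖^2 ≤ (1+a^2) * (1 + b^2*‖l‖^2) := by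
  rw [aux_norm_sq]
  have h3 : (0:ℝ) ≤ ‖l‖ := norm_nonneg l
  have habs : (a*b)*l.re ≤ (|a| * |b|)*‖l‖ := by
    calc (a*b)*l.re ≤ |a * b * l.re| := le_abs_self _
    _ = (|a| * |b|)*|l.re| := by rw [abs_mul, abs_mul]
    _ ≤ (|a| * |b|)*‖l‖ := by
        have := Complex.abs_re_le_norm l
        exact mul_le_mul_of_nonneg_left this (by positivity)
  have h5 : 2*((|a| * |b|)*‖l‖) ≤ a^2 + b^2*‖l‖^2 := by
    nlinarith [sq_nonneg (|a| - |b| * ‖l‖), sq_abs a, sq_abs b]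
  nlinarith [sq_nonneg (a*b)]

lemma aux_gain_le_real (a b t : ℝ) :
    (1 + a*b*t)^2 ≤ (1+a^2) * (1 + b^2*t^2) := by
  nlinarith [sq_nonneg (a - b*t)]

lemma aux_log_le (x : ℝ) (hx : 0 ≤ x) : Real.log (1 + x) ≤ x := by
  have := Real.log_le_sub_one_of_pos (x := 1 + x) (by linarith)
  linarith

lemma aux_realify (a b : ℝ) (l : ℂ) :
    ‖1 + ((a*b : ℝ):ℂ) * l‖^2
      ≤ (1 + a*b*(if 0 ≤ a*b then ‖l‖ else -‖l‖))^2 := by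
  rw [aux_norm_sq]
  have h1 : l.re ≤ ‖l‖ := Complex.re_le_norm l
  have h2 : -‖l‖ ≤ l.re := neg_le_of_abs_le (Complex.abs_re_le_norm l)
  have h4 : l.re^2 ≤ ‖l‖^2 := by nlinarith
  split_ifs with h
  · have := mul_le_mul_of_nonneg_left h1 h
    nlinarith
  · push_neg at h
    have := mul_le_mul_of_nonpos_left h2 (le_of_lt h)
    nlinarith

lemma aux_sum_dite_fin {M : Type*} [AddCommMonoid M] {k n : ℕ} (h : k ≤ n) (g : Fin k → M) :
    (∑ j : Fin n, if h' : (j:ℕ) < k then g ⟨j, h'⟩ else 0) = ∑ i : Fin k, g i := by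
  rw [Fin.sum_univ_eq_sum_range (fun i => if h' : i < k then g ⟨i, h'⟩ else 0) n,
    ← Finset.sum_subset (Finset.range_subset_range.2 h)]
  · rw [← Fin.sum_univ_eq_sum_range (fun i => if h' : i < k then g ⟨i, h'⟩ else 0) k]
    apply Finset.sum_congr rfl
    intro i _
    exact dif_pos i.isLt
  · intro i _ hi
    exact dif_neg (by simpa using hi)

lemma aux_sum_range_getD {α M : Type*} [AddCommMonoid M] (G : α → M) (d : α) (Ls : List α) :
    ∑ i ∈ Finset.range Ls.length, G (Ls.getD i d) = (Ls.map G).sum := by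
  induction Ls with
  | nil => simp
  | cons x t ih =>
    rw [List.length_cons, Finset.sum_range_succ']
    simp only [List.getD_cons_succ, List.getD_cons_zero, List.map_cons, List.sum_cons, ih]
    exact add_comm _ _

lemma aux_sum_fin_getD {α : Type*} (G : α → ℝ) (d : α) (Ls : List α) (n : ℕ)
    (h : Ls.length ≤ n) :
    ∑ i : Fin n, G (Ls.getD i d) = (Ls.map G).sum + ((n : ℝ) - Ls.length) * G d := by
  rw [Fin.sum_univ_eq_sum_range (fun i => G (Ls.getD i d)) n, Finset.range_eq_Ico,
    ← Finset.sum_Ico_consecutive _ (Nat.zero_le Ls.length) h,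
    ← Finset.range_eq_Ico, aux_sum_range_getD]
  congr 1
  have hc : ∀ i ∈ Finset.Ico Ls.length n, G (Ls.getD i d) = G d := by
    intro i hi
    rw [List.getD_eq_default _ _ (Finset.mem_Ico.1 hi).1]
  rw [Finset.sum_congr rfl hc, Finset.sum_const, Nat.card_Ico, nsmul_eq_mul]
  push_cast [Nat.cast_sub h]
  ring

lemma aux_sum_flatMap_replicate (f : Fin 8 → ℕ) (g : Fin 8 → ℝ × ℝ) (G : ℝ × ℝ → ℝ) :
    ((((List.finRange 8).flatMap fun j => List.replicate (f j) (g j))).map G).sum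
      = ∑ j : Fin 8, (f j : ℝ) * G (g j) := by
  rw [List.map_flatMap, List.flatMap, List.sum_flatten, List.map_map, Fin.sum_univ_def]
  congr 1
  apply List.map_congr_left
  intro j _
  simp [Function.comp, List.map_replicate, List.sum_replicate, nsmul_eq_mul]

lemma aux_len_flatMap_replicate (f : Fin 8 → ℕ) (g : Fin 8 → ℝ × ℝ) :
    (((List.finRange 8).flatMap fun j => List.replicate (f j) (g j))).length
      = ∑ j : Fin 8, f j := by
  rw [List.length_flatMap, Fin.sum_univ_def]
  congr 1
  apply List.map_congr_left
  intro j _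
  simp [Function.comp, List.length_replicate]

lemma aux_mem_flatMap_replicate {f : Fin 8 → ℕ} {g : Fin 8 → ℝ × ℝ} {p : ℝ × ℝ}
    (hp : p ∈ ((List.finRange 8).flatMap fun j => List.replicate (f j) (g j))) :
    ∃ j, p = g j := by
  rw [List.mem_flatMap] at hp
  obtain ⟨j, _, hj⟩ := hp
  exact ⟨j, List.eq_of_mem_replicate hj⟩

def Cset (a b σ P γ : ℝ) : Set ℝ := {x : ℝ |
      ∃ (τ θ : Fin 8 → ℝ) (lb : Fin 7 → ℝ),
        (∀ j, 0 ≤ τ j) ∧ (∀ j, 0 ≤ θ j) ∧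
        (∑ j, τ j = 1) ∧ (∑ j, θ j = 1) ∧
        (∀ j, τ j = 0 → θ j = 0) ∧
        (∑ j : Fin 7, (lb j) ^ 2 * (a ^ 2 * θ j.succ * P + τ j.succ * σ ^ 2) ≤ γ * P) ∧
        x = τ 0 * ((1 / 2) * Real.log (1 + θ 0 * P / (τ 0 * σ ^ 2)))
          + ∑ j : Fin 7, τ j.succ * ((1 / 2) * Real.log
              (1 + (θ j.succ / τ j.succ) * (P / σ ^ 2)
                * (1 + a * b * lb j) ^ 2 / (1 + b ^ 2 * (lb j) ^ 2)))}

lemma aux_term_le (a b σ P : ℝ) (hσ : 0 < σ) (hP : 0 < P) (τ θ lam : ℝ)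
    (hτ : 0 ≤ τ) (hθ : 0 ≤ θ) :
    τ * ((1 / 2) * Real.log (1 + (θ / τ) * (P / σ ^ 2)
        * (1 + a * b * lam) ^ 2 / (1 + b ^ 2 * lam ^ 2)))
      ≤ θ * (1 + a ^ 2) * P / (2 * σ ^ 2) := by
  rcases eq_or_lt_of_le hτ with h0 | h0
  · rw [← h0, zero_mul]
    positivity
  · have hden : (0:ℝ) < 1 + b ^ 2 * lam ^ 2 := by positivity
    set u := (θ / τ) * (P / σ ^ 2) * (1 + a * b * lam) ^ 2 / (1 + b ^ 2 * lam ^ 2) with hu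
    have hu0 : 0 ≤ u := by positivity
    have hlog : Real.log (1 + u) ≤ u := aux_log_le u hu0
    have hA : (0:ℝ) ≤ (θ / τ) * (P / σ ^ 2) := by positivity
    have huB : u ≤ (θ / τ) * (P / σ ^ 2) * (1 + a ^ 2) := by
      rw [hu, mul_div_assoc]
      apply mul_le_mul_of_nonneg_left _ hA
      rw [div_le_iff₀ hden]
      exact aux_gain_le_real a b lam
    calc τ * ((1 / 2) * Real.log (1 + u)) ≤ τ * ((1 / 2) * ((θ / τ) * (P / σ ^ 2) * (1 + a ^ 2)))
        := by
          apply mul_le_mul_of_nonneg_left _ (le_of_lt h0)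
          apply mul_le_mul_of_nonneg_left (le_trans hlog huB) (by norm_num)
      _ = θ * (1 + a ^ 2) * P / (2 * σ ^ 2) := by
          field_simp
  
/-- every element of Cset is at most `(1+a²)P/(2σ²)`. -/

lemma aux_Cset_le (a b σ P γ : ℝ) (hσ : 0 < σ) (hP : 0 < P) :
    ∀ x ∈ Cset a b σ P γ, x ≤ (1 + a ^ 2) * P / (2 * σ ^ 2) := by
  rintro x ⟨τ, θ, lb, hτ, hθ, hτ1, hθ1, hτθ, hcost, hx⟩
  have h0 : τ 0 * ((1 / 2) * Real.log (1 + θ 0 * P / (τ 0 * σ ^ 2)))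
      ≤ θ 0 * (1 + a ^ 2) * P / (2 * σ ^ 2) := by
    have harg : θ 0 * P / (τ 0 * σ ^ 2) = (θ 0 / τ 0) * (P / σ ^ 2)
        * (1 + a * b * 0) ^ 2 / (1 + b ^ 2 * 0 ^ 2) := by
      rw [div_mul_div_comm]
      norm_num
    rw [harg]
    exact aux_term_le a b σ P hσ hP _ _ _ (hτ 0) (hθ 0)
  have hj : ∀ j : Fin 7, τ j.succ * ((1 / 2) * Real.log
        (1 + (θ j.succ / τ j.succ) * (P / σ ^ 2)
          * (1 + a * b * lb j) ^ 2 / (1 + b ^ 2 * (lb j) ^ 2)))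
      ≤ θ j.succ * (1 + a ^ 2) * P / (2 * σ ^ 2) :=
    fun j => aux_term_le a b σ P hσ hP _ _ _ (hτ j.succ) (hθ j.succ)
  have hsum : x ≤ ∑ j : Fin 8, θ j * (1 + a ^ 2) * P / (2 * σ ^ 2) := by
    rw [hx, Fin.sum_univ_succ (fun j : Fin 8 => θ j * (1 + a ^ 2) * P / (2 * σ ^ 2))]
    exact add_le_add h0 (Finset.sum_le_sum fun j _ => hj j)
  calc x ≤ ∑ j : Fin 8, θ j * (1 + a ^ 2) * P / (2 * σ ^ 2) := hsum
    _ = (1 + a ^ 2) * P / (2 * σ ^ 2) := by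
        rw [← Finset.sum_div, ← Finset.sum_mul, ← Finset.sum_mul, hθ1, one_mul]

lemma aux_Cset_bdd (a b σ P γ : ℝ) (hσ : 0 < σ) (hP : 0 < P) :
    BddAbove (Cset a b σ P γ) :=
  ⟨_, fun x hx => aux_Cset_le a b σ P γ hσ hP x hx⟩

lemma aux_Cset_nonempty (a b σ P γ : ℝ) (hγ : 0 < γ) (hP : 0 < P) :
    ((1:ℝ) * ((1 / 2) * Real.log (1 + 1 * P / (1 * σ ^ 2)))) ∈ Cset a b σ P γ := by
  refine ⟨fun j => if j = 0 then 1 else 0, fun j => if j = 0 then 1 else 0, fun _ => 0,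
    ?_, ?_, ?_, ?_, ?_, ?_, ?_⟩
  · intro j; dsimp only; split <;> norm_num
  · intro j; dsimp only; split <;> norm_num
  · simp
  · simp
  · intro j h; dsimp only at h ⊢; split at h <;> simp_all
  · simp [le_of_lt (mul_pos hγ hP)]
  · have : ∀ j : Fin 7, (j.succ : Fin 8) ≠ 0 := fun j => Fin.succ_ne_zero j
    simp [this]

lemma aux_reindex {ι α : Type*} [Fintype ι] {k : ℕ} (hcard : Fintype.card ι ≤ k)
    (f : ι → α) (d : α) :
    ∃ g : Fin k → α, (∀ j, g j = d ∨ ∃ i, g j = f i) ∧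
      ∀ F : α → ℝ, F d = 0 → ∑ j, F (g j) = ∑ i, F (f i) := by
  set e := Fintype.equivFin ι with he
  refine ⟨fun j => if h : (j : ℕ) < Fintype.card ι then f (e.symm ⟨j, h⟩) else d, ?_, ?_⟩
  · intro j
    by_cases h : (j : ℕ) < Fintype.card ι
    · exact Or.inr ⟨e.symm ⟨j, h⟩, by dsimp only; rw [dif_pos h]⟩
    · exact Or.inl (by dsimp only; rw [dif_neg h])
  · intro F hFd
    have h1 : ∀ j : Fin k, F (if h : (j : ℕ) < Fintype.card ι then f (e.symm ⟨j, h⟩) else d)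
        = if h : (j : ℕ) < Fintype.card ι then (fun i : Fin (Fintype.card ι) => F (f (e.symm i))) ⟨j, h⟩ else 0 := by
      intro j
      by_cases h : (j : ℕ) < Fintype.card ι
      · rw [dif_pos h, dif_pos h]
      · rw [dif_neg h, dif_neg h, hFd]
    rw [Finset.sum_congr rfl fun j _ => h1 j,
      aux_sum_dite_fin hcard (fun i : Fin (Fintype.card ι) => F (f (e.symm i)))]
    exact Equiv.sum_comp e.symm fun i => F (f i)

set_option maxHeartbeats 4000000 in
lemma aux_eps (a b σ P γ : ℝ) (hσ : 0 < σ) (hP : 0 < P) (hγ : 0 < γ)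
    (ω mm tt : Fin 7 → ℝ)
    (hω0 : ∀ j, 0 ≤ ω j) (hm0 : ∀ j, 0 ≤ mm j) (hsomega : ∑ j, ω j = 1)
    (hM : ∑ j, ω j * mm j ≤ P)
    (hcost : ∑ j, ω j * ((a ^ 2 * mm j + σ ^ 2) * (tt j) ^ 2) ≤ γ * P) :
    (1 / 2) * ∑ j, ω j * Real.log (1 + mm j / σ ^ 2 * (1 + a * b * tt j) ^ 2
        / (1 + b ^ 2 * (tt j) ^ 2)) ≤ sSup (Cset a b σ P γ) := by
  set M := ∑ j, ω j * mm j with hMdef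
  have hM0 : 0 ≤ M := Finset.sum_nonneg fun j _ => mul_nonneg (hω0 j) (hm0 j)
  -- pick a heavy mode
  obtain ⟨k, hk⟩ : ∃ k : Fin 7, 1 / 7 ≤ ω k := by
    by_contra h
    push_neg at h
    have : (∑ j, ω j) < ∑ _j : Fin 7, (1/7 : ℝ) :=
      Finset.sum_lt_sum_of_nonempty ⟨0, Finset.mem_univ 0⟩ fun j _ => h j
    simp [hsomega] at this
  set R : Fin 7 → ℝ := fun j => Real.log (1 + mm j / σ ^ 2 * (1 + a * b * tt j) ^ 2
        / (1 + b ^ 2 * (tt j) ^ 2)) with hRdef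
  have hR0 : ∀ j, 0 ≤ R j := by
    intro j
    apply Real.log_nonneg
    have : 0 ≤ mm j / σ ^ 2 * (1 + a * b * tt j) ^ 2 / (1 + b ^ 2 * (tt j) ^ 2) := by
      have := hm0 j; positivity
    linarith
  -- the key: for every small ε, an element of Cset close to (1/2)∑ ω R
  have hkey : ∀ ε : ℝ, 0 < ε → ε ≤ ω k / 2 →
      (1 / 2) * ∑ j, ω j * R j - ε * R k / 2 ≤ sSup (Cset a b σ P γ) := by
    intro ε hε hεk
    have hωk : 0 < ω k := lt_of_lt_of_le (by norm_num) hk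
    have hτk : 0 < ω k - ε := by linarith
    set τ : Fin 8 → ℝ := Fin.cons ε (fun j => ω j - if j = k then ε else 0) with hτdef
    set θ : Fin 8 → ℝ := Fin.cons (1 - M / P) (fun j => ω j * mm j / P) with hθdef
    have hτ0 : τ 0 = ε := by rw [hτdef]; simp
    have hτs : ∀ j : Fin 7, τ j.succ = ω j - if j = k then ε else 0 := by
      intro j; rw [hτdef]; simp
    have hθ0 : θ 0 = 1 - M / P := by rw [hθdef]; simp
    have hθs : ∀ j : Fin 7, θ j.succ = ω j * mm j / P := by
      intro j; rw [hθdef]; simp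
    have hτnn : ∀ j, 0 ≤ τ j := by
      intro j
      induction j using Fin.cases with
      | zero => rw [hτ0]; linarith
      | succ j =>
        rw [hτs]
        by_cases hj : j = k
        · subst hj; simp; linarith
        · simp [hj]; exact hω0 j
    have hθnn : ∀ j, 0 ≤ θ j := by
      intro j
      induction j using Fin.cases with
      | zero =>
        rw [hθ0]
        have : M / P ≤ 1 := by
          rw [div_le_one hP]; exact hM
        linarith
      | succ j =>
        rw [hθs]
        have := hω0 j; have := hm0 j
        positivity
    have hτ1 : ∑ j, τ j = 1 := by
      rw [hτdef, Fin.sum_cons]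
      rw [Finset.sum_sub_distrib, Finset.sum_ite_eq' Finset.univ k (fun _ => ε)]
      simp [hsomega]
    have hθ1 : ∑ j, θ j = 1 := by
      rw [hθdef, Fin.sum_cons]
      have : ∑ j : Fin 7, ω j * mm j / P = M / P := by
        rw [← Finset.sum_div, hMdef]
      rw [this]
      field_simp
      ring
    have hτθ : ∀ j, τ j = 0 → θ j = 0 := by
      intro j
      induction j using Fin.cases with
      | zero => rw [hτ0]; intro h; exact absurd h (ne_of_gt hε)
      | succ j =>
        rw [hτs, hθs]
        by_cases hj : j = k
        · subst hj; rw [if_pos rfl]; intro h; linarith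
        · rw [if_neg hj, sub_zero]; intro h; rw [h, zero_mul, zero_div]
    have hcost' : ∑ j : Fin 7, (tt j) ^ 2 * (a ^ 2 * θ j.succ * P + τ j.succ * σ ^ 2) ≤ γ * P := by
      calc ∑ j : Fin 7, (tt j) ^ 2 * (a ^ 2 * θ j.succ * P + τ j.succ * σ ^ 2)
          ≤ ∑ j, ω j * ((a ^ 2 * mm j + σ ^ 2) * (tt j) ^ 2) := by
            apply Finset.sum_le_sum
            intro j _
            rw [hτs, hθs]
            have h1 : a ^ 2 * (ω j * mm j / P) * P = a ^ 2 * (ω j * mm j) := by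
              field_simp
            rw [h1]
            have h3 : (0:ℝ) ≤ (if j = k then ε else 0) := by positivity
            nlinarith [mul_nonneg (sq_nonneg (tt j)) (mul_nonneg h3 (sq_nonneg σ))]
        _ ≤ γ * P := hcost
    -- the element
    set v : ℝ := τ 0 * ((1 / 2) * Real.log (1 + θ 0 * P / (τ 0 * σ ^ 2)))
          + ∑ j : Fin 7, τ j.succ * ((1 / 2) * Real.log
              (1 + (θ j.succ / τ j.succ) * (P / σ ^ 2)
                * (1 + a * b * tt j) ^ 2 / (1 + b ^ 2 * (tt j) ^ 2))) with hvdef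
    have hvmem : v ∈ Cset a b σ P γ :=
      ⟨τ, θ, tt, hτnn, hθnn, hτ1, hθ1, hτθ, hcost', rfl⟩
    have hvge : (1 / 2) * ∑ j, ω j * R j - ε * R k / 2 ≤ v := by
      have hterm : ∀ j : Fin 7, ω j * R j * (1 / 2) - (if j = k then ε * R k * (1/2) else 0)
          ≤ τ j.succ * ((1 / 2) * Real.log
              (1 + (θ j.succ / τ j.succ) * (P / σ ^ 2)
                * (1 + a * b * tt j) ^ 2 / (1 + b ^ 2 * (tt j) ^ 2))) := by
        intro j
        rw [hτs, hθs]
        by_cases hj : j = k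
        · subst hj
          simp only [eq_self_iff_true, if_true]
          have hargle : 1 + mm j / σ ^ 2 * (1 + a * b * tt j) ^ 2 / (1 + b ^ 2 * (tt j) ^ 2)
              ≤ 1 + (ω j * mm j / P / (ω j - ε)) * (P / σ ^ 2)
                * (1 + a * b * tt j) ^ 2 / (1 + b ^ 2 * (tt j) ^ 2) := by
            have hAA : mm j / σ ^ 2 ≤ (ω j * mm j / P / (ω j - ε)) * (P / σ ^ 2) := by
              rw [div_div, div_mul_div_comm, div_le_div_iff₀ (by positivity) (by positivity)]
              have h9 : (0:ℝ) ≤ mm j * P * σ ^ 2 * ε :=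
                mul_nonneg (mul_nonneg (mul_nonneg (hm0 j) hP.le) (sq_nonneg σ)) hε.le
              nlinarith [h9]
            have hden : (0:ℝ) < 1 + b ^ 2 * (tt j) ^ 2 := by positivity
            have h6 : mm j / σ ^ 2 * (1 + a * b * tt j) ^ 2
                ≤ (ω j * mm j / P / (ω j - ε)) * (P / σ ^ 2) * (1 + a * b * tt j) ^ 2 :=
              mul_le_mul_of_nonneg_right hAA (sq_nonneg _)
            have h7 := (div_le_div_iff_of_pos_right hden).2 h6
            rw [div_le_div_iff₀ hden hden] at h7
            have h8 := (div_le_div_iff₀ hden hden).2 h7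
            linarith [h8]
          have hlog : R j ≤ Real.log (1 + (ω j * mm j / P / (ω j - ε)) * (P / σ ^ 2)
                * (1 + a * b * tt j) ^ 2 / (1 + b ^ 2 * (tt j) ^ 2)) := by
            rw [hRdef]
            apply Real.log_le_log _ hargle
            have := hm0 j
            positivity
          have h2 : 0 ≤ R j := hR0 j
          nlinarith [mul_le_mul_of_nonneg_left hlog (le_of_lt hτk)]
        · simp only [if_neg hj, sub_zero]
          rcases eq_or_lt_of_le (hω0 j) with h0 | h0
          · rw [← h0]; simp
          · have : ω j * mm j / P / ω j * (P / σ ^ 2) = mm j / σ ^ 2 := by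
              field_simp
            rw [this]
            have hRj : Real.log (1 + mm j / σ ^ 2 * (1 + a * b * tt j) ^ 2
                / (1 + b ^ 2 * (tt j) ^ 2)) = R j := rfl
            rw [hRj]
            exact le_of_eq (by ring)
      have hsum := Finset.sum_le_sum (fun j (_ : j ∈ Finset.univ) => hterm j)
      have hlhs : ∑ j : Fin 7, (ω j * R j * (1 / 2) - (if j = k then ε * R k * (1/2) else 0))
          = (1 / 2) * ∑ j, ω j * R j - ε * R k / 2 := by
        rw [Finset.sum_sub_distrib, Finset.sum_ite_eq' Finset.univ k (fun _ => ε * R k * (1/2)),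
          Finset.mul_sum]
        simp only [Finset.mem_univ, if_true]
        congr 1
        · exact Finset.sum_congr rfl fun x _ => by ring
        · ring
      have hmode0 : 0 ≤ τ 0 * ((1 / 2) * Real.log (1 + θ 0 * P / (τ 0 * σ ^ 2))) := by
        rw [hτ0, hθ0]
        have hMP1 : M / P ≤ 1 := by rw [div_le_one hP]; exact hM
        have harg : 0 ≤ (1 - M / P) * P / (ε * σ ^ 2) :=
          div_nonneg (mul_nonneg (by linarith) hP.le) (by positivity)
        have hlog0 := Real.log_nonneg (by linarith : (1:ℝ) ≤ 1 + (1 - M / P) * P / (ε * σ ^ 2))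
        exact mul_nonneg hε.le (by linarith)
      rw [hvdef]
      rw [hlhs] at hsum
      linarith
    exact le_trans hvge (le_csSup (aux_Cset_bdd a b σ P γ hσ hP) hvmem)
  -- conclude by letting ε → 0
  by_contra hcon
  push_neg at hcon
  set S0 := (1 / 2) * ∑ j, ω j * R j with hS0
  set δ := S0 - sSup (Cset a b σ P γ) with hδ
  have hδ0 : 0 < δ := by rw [hδ]; linarith
  have hRk : 0 ≤ R k := hR0 k
  have hωk : 0 < ω k := lt_of_lt_of_le (by norm_num) hk
  set ε := min (ω k / 2) (δ / (R k + 1)) with hεdef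
  have hε : 0 < ε := lt_min (by linarith) (by positivity)
  have hεk : ε ≤ ω k / 2 := min_le_left _ _
  have h2 := hkey ε hε hεk
  have h3 : ε * R k < δ := by
    have h4 : ε ≤ δ / (R k + 1) := min_le_right _ _
    have h5 : ε * R k ≤ (δ / (R k + 1)) * R k :=
      mul_le_mul_of_nonneg_right h4 hRk
    have h6 : (δ / (R k + 1)) * R k < δ := by
      rw [div_mul_eq_mul_div, div_lt_iff₀ (by linarith)]
      nlinarith
    linarith
  linarith

set_option maxHeartbeats 2000000 in
lemma aux_upper (a b σ P γ : ℝ) (hσ : 0 < σ) (hP : 0 < P) (hγ : 0 < γ)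
    (n : ℕ) (hn : 0 < n) (μ : Fin n → ℝ) (l : Fin n → ℂ)
    (hμ0 : ∀ i, 0 ≤ μ i) (hμs : ∑ i, μ i ≤ (n : ℝ) * P)
    (hc : ∑ i, (a ^ 2 * μ i + σ ^ 2) * ‖l i‖ ^ 2 ≤ (n : ℝ) * γ * P) :
    (1 / (2 * (n : ℝ))) * ∑ i, Real.log
        (1 + (μ i / σ ^ 2) * ‖1 + ((a * b : ℝ) : ℂ) * l i‖ ^ 2
          / (1 + b ^ 2 * ‖l i‖ ^ 2)) ≤ sSup (Cset a b σ P γ) := by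
  have hn' : (0:ℝ) < (n:ℝ) := by exact_mod_cast hn
  set t : Fin n → ℝ := fun i => if 0 ≤ a*b then ‖l i‖ else -‖l i‖ with htdef
  have ht2 : ∀ i, (t i)^2 = ‖l i‖^2 := by
    intro i; rw [htdef]; dsimp only; split_ifs
    · rfl
    · exact neg_sq _
  set q : Fin n → ℝ × ℝ × ℝ := fun i =>
    (Real.log (1 + μ i / σ ^ 2 * (1 + a * b * t i) ^ 2 / (1 + b ^ 2 * (t i) ^ 2)),
      μ i, (a ^ 2 * μ i + σ ^ 2) * (t i) ^ 2) with hqdef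
  set S : Set (ℝ × ℝ × ℝ) := {p | ∃ m s : ℝ, 0 ≤ m ∧
    p = (Real.log (1 + m / σ ^ 2 * (1 + a * b * s) ^ 2 / (1 + b ^ 2 * s ^ 2)),
      m, (a ^ 2 * m + σ ^ 2) * s ^ 2)} with hSdef
  have hq : ∀ i, q i ∈ S := fun i => ⟨μ i, t i, hμ0 i, rfl⟩
  -- step 1: realification bound
  have hreal : ∀ i, Real.log (1 + (μ i / σ ^ 2) * ‖1 + ((a * b : ℝ) : ℂ) * l i‖ ^ 2
          / (1 + b ^ 2 * ‖l i‖ ^ 2)) ≤ (q i).1 := by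
    intro i
    apply Real.log_le_log
    · have : (0:ℝ) ≤ (μ i / σ ^ 2) * ‖1 + ((a * b : ℝ) : ℂ) * l i‖ ^ 2
          / (1 + b ^ 2 * ‖l i‖ ^ 2) := by
        have := hμ0 i; positivity
      linarith
    · have hden : (0:ℝ) < 1 + b ^ 2 * ‖l i‖ ^ 2 := by positivity
      have hnum : ‖1 + ((a * b : ℝ) : ℂ) * l i‖ ^ 2 ≤ (1 + a * b * t i) ^ 2 :=
        aux_realify a b (l i)
      have h6 : (μ i / σ ^ 2) * ‖1 + ((a * b : ℝ) : ℂ) * l i‖ ^ 2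
          ≤ (μ i / σ ^ 2) * (1 + a * b * t i) ^ 2 :=
        mul_le_mul_of_nonneg_left hnum (by have := hμ0 i; positivity)
      have h7 := (div_le_div_iff_of_pos_right hden).2 h6
      calc 1 + (μ i / σ ^ 2) * ‖1 + ((a * b : ℝ) : ℂ) * l i‖ ^ 2 / (1 + b ^ 2 * ‖l i‖ ^ 2)
          ≤ 1 + (μ i / σ ^ 2) * (1 + a * b * t i) ^ 2 / (1 + b ^ 2 * ‖l i‖ ^ 2) := by linarith
        _ = 1 + μ i / σ ^ 2 * (1 + a * b * t i) ^ 2 / (1 + b ^ 2 * (t i) ^ 2) := by rw [ht2]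
  -- step 2: the average point is in the convex hull
  set p : ℝ × ℝ × ℝ := (n : ℝ)⁻¹ • ∑ i, q i with hpdef
  have hp : p ∈ convexHull ℝ S := by
    have h := Finset.centerMass_mem_convexHull (Finset.univ (α := Fin n))
      (w := fun _ => (1:ℝ)) (fun i _ => zero_le_one)
      (by rw [Finset.sum_const, Finset.card_univ, Fintype.card_fin]; simpa using hn')
      (fun i _ => hq i)
    have hcm : Finset.univ.centerMass (fun _ : Fin n => (1:ℝ)) q = p := by
      rw [Finset.centerMass, Finset.sum_const, Finset.card_univ, Fintype.card_fin]
      simp [hpdef]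
    rwa [hcm] at h
  obtain ⟨ι, hι, z, w, hzS, hzA, hwpos, hw1, hzp⟩ := eq_pos_convex_span_of_mem_convexHull hp
  letI := hι
  have hcard : Fintype.card ι ≤ 7 := by
    have h1 := hzA.card_le_finrank_succ
    have h2 : Module.finrank ℝ (vectorSpan ℝ (Set.range z)) ≤ Module.finrank ℝ (ℝ × ℝ × ℝ) :=
      Submodule.finrank_le _
    have h3 : Module.finrank ℝ (ℝ × ℝ × ℝ) = 3 := by
      simp [Module.finrank_prod, Module.finrank_self]
    omega
  have hzS' : ∀ i : ι, ∃ m s : ℝ, 0 ≤ m ∧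
      z i = (Real.log (1 + m / σ ^ 2 * (1 + a * b * s) ^ 2 / (1 + b ^ 2 * s ^ 2)),
        m, (a ^ 2 * m + σ ^ 2) * s ^ 2) := fun i => hzS ⟨i, rfl⟩
  choose mf sf hmf0 hzeq using hzS'
  obtain ⟨g, hgd, hgsum⟩ := aux_reindex hcard (fun i => (w i, mf i, sf i)) ((0:ℝ), (0:ℝ), (0:ℝ))
  set ω : Fin 7 → ℝ := fun j => (g j).1 with hωdef
  set mm : Fin 7 → ℝ := fun j => (g j).2.1 with hmmdef
  set tt : Fin 7 → ℝ := fun j => (g j).2.2 with httdef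
  have hω0 : ∀ j, 0 ≤ ω j := by
    intro j
    rcases hgd j with h | ⟨i, h⟩
    · rw [hωdef]; dsimp only; rw [h]
    · rw [hωdef]; dsimp only; rw [h]; exact (hwpos i).le
  have hmm0 : ∀ j, 0 ≤ mm j := by
    intro j
    rcases hgd j with h | ⟨i, h⟩
    · rw [hmmdef]; dsimp only; rw [h]
    · rw [hmmdef]; dsimp only; rw [h]; exact hmf0 i
  -- the four sums
  have hsum1 : ∑ j, ω j = 1 := by
    have := hgsum (fun p => p.1) rfl
    rw [hωdef]; dsimp only; rw [this]; exact hw1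
  have hsum2 : ∑ j, ω j * mm j = ∑ i, w i * mf i := by
    have := hgsum (fun p => p.1 * p.2.1) (by norm_num)
    rw [hωdef, hmmdef]; dsimp only; rw [this]
  have hsum3 : ∑ j, ω j * ((a ^ 2 * mm j + σ ^ 2) * (tt j) ^ 2)
      = ∑ i, w i * ((a ^ 2 * mf i + σ ^ 2) * (sf i) ^ 2) := by
    have := hgsum (fun p => p.1 * ((a ^ 2 * p.2.1 + σ ^ 2) * p.2.2 ^ 2)) (by norm_num)
    rw [hωdef, hmmdef, httdef]; dsimp only; rw [this]
  have hsum4 : ∑ j, ω j * Real.log (1 + mm j / σ ^ 2 * (1 + a * b * tt j) ^ 2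
        / (1 + b ^ 2 * (tt j) ^ 2))
      = ∑ i, w i * Real.log (1 + mf i / σ ^ 2 * (1 + a * b * sf i) ^ 2
        / (1 + b ^ 2 * (sf i) ^ 2)) := by
    have := hgsum (fun p => p.1 * Real.log (1 + p.2.1 / σ ^ 2 * (1 + a * b * p.2.2) ^ 2
        / (1 + b ^ 2 * p.2.2 ^ 2))) (by norm_num)
    rw [hωdef, hmmdef, httdef]; dsimp only; rw [this]
  -- coordinates of p
  have hp1 : p.1 = (n : ℝ)⁻¹ * ∑ i, (q i).1 := by
    rw [hpdef, Prod.smul_fst, smul_eq_mul, Prod.fst_sum]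
  have hp21 : p.2.1 = (n : ℝ)⁻¹ * ∑ i, μ i := by
    rw [hpdef, Prod.smul_snd, Prod.smul_fst, smul_eq_mul, Prod.snd_sum, Prod.fst_sum]
  have hp22 : p.2.2 = (n : ℝ)⁻¹ * ∑ i, (a ^ 2 * μ i + σ ^ 2) * ‖l i‖ ^ 2 := by
    rw [hpdef, Prod.smul_snd, Prod.smul_snd, smul_eq_mul, Prod.snd_sum, Prod.snd_sum]
    congr 1
    apply Finset.sum_congr rfl
    intro i _
    rw [hqdef]; dsimp only; rw [ht2]
  -- relate Carathéodory sums to p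
  have hz1 : ∑ i, w i * Real.log (1 + mf i / σ ^ 2 * (1 + a * b * sf i) ^ 2
        / (1 + b ^ 2 * (sf i) ^ 2)) = p.1 := by
    rw [← hzp, Prod.fst_sum]
    apply Finset.sum_congr rfl
    intro i _
    rw [Prod.smul_fst, smul_eq_mul, hzeq i]
  have hz21 : ∑ i, w i * mf i = p.2.1 := by
    rw [← hzp, Prod.snd_sum, Prod.fst_sum]
    apply Finset.sum_congr rfl
    intro i _
    rw [Prod.smul_snd, Prod.smul_fst, smul_eq_mul, hzeq i]
  have hz22 : ∑ i, w i * ((a ^ 2 * mf i + σ ^ 2) * (sf i) ^ 2) = p.2.2 := by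
    rw [← hzp, Prod.snd_sum, Prod.snd_sum]
    apply Finset.sum_congr rfl
    intro i _
    rw [Prod.smul_snd, Prod.smul_snd, smul_eq_mul, hzeq i]
  -- hypotheses of aux_eps
  have hM : ∑ j, ω j * mm j ≤ P := by
    rw [hsum2, hz21, hp21]
    rw [inv_mul_le_iff₀ hn']
    linarith [hμs]
  have hcost : ∑ j, ω j * ((a ^ 2 * mm j + σ ^ 2) * (tt j) ^ 2) ≤ γ * P := by
    rw [hsum3, hz22, hp22]
    rw [inv_mul_le_iff₀ hn']
    calc ∑ i, (a ^ 2 * μ i + σ ^ 2) * ‖l i‖ ^ 2 ≤ (n : ℝ) * γ * P := hc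
      _ = (n : ℝ) * (γ * P) := by ring
  have hfinal := aux_eps a b σ P γ hσ hP hγ ω mm tt hω0 hmm0 hsum1 hM hcost
  calc (1 / (2 * (n : ℝ))) * ∑ i, Real.log
        (1 + (μ i / σ ^ 2) * ‖1 + ((a * b : ℝ) : ℂ) * l i‖ ^ 2
          / (1 + b ^ 2 * ‖l i‖ ^ 2))
      ≤ (1 / (2 * (n : ℝ))) * ∑ i, (q i).1 := by
        apply mul_le_mul_of_nonneg_left (Finset.sum_le_sum fun i _ => hreal i) (by positivity)
    _ = (1 / 2) * p.1 := by
        rw [hp1]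
        field_simp
    _ = (1 / 2) * ∑ j, ω j * Real.log (1 + mm j / σ ^ 2 * (1 + a * b * tt j) ^ 2
        / (1 + b ^ 2 * (tt j) ^ 2)) := by rw [hsum4, hz1]
    _ ≤ sSup (Cset a b σ P γ) := hfinal

def Fset (a b σ P γ : ℝ) (n : ℕ) : Set ℝ := {x : ℝ | ∃ (μ : Fin n → ℝ) (l : Fin n → ℂ),
      (∀ i, 0 ≤ μ i) ∧ (∑ i, μ i ≤ (n : ℝ) * P) ∧
      (∑ i, (a ^ 2 * μ i + σ ^ 2) * ‖l i‖ ^ 2 ≤ (n : ℝ) * γ * P) ∧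
      x = (1 / (2 * (n : ℝ))) * ∑ i, Real.log
        (1 + (μ i / σ ^ 2) * ‖1 + ((a * b : ℝ) : ℂ) * l i‖ ^ 2
          / (1 + b ^ 2 * ‖l i‖ ^ 2))}

set_option maxHeartbeats 4000000 in
lemma aux_lower (a b σ P γ : ℝ) (hσ : 0 < σ) (hP : 0 < P) (hγ : 0 < γ)
    (τ θ : Fin 8 → ℝ) (lb : Fin 7 → ℝ)
    (hτ0 : ∀ j, 0 ≤ τ j) (hθ0 : ∀ j, 0 ≤ θ j)
    (hτ1 : ∑ j, τ j = 1) (hθ1 : ∑ j, θ j = 1)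
    (hτθ : ∀ j, τ j = 0 → θ j = 0)
    (hcost : ∑ j : Fin 7, (lb j) ^ 2 * (a ^ 2 * θ j.succ * P + τ j.succ * σ ^ 2) ≤ γ * P)
    (n : ℕ) (hn : 0 < n)
    (hbig : ∀ j : Fin 8, τ j ≠ 0 → 1 ≤ (n : ℝ) * τ j) :
    ∃ x ∈ Fset a b σ P γ n,
      (τ 0 * ((1 / 2) * Real.log (1 + θ 0 * P / (τ 0 * σ ^ 2)))
        + ∑ j : Fin 7, τ j.succ * ((1 / 2) * Real.log
            (1 + (θ j.succ / τ j.succ) * (P / σ ^ 2)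
              * (1 + a * b * lb j) ^ 2 / (1 + b ^ 2 * (lb j) ^ 2))))
        - (∑ j : Fin 8, Real.log (1 + (θ j / τ j) * (P / σ ^ 2)
              * (1 + a * b * (Fin.cons 0 lb : Fin 8 → ℝ) j) ^ 2
              / (1 + b ^ 2 * ((Fin.cons 0 lb : Fin 8 → ℝ) j) ^ 2))) / (2 * (n : ℝ)) ≤ x := by
  have hn' : (0:ℝ) < (n:ℝ) := by exact_mod_cast hn
  set L : Fin 8 → ℝ := Fin.cons 0 lb with hLdef
  set Lg : Fin 8 → ℝ := fun j => Real.log (1 + (θ j / τ j) * (P / σ ^ 2)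
      * (1 + a * b * L j) ^ 2 / (1 + b ^ 2 * (L j) ^ 2)) with hLgdef
  have hLg0 : ∀ j, 0 ≤ Lg j := by
    intro j
    apply Real.log_nonneg
    have h1 : 0 ≤ (θ j / τ j) * (P / σ ^ 2) * (1 + a * b * L j) ^ 2 / (1 + b ^ 2 * (L j) ^ 2) := by
      have := hθ0 j; have := hτ0 j; positivity
    linarith
  set nj : Fin 8 → ℕ := fun j => ⌊(n : ℝ) * τ j⌋₊ with hnjdef
  have hnjle : ∀ j, (nj j : ℝ) ≤ (n : ℝ) * τ j := by
    intro j; exact Nat.floor_le (by have := hτ0 j; positivity)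
  have hnjge : ∀ j, (n : ℝ) * τ j - 1 ≤ (nj j : ℝ) := by
    intro j
    have := Nat.lt_floor_add_one ((n : ℝ) * τ j)
    push_cast at this ⊢
    linarith
  have hnjpos : ∀ j, τ j ≠ 0 → 1 ≤ nj j := by
    intro j hj
    exact Nat.le_floor (by exact_mod_cast hbig j hj)
  have hnj0 : ∀ j, τ j = 0 → nj j = 0 := by
    intro j hj
    rw [hnjdef]; dsimp only; rw [hj, mul_zero, Nat.floor_zero]
  set mu : Fin 8 → ℝ := fun j => if nj j = 0 then 0 else θ j * n * P / nj j with hmudef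
  have hmu0 : ∀ j, 0 ≤ mu j := by
    intro j; rw [hmudef]; dsimp only
    split_ifs with h
    · exact le_refl 0
    · have := hθ0 j; positivity
  set Lst : List (ℝ × ℝ) := (List.finRange 8).flatMap
    (fun j => List.replicate (nj j) (mu j, L j)) with hLstdef
  have hlen : Lst.length = ∑ j : Fin 8, nj j :=
    aux_len_flatMap_replicate nj (fun j => (mu j, L j))
  have hlenle : Lst.length ≤ n := by
    have hreal : (Lst.length : ℝ) ≤ (n : ℝ) := by
      rw [hlen]
      push_cast
      calc ∑ j : Fin 8, (nj j : ℝ) ≤ ∑ j : Fin 8, (n : ℝ) * τ j :=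
            Finset.sum_le_sum fun j _ => hnjle j
        _ = (n:ℝ) := by rw [← Finset.mul_sum, hτ1, mul_one]
    exact_mod_cast hreal
  set μi : Fin n → ℝ := fun i => (Lst.getD i (0, 0)).1 with hμidef
  set li : Fin n → ℂ := fun i => (((Lst.getD i (0, 0)).2 : ℝ) : ℂ) with hlidef
  have hmem : ∀ i : Fin n, (Lst.getD i (0,0)) = (0,0) ∨ ∃ j, (Lst.getD i (0,0)) = (mu j, L j) := by
    intro i
    by_cases h : (i : ℕ) < Lst.length
    · right
      rw [List.getD_eq_getElem?_getD, List.getElem?_eq_getElem h, Option.getD_some]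
      exact aux_mem_flatMap_replicate (List.getElem_mem h)
    · left
      exact List.getD_eq_default _ _ (le_of_not_gt h)
  have hμi0 : ∀ i, 0 ≤ μi i := by
    intro i
    rw [hμidef]; dsimp only
    rcases hmem i with h | ⟨j, h⟩
    · rw [h]
    · rw [h]; exact hmu0 j
  have key : ∀ G : ℝ × ℝ → ℝ, G (0,0) = 0 →
      ∑ i : Fin n, G (Lst.getD i (0,0)) = ∑ j : Fin 8, (nj j : ℝ) * G (mu j, L j) := by
    intro G hG
    rw [aux_sum_fin_getD G (0,0) Lst n hlenle, hLstdef, aux_sum_flatMap_replicate, hG,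
      mul_zero, add_zero]
  -- source power
  have hμsum : ∑ i, μi i = (n : ℝ) * P := by
    calc ∑ i, μi i = ∑ i : Fin n, Prod.fst (Lst.getD i (0,0)) := rfl
      _ = ∑ j : Fin 8, (nj j : ℝ) * mu j := key Prod.fst rfl
      _ = ∑ j : Fin 8, θ j * ((n:ℝ) * P) := by
          apply Finset.sum_congr rfl
          intro j _
          rw [hmudef]; dsimp only
          by_cases hj : nj j = 0
          · rw [if_pos hj]
            have hθj : θ j = 0 := by
              by_cases hτj : τ j = 0
              · exact hτθ j hτj
              · exact absurd hj (by have := hnjpos j hτj; omega)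
            rw [hθj, mul_zero, zero_mul]
          · rw [if_neg hj]
            have : (nj j : ℝ) ≠ 0 := Nat.cast_ne_zero.2 hj
            field_simp
      _ = (n : ℝ) * P := by rw [← Finset.sum_mul, hθ1, one_mul]
  -- squared norms of relay gains
  have hnorm2 : ∀ i, ‖li i‖^2 = ((Lst.getD i (0,0)).2)^2 := by
    intro i; rw [hlidef]; dsimp only
    rw [Complex.norm_real, Real.norm_eq_abs, sq_abs]
  -- relay power
  have hcostsum : ∑ i, (a^2 * μi i + σ^2) * ‖li i‖^2 ≤ (n:ℝ) * γ * P := by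
    set G2 : ℝ×ℝ → ℝ := fun p => (a^2*p.1+σ^2)*p.2^2 with hG2def
    have h0 : ∑ i, (a^2*μi i + σ^2) * ‖li i‖^2
        = ∑ i : Fin n, G2 (Lst.getD i (0,0)) := by
      apply Finset.sum_congr rfl
      intro i _
      rw [hnorm2 i]
    have hG20 : G2 ((0:ℝ),(0:ℝ)) = 0 := by rw [hG2def]; norm_num
    rw [h0, key G2 hG20]
    have hG2eq : ∀ j, G2 (mu j, L j) = (a^2*mu j+σ^2)*(L j)^2 := fun j => rfl
    rw [Finset.sum_congr rfl fun j _ => by rw [hG2eq j]]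
    have hle : ∀ j, (nj j:ℝ) * ((a^2*mu j+σ^2)*(L j)^2)
        ≤ (n:ℝ) * ((a^2*θ j*P + τ j*σ^2)*(L j)^2) := by
      intro j
      rw [hmudef]; dsimp only
      by_cases hj : nj j = 0
      · rw [if_pos hj, hj]
        have h1 := hθ0 j; have h2 := hτ0 j
        simp only [Nat.cast_zero, zero_mul]
        positivity
      · rw [if_neg hj]
        have hnjne : (nj j : ℝ) ≠ 0 := Nat.cast_ne_zero.2 hj
        have hnjpos' : (0:ℝ) < (nj j : ℝ) := by
          rcases Nat.pos_of_ne_zero hj with h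
          exact_mod_cast h
        have heq : (nj j:ℝ) * ((a^2*(θ j * n * P / nj j)+σ^2)*(L j)^2)
            = (a^2*θ j*(n:ℝ)*P + (nj j:ℝ)*σ^2)*(L j)^2 := by
          field_simp
        rw [heq]
        have h3 : (a^2*θ j*(n:ℝ)*P + (nj j:ℝ)*σ^2) ≤ (a^2*θ j*(n:ℝ)*P + (n:ℝ)*τ j*σ^2) := by
          have := hnjle j
          nlinarith [sq_nonneg σ]
        calc (a^2*θ j*(n:ℝ)*P + (nj j:ℝ)*σ^2)*(L j)^2
            ≤ (a^2*θ j*(n:ℝ)*P + (n:ℝ)*τ j*σ^2)*(L j)^2 :=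
              mul_le_mul_of_nonneg_right h3 (sq_nonneg _)
          _ = (n:ℝ) * ((a^2*θ j*P + τ j*σ^2)*(L j)^2) := by ring
    calc ∑ j : Fin 8, (nj j:ℝ) * ((a^2*mu j+σ^2)*(L j)^2)
        ≤ ∑ j : Fin 8, (n:ℝ) * ((a^2*θ j*P + τ j*σ^2)*(L j)^2) := Finset.sum_le_sum fun j _ => hle j
      _ = (n:ℝ) * ∑ j : Fin 8, (a^2*θ j*P + τ j*σ^2)*(L j)^2 := by rw [Finset.mul_sum]
      _ ≤ (n:ℝ) * (γ * P) := by
          apply mul_le_mul_of_nonneg_left _ hn'.le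
          have hsplit : ∑ j : Fin 8, (a^2*θ j*P + τ j*σ^2)*(L j)^2
              = (a^2*θ 0*P + τ 0*σ^2)*(L 0)^2
                + ∑ j : Fin 7, (a^2*θ j.succ*P + τ j.succ*σ^2)*(L j.succ)^2 :=
            Fin.sum_univ_succ _
          rw [hsplit]
          have hL0 : L 0 = 0 := by rw [hLdef]; exact Fin.cons_zero _ _
          have hLs : ∀ j : Fin 7, L j.succ = lb j := by
            intro j; rw [hLdef]; exact Fin.cons_succ _ _ _
          rw [hL0]
          have : ∑ j : Fin 7, (a^2*θ j.succ*P + τ j.succ*σ^2)*(L j.succ)^2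
              = ∑ j : Fin 7, (lb j)^2 * (a^2*θ j.succ*P + τ j.succ*σ^2) := by
            apply Finset.sum_congr rfl
            intro j _
            rw [hLs j]; ring
          rw [this]
          simpa using hcost
      _ = (n:ℝ) * γ * P := by ring
  -- rate
  set G3 : ℝ×ℝ → ℝ := fun p => Real.log (1 + p.1/σ^2*(1+a*b*p.2)^2/(1+b^2*p.2^2)) with hG3def
  have hG30 : G3 (0,0) = 0 := by
    rw [hG3def]; dsimp only
    norm_num
  have hrate : ∀ i, Real.log (1 + (μi i/σ^2) * ‖1+((a*b:ℝ):ℂ)*li i‖^2/(1+b^2*‖li i‖^2))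
      = G3 (Lst.getD i (0,0)) := by
    intro i
    rw [hG3def]; dsimp only
    have hcast : 1+((a*b:ℝ):ℂ)*li i = ((1 + a*b*((Lst.getD i (0,0)).2) : ℝ) : ℂ) := by
      rw [hlidef]; dsimp only
      push_cast
      ring
    rw [hcast, Complex.norm_real, Real.norm_eq_abs, sq_abs, hnorm2 i]
  have hratele : ∀ j, ((n:ℝ)*τ j - 1) * Lg j ≤ (nj j:ℝ) * G3 (mu j, L j) := by
    intro j
    by_cases hτj : τ j = 0
    · have hnj : nj j = 0 := hnj0 j hτj
      rw [hτj, hnj]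
      simp only [mul_zero, Nat.cast_zero, zero_mul, zero_sub]
      have := hLg0 j
      linarith
    · have hτjpos : 0 < τ j := lt_of_le_of_ne (hτ0 j) (Ne.symm hτj)
      have hnjp : 1 ≤ nj j := hnjpos j hτj
      have hnjne : (nj j : ℝ) ≠ 0 := Nat.cast_ne_zero.2 (by omega)
      have hnjposR : (0:ℝ) < (nj j:ℝ) := by exact_mod_cast Nat.lt_of_lt_of_le Nat.zero_lt_one hnjp
      have hmuj : mu j = θ j * n * P / nj j := by
        rw [hmudef]; dsimp only; rw [if_neg (by omega)]
      have hAB : (θ j / τ j) * (P / σ^2) ≤ mu j / σ^2 := by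
        rw [hmuj, div_mul_div_comm, div_div, div_le_div_iff₀ (by positivity) (by positivity)]
        have h1 := hnjle j
        have h2 := hθ0 j
        nlinarith [mul_le_mul_of_nonneg_left h1 (mul_nonneg (mul_nonneg h2 hP.le) (sq_nonneg σ))]
      have harg : (θ j / τ j) * (P / σ^2) * (1+a*b*L j)^2 / (1+b^2*(L j)^2)
          ≤ mu j / σ^2 * (1+a*b*L j)^2 / (1+b^2*(L j)^2) := by
        have hden : (0:ℝ) < 1+b^2*(L j)^2 := by positivity
        have h6 : (θ j / τ j) * (P / σ^2) * (1+a*b*L j)^2 ≤ mu j / σ^2 * (1+a*b*L j)^2 :=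
          mul_le_mul_of_nonneg_right hAB (sq_nonneg _)
        exact (div_le_div_iff_of_pos_right hden).2 h6
      have hlog : Lg j ≤ G3 (mu j, L j) := by
        rw [hLgdef, hG3def]; dsimp only
        apply Real.log_le_log _ (by linarith)
        have h1 := hθ0 j
        positivity
      have hLgj := hLg0 j
      calc ((n:ℝ)*τ j - 1) * Lg j ≤ (nj j:ℝ) * Lg j :=
            mul_le_mul_of_nonneg_right (hnjge j) hLgj
        _ ≤ (nj j:ℝ) * G3 (mu j, L j) := mul_le_mul_of_nonneg_left hlog hnjposR.le
  -- combine
  refine ⟨(1 / (2 * (n : ℝ))) * ∑ i, Real.log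
        (1 + (μi i / σ ^ 2) * ‖1 + ((a * b : ℝ) : ℂ) * li i‖ ^ 2
          / (1 + b ^ 2 * ‖li i‖ ^ 2)),
    ⟨μi, li, hμi0, le_of_eq hμsum, hcostsum, rfl⟩, ?_⟩
  have hsum3 : ∑ i, Real.log (1 + (μi i / σ ^ 2) * ‖1 + ((a * b : ℝ) : ℂ) * li i‖ ^ 2
          / (1 + b ^ 2 * ‖li i‖ ^ 2)) = ∑ j : Fin 8, (nj j:ℝ) * G3 (mu j, L j) := by
    rw [Finset.sum_congr rfl fun i _ => hrate i, key G3 hG30]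
  have hSrate : (n:ℝ) * (∑ j : Fin 8, τ j * Lg j) - (∑ j : Fin 8, Lg j)
      ≤ ∑ j : Fin 8, (nj j:ℝ) * G3 (mu j, L j) := by
    have h1 : ∀ j : Fin 8, (n:ℝ)*(τ j * Lg j) - Lg j = ((n:ℝ)*τ j - 1) * Lg j := by
      intro j; ring
    calc (n:ℝ) * (∑ j : Fin 8, τ j * Lg j) - (∑ j : Fin 8, Lg j)
        = ∑ j : Fin 8, ((n:ℝ)*τ j - 1) * Lg j := by
          rw [Finset.mul_sum, ← Finset.sum_sub_distrib]
          exact Finset.sum_congr rfl fun j _ => h1 j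
      _ ≤ ∑ j : Fin 8, (nj j:ℝ) * G3 (mu j, L j) := Finset.sum_le_sum fun j _ => hratele j
  have hV : τ 0 * ((1 / 2) * Real.log (1 + θ 0 * P / (τ 0 * σ ^ 2)))
        + ∑ j : Fin 7, τ j.succ * ((1 / 2) * Real.log
            (1 + (θ j.succ / τ j.succ) * (P / σ ^ 2)
              * (1 + a * b * lb j) ^ 2 / (1 + b ^ 2 * (lb j) ^ 2)))
      = ∑ j : Fin 8, τ j * ((1/2) * Lg j) := by
    have hL0 : L 0 = 0 := by rw [hLdef]; exact Fin.cons_zero _ _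
    have hLs : ∀ j : Fin 7, L j.succ = lb j := by
      intro j; rw [hLdef]; exact Fin.cons_succ _ _ _
    have hLg0eq : Lg 0 = Real.log (1 + θ 0 * P / (τ 0 * σ ^ 2)) := by
      simp only [hLgdef, hL0]
      norm_num [div_mul_div_comm]
    have hLgseq : ∀ j : Fin 7, Lg j.succ = Real.log
        (1 + (θ j.succ / τ j.succ) * (P / σ ^ 2)
          * (1 + a * b * lb j) ^ 2 / (1 + b ^ 2 * (lb j) ^ 2)) := by
      intro j
      simp only [hLgdef, hLs j]
    rw [Fin.sum_univ_succ (fun j : Fin 8 => τ j * ((1/2) * Lg j)), hLg0eq]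
    congr 1
  rw [hV, hsum3]
  have hfact : ∑ j : Fin 8, τ j * ((1/2) * Lg j) = (1/2) * ∑ j : Fin 8, τ j * Lg j := by
    rw [Finset.mul_sum]
    exact Finset.sum_congr rfl fun j _ => by ring
  rw [hfact]
  have hmono := mul_le_mul_of_nonneg_left hSrate (by positivity : (0:ℝ) ≤ 1 / (2 * (n:ℝ)))
  have heq : (1 / (2 * (n:ℝ))) * ((n:ℝ) * (∑ j : Fin 8, τ j * Lg j) - (∑ j : Fin 8, Lg j))
      = (1/2) * (∑ j : Fin 8, τ j * Lg j) - (∑ j : Fin 8, Lg j) / (2 * (n:ℝ)) := by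
    field_simp
  -- the CL in the statement is ∑ Lg
  have hCL : (∑ j : Fin 8, Real.log (1 + (θ j / τ j) * (P / σ ^ 2)
              * (1 + a * b * L j) ^ 2
              / (1 + b ^ 2 * (L j) ^ 2))) = ∑ j : Fin 8, Lg j := rfl
  rw [hCL]
  linarith [hmono, heq.symm.le, heq.le]

lemma aux_Fset_le (a b σ P γ : ℝ) (hσ : 0 < σ) (hP : 0 < P) (n : ℕ) (hn : 0 < n) :
    ∀ x ∈ Fset a b σ P γ n, x ≤ (1 + a ^ 2) * P / (2 * σ ^ 2) := by
  rintro x ⟨μ, l, hμ0, hμs, hc, rfl⟩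
  have hn' : (0:ℝ) < (n:ℝ) := by exact_mod_cast hn
  have hterm : ∀ i, Real.log (1 + (μ i / σ ^ 2) * ‖1 + ((a * b : ℝ) : ℂ) * l i‖ ^ 2
      / (1 + b ^ 2 * ‖l i‖ ^ 2)) ≤ μ i * (1 + a ^ 2) / σ ^ 2 := by
    intro i
    have hden : (0:ℝ) < 1 + b ^ 2 * ‖l i‖ ^ 2 := by positivity
    have hA : 0 ≤ (μ i / σ ^ 2) * ‖1 + ((a * b : ℝ) : ℂ) * l i‖ ^ 2 / (1 + b ^ 2 * ‖l i‖ ^ 2) := by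
      have := hμ0 i; positivity
    have h1 := aux_log_le _ hA
    have h2 : (μ i / σ ^ 2) * ‖1 + ((a * b : ℝ) : ℂ) * l i‖ ^ 2 / (1 + b ^ 2 * ‖l i‖ ^ 2)
        ≤ μ i * (1 + a ^ 2) / σ ^ 2 := by
      have h3 : (μ i / σ ^ 2) * ‖1 + ((a * b : ℝ) : ℂ) * l i‖ ^ 2
          ≤ (μ i / σ ^ 2) * ((1 + a ^ 2) * (1 + b ^ 2 * ‖l i‖ ^ 2)) :=
        mul_le_mul_of_nonneg_left (aux_gain_le a b (l i)) (by have := hμ0 i; positivity)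
      have h4 := (div_le_div_iff_of_pos_right hden).2 h3
      have h5 : (μ i / σ ^ 2) * ((1 + a ^ 2) * (1 + b ^ 2 * ‖l i‖ ^ 2)) / (1 + b ^ 2 * ‖l i‖ ^ 2)
          = μ i * (1 + a ^ 2) / σ ^ 2 := by
        field_simp
      rw [h5] at h4
      exact h4
    linarith
  have hsum : ∑ i, Real.log (1 + (μ i / σ ^ 2) * ‖1 + ((a * b : ℝ) : ℂ) * l i‖ ^ 2
      / (1 + b ^ 2 * ‖l i‖ ^ 2)) ≤ (n:ℝ) * P * (1 + a ^ 2) / σ ^ 2 := by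
    calc ∑ i, Real.log (1 + (μ i / σ ^ 2) * ‖1 + ((a * b : ℝ) : ℂ) * l i‖ ^ 2
        / (1 + b ^ 2 * ‖l i‖ ^ 2)) ≤ ∑ i, μ i * (1 + a ^ 2) / σ ^ 2 :=
          Finset.sum_le_sum fun i _ => hterm i
      _ = (∑ i, μ i) * (1 + a ^ 2) / σ ^ 2 := by
          rw [Finset.sum_mul, Finset.sum_div]
      _ ≤ (n:ℝ) * P * (1 + a ^ 2) / σ ^ 2 := by
          apply div_le_div_of_nonneg_right _ (by positivity)
          · exact mul_le_mul_of_nonneg_right hμs (by positivity)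
  calc (1 / (2 * (n : ℝ))) * ∑ i, Real.log (1 + (μ i / σ ^ 2)
        * ‖1 + ((a * b : ℝ) : ℂ) * l i‖ ^ 2 / (1 + b ^ 2 * ‖l i‖ ^ 2))
      ≤ (1 / (2 * (n : ℝ))) * ((n:ℝ) * P * (1 + a ^ 2) / σ ^ 2) :=
        mul_le_mul_of_nonneg_left hsum (by positivity)
    _ = (1 + a ^ 2) * P / (2 * σ ^ 2) := by
        field_simp

lemma aux_Fset_bdd (a b σ P γ : ℝ) (hσ : 0 < σ) (hP : 0 < P) (n : ℕ) (hn : 0 < n) :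
    BddAbove (Fset a b σ P γ n) :=
  ⟨_, fun x hx => aux_Fset_le a b σ P γ hσ hP n hn x hx⟩

lemma aux_Fset_zero (a b σ P γ : ℝ) (hσ : 0 < σ) (hP : 0 < P) (hγ : 0 < γ) (n : ℕ) :
    (0:ℝ) ∈ Fset a b σ P γ n := by
  refine ⟨fun _ => 0, fun _ => 0, fun _ => le_refl 0, ?_, ?_, ?_⟩
  · simp; positivity
  · simp; positivity
  · simp

set_option maxHeartbeats 1000000 in
/-- Corollary 1: for real channel coefficients with `ab ≠ 0`, the maximum `n`-bin
LTI relaying rate `Fₙ` converges to the 8-mode expression `C₈` with real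
instantaneous amplify-and-forward gains. -/
theorem lti_capacity_eight_modes (a b : ℝ) (hab : a * b ≠ 0) (σ P γ : ℝ)
    (hσ : 0 < σ) (hP : 0 < P) (hγ : 0 < γ) (F : ℕ → ℝ)
    (hF : ∀ n : ℕ, 0 < n → F n = sSup {x : ℝ | ∃ (μ : Fin n → ℝ) (l : Fin n → ℂ),
      (∀ i, 0 ≤ μ i) ∧ (∑ i, μ i ≤ (n : ℝ) * P) ∧
      (∑ i, (a ^ 2 * μ i + σ ^ 2) * ‖l i‖ ^ 2 ≤ (n : ℝ) * γ * P) ∧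
      x = (1 / (2 * (n : ℝ))) * ∑ i, Real.log
        (1 + (μ i / σ ^ 2) * ‖1 + ((a * b : ℝ) : ℂ) * l i‖ ^ 2
          / (1 + b ^ 2 * ‖l i‖ ^ 2))}) :
    Tendsto F atTop (nhds (sSup {x : ℝ |
      ∃ (τ θ : Fin 8 → ℝ) (lb : Fin 7 → ℝ),
        (∀ j, 0 ≤ τ j) ∧ (∀ j, 0 ≤ θ j) ∧
        (∑ j, τ j = 1) ∧ (∑ j, θ j = 1) ∧
        (∀ j, τ j = 0 → θ j = 0) ∧
        (∑ j : Fin 7, (lb j) ^ 2 * (a ^ 2 * θ j.succ * P + τ j.succ * σ ^ 2) ≤ γ * P) ∧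
        x = τ 0 * ((1 / 2) * Real.log (1 + θ 0 * P / (τ 0 * σ ^ 2)))
          + ∑ j : Fin 7, τ j.succ * ((1 / 2) * Real.log
              (1 + (θ j.succ / τ j.succ) * (P / σ ^ 2)
                * (1 + a * b * lb j) ^ 2 / (1 + b ^ 2 * (lb j) ^ 2)))})) := by
  show Tendsto F atTop (nhds (sSup (Cset a b σ P γ)))
  have hne : (Cset a b σ P γ).Nonempty := ⟨_, aux_Cset_nonempty a b σ P γ hγ hP⟩
  have hFle : ∀ n : ℕ, 0 < n → F n ≤ sSup (Cset a b σ P γ) := by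
    intro n hn
    rw [hF n hn]
    apply csSup_le ⟨0, aux_Fset_zero a b σ P γ hσ hP hγ n⟩
    rintro x ⟨μ, l, h1, h2, h3, rfl⟩
    exact aux_upper a b σ P γ hσ hP hγ n hn μ l h1 h2 h3
  rw [Metric.tendsto_atTop]
  intro ε hε
  obtain ⟨v, hv, hvgt⟩ := exists_lt_of_lt_csSup hne
    (by linarith : sSup (Cset a b σ P γ) - ε/2 < sSup (Cset a b σ P γ))
  obtain ⟨τ, θ, lb, hτ0, hθ0, hτ1, hθ1, hτθ, hcostv, hveq⟩ := hv
  set CL := ∑ j : Fin 8, Real.log (1 + (θ j / τ j) * (P / σ ^ 2)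
              * (1 + a * b * (Fin.cons 0 lb : Fin 8 → ℝ) j) ^ 2
              / (1 + b ^ 2 * ((Fin.cons 0 lb : Fin 8 → ℝ) j) ^ 2)) with hCLdef
  have hCL0 : 0 ≤ CL := by
    rw [hCLdef]
    apply Finset.sum_nonneg
    intro j _
    apply Real.log_nonneg
    have h2 : 0 ≤ θ j / τ j := div_nonneg (hθ0 j) (hτ0 j)
    have h3 : 0 ≤ (θ j / τ j) * (P / σ ^ 2)
        * (1 + a * b * (Fin.cons 0 lb : Fin 8 → ℝ) j) ^ 2
        / (1 + b ^ 2 * ((Fin.cons 0 lb : Fin 8 → ℝ) j) ^ 2) := by positivity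
    linarith
  have hev1 : ∀ᶠ n : ℕ in atTop, ∀ j : Fin 8, τ j ≠ 0 → 1 ≤ (n:ℝ) * τ j := by
    rw [Filter.eventually_all]
    intro j
    by_cases hj : τ j = 0
    · filter_upwards with n hn
      exact absurd hj hn
    · have hτp : 0 < τ j := lt_of_le_of_ne (hτ0 j) (Ne.symm hj)
      filter_upwards [Filter.eventually_ge_atTop ⌈(τ j)⁻¹⌉₊] with n hn _
      have h1 : (τ j)⁻¹ ≤ (n:ℝ) := le_trans (Nat.le_ceil _) (by exact_mod_cast hn)
      calc (1:ℝ) = (τ j)⁻¹ * τ j := (inv_mul_cancel₀ hj).symm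
        _ ≤ (n:ℝ) * τ j := mul_le_mul_of_nonneg_right h1 (hτ0 j)
  obtain ⟨N1, hN1⟩ := Filter.eventually_atTop.1 hev1
  refine ⟨max (max N1 1) ⌈CL/ε⌉₊, ?_⟩
  intro n hn
  have hnN1 : N1 ≤ n := le_trans (le_trans (le_max_left _ _) (le_max_left _ _)) hn
  have hn1 : 1 ≤ n := le_trans (le_trans (le_max_right _ _) (le_max_left _ _)) hn
  have hn2 : ⌈CL/ε⌉₊ ≤ n := le_trans (le_max_right _ _) hn
  have hnpos : 0 < n := hn1
  have hn' : (0:ℝ) < (n:ℝ) := by exact_mod_cast hnpos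
  obtain ⟨x, hxmem, hxge⟩ := aux_lower a b σ P γ hσ hP hγ τ θ lb hτ0 hθ0 hτ1 hθ1 hτθ hcostv
    n hnpos (hN1 n hnN1)
  have hFx : x ≤ F n := by
    rw [hF n hnpos]
    exact le_csSup (aux_Fset_bdd a b σ P γ hσ hP n hnpos) hxmem
  have hCLn : CL / (2*(n:ℝ)) ≤ ε/2 := by
    rw [div_le_iff₀ (by positivity)]
    have h7 : CL/ε ≤ (n:ℝ) := le_trans (Nat.le_ceil _) (by exact_mod_cast hn2)
    calc CL = (CL/ε)*ε := by field_simp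
      _ ≤ (n:ℝ) * ε := mul_le_mul_of_nonneg_right h7 hε.le
      _ = ε/2 * (2*(n:ℝ)) := by ring
  rw [← hveq, ← hCLdef] at hxge
  have h6 : F n ≤ sSup (Cset a b σ P γ) := hFle n hnpos
  rw [Real.dist_eq, abs_lt]
  constructor <;> linarith
end

section
/- Fix real numbers a, b with ab ≠ 0 and σ > 0, P > 0, γ > 0, and let 𝒞(x) := (1/2)log(1+x). Define C₅₀ := sup over τ, θ ∈ ℝ^{50}_{≥0} (indexed j = 0,…,49), λ̄ ∈ ℂ^{49} with Σ_{j=0}^{49} τ_j = 1, Σ_{j=0}^{49} θ_j = 1, θ_j = 0 whenever τ_j = 0, and Σ_{j=1}^{49} |λ̄_j|²(a²θ_j P + τ_j σ²) ≤ γP, of τ₀·𝒞(θ₀P/(τ₀σ²)) + Σ_{j=1}^{49} τ_j·𝒞((θ_j/τ_j)·(P/σ²)·|1+abλ̄_j|²/(1+b²|λ̄_j|²)) (terms with τ_j = 0 taken as 0). Define C₈ analogously as the sup over τ, θ ∈ ℝ^{8}_{≥0} (indexed j = 0,…,7), λ̄ ∈ ℝ^{7} with Σ_{j=0}^{7} τ_j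 = 1, Σ_{j=0}^{7} θ_j = 1, θ_j = 0 whenever τ_j = 0, and Σ_{j=1}^{7} λ̄_j²(a²θ_j P + τ_j σ²) ≤ γP, of τ₀·𝒞(θ₀P/(τ₀σ²)) + Σ_{j=1}^{7} τ_j·𝒞((θ_j/τ_j)·(P/σ²)·(1+abλ̄_j)²/(1+b²λ̄_j²)). Then C₅₀ = C₈. -/
open Finset

lemma sum_extend {M : Type*} [AddCommMonoid M] {n m : ℕ} (h : n ≤ m) (g : Fin n → M) :
    ∑ k : Fin m, (if hk : (k : ℕ) < n then g ⟨k, hk⟩ else 0) = ∑ i : Fin n, g i := by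
  have F := fun k : ℕ => if hk : k < n then g ⟨k, hk⟩ else 0
  rw [Fin.sum_univ_eq_sum_range (fun k => if hk : k < n then g ⟨k, hk⟩ else 0) m,
    ← Finset.sum_subset (Finset.range_subset_range.2 h)
      (fun x _ hx => dif_neg (by simpa using hx)),
    ← Fin.sum_univ_eq_sum_range (fun k => if hk : k < n then g ⟨k, hk⟩ else 0) n]
  exact Finset.sum_congr rfl fun i _ => by rw [dif_pos i.2]

lemma exists_real_gain (c b : ℝ) (l : ℂ) :
    ∃ t : ℝ, t ^ 2 ≤ ‖l‖ ^ 2 ∧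
      (1 + c * t) ^ 2 / (1 + b ^ 2 * t ^ 2) = ‖1 + (c : ℂ) * l‖ ^ 2 / (1 + b ^ 2 * ‖l‖ ^ 2) := by
  set r := ‖l‖ with hr
  have hr0 : 0 ≤ r := norm_nonneg l
  have hre : |l.re| ≤ r := Complex.abs_re_le_norm l
  have hnorm : ‖1 + (c : ℂ) * l‖ ^ 2 = 1 + 2 * c * l.re + c ^ 2 * r ^ 2 := by
    have h1 : ‖1 + (c : ℂ) * l‖ ^ 2 = Complex.normSq (1 + (c : ℂ) * l) := by
      rw [← Complex.sq_norm]
    have h2 : r ^ 2 = Complex.normSq l := by rw [← Complex.sq_norm]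
    rw [h1, h2, Complex.normSq_apply, Complex.normSq_apply]
    simp [Complex.add_re, Complex.add_im, Complex.mul_re, Complex.mul_im]
    ring
  set f : ℝ → ℝ := fun t => (1 + c * t) ^ 2 / (1 + b ^ 2 * t ^ 2) with hf
  have hden : ∀ t : ℝ, (0:ℝ) < 1 + b ^ 2 * t ^ 2 := by
    intro t; positivity
  have hcont : ContinuousOn f (Set.uIcc (-r) r) := by
    apply ContinuousOn.div
    · fun_prop
    · fun_prop
    · intro t _; exact (hden t).ne'
  set v : ℝ := ‖1 + (c : ℂ) * l‖ ^ 2 / (1 + b ^ 2 * r ^ 2) with hv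
  have hmem : v ∈ Set.uIcc (f (-r)) (f r) := by
    have hfr : f r = (1 + 2 * c * r + c ^ 2 * r ^ 2) / (1 + b ^ 2 * r ^ 2) := by
      simp only [hf]; ring_nf
    have hfnr : f (-r) = (1 - 2 * c * r + c ^ 2 * r ^ 2) / (1 + b ^ 2 * r ^ 2) := by
      simp only [hf]; ring_nf
    have hvv : v = (1 + 2 * c * l.re + c ^ 2 * r ^ 2) / (1 + b ^ 2 * r ^ 2) := by
      rw [hv, hnorm]
    have key : ∀ N M : ℝ, N ≤ M → N / (1 + b ^ 2 * r ^ 2) ≤ M / (1 + b ^ 2 * r ^ 2) :=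
      fun N M h => by gcongr
    have hre' := abs_le.1 hre
    rw [Set.mem_uIcc, hfr, hfnr, hvv]
    rcases le_total c 0 with hc | hc
    · right
      exact ⟨key _ _ (by nlinarith), key _ _ (by nlinarith)⟩
    · left
      exact ⟨key _ _ (by nlinarith), key _ _ (by nlinarith)⟩
  obtain ⟨t, ht, hft⟩ := intermediate_value_uIcc hcont hmem
  refine ⟨t, ?_, hft⟩
  rw [Set.uIcc_of_le (by linarith)] at ht
  have := abs_le.2 ⟨ht.1, ht.2⟩
  calc t ^ 2 = |t| ^ 2 := (sq_abs t).symm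
    _ ≤ r ^ 2 := by nlinarith [abs_nonneg t]

noncomputable def Fr (a b σ P p t : ℝ) : ℝ :=
  (1 / 2) * Real.log (1 + p * (P / σ ^ 2) * (1 + a * b * t) ^ 2 / (1 + b ^ 2 * t ^ 2))

noncomputable def vmode (a b σ P p t : ℝ) : Fin 3 → ℝ :=
  ![Fr a b σ P p t, p, t ^ 2 * (a ^ 2 * p * P + σ ^ 2)]

def Vset (a b σ P : ℝ) : Set (Fin 3 → ℝ) :=
  {v | ∃ p t : ℝ, 0 ≤ p ∧ v = vmode a b σ P p t}

lemma reduce (a b σ P : ℝ) (z : Fin 3 → ℝ) (hz : z ∈ convexHull ℝ (Vset a b σ P)) :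
    ∃ w q s : Fin 7 → ℝ, (∀ k, 0 ≤ w k) ∧ (∀ k, 0 ≤ q k) ∧ (∑ k, w k = 1) ∧
      (∑ k, w k * q k = z 1) ∧
      (∑ k, w k * (s k ^ 2 * (a ^ 2 * q k * P + σ ^ 2)) = z 2) ∧
      (∑ k, w k * Fr a b σ P (q k) (s k) = z 0) := by
  obtain ⟨ι, hfin, y, w, hrange, hindep, hwpos, hwsum, hzeq⟩ :=
    eq_pos_convex_span_of_mem_convexHull hz
  have hcard : Fintype.card ι ≤ 7 := by
    have h1 := hindep.card_le_finrank_succ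
    have h2 : Module.finrank ℝ (vectorSpan ℝ (Set.range y)) ≤ 3 := by
      have := Submodule.finrank_le (vectorSpan ℝ (Set.range y))
      simpa [Module.finrank_fin_fun] using this
    omega
  -- choose parameters for each point
  have hy : ∀ i, ∃ p t : ℝ, 0 ≤ p ∧ y i = vmode a b σ P p t := fun i =>
    hrange (Set.mem_range_self i)
  choose q s hq hyv using hy
  set n := Fintype.card ι with hn
  set e := Fintype.equivFin ι with he
  refine ⟨fun k => if h : (k : ℕ) < n then w (e.symm ⟨k, h⟩) else 0,
    fun k => if h : (k : ℕ) < n then q (e.symm ⟨k, h⟩) else 0,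
    fun k => if h : (k : ℕ) < n then s (e.symm ⟨k, h⟩) else 0, ?_, ?_, ?_, ?_, ?_, ?_⟩
  · intro k; by_cases h : (k : ℕ) < n <;> simp [h]
    exact (hwpos _).le
  · intro k; by_cases h : (k : ℕ) < n <;> simp [h]
    exact hq _
  all_goals {
    have hsum : ∀ f : ℝ → ℝ → ℝ → ℝ, f 0 0 0 = 0 →
        (∑ k : Fin 7, f (if h : (k : ℕ) < n then w (e.symm ⟨k, h⟩) else 0)
          (if h : (k : ℕ) < n then q (e.symm ⟨k, h⟩) else 0)
          (if h : (k : ℕ) < n then s (e.symm ⟨k, h⟩) else 0))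
        = ∑ i : ι, f (w i) (q i) (s i) := by
      intro f hf0
      have : ∀ k : Fin 7, f (if h : (k : ℕ) < n then w (e.symm ⟨k, h⟩) else 0)
          (if h : (k : ℕ) < n then q (e.symm ⟨k, h⟩) else 0)
          (if h : (k : ℕ) < n then s (e.symm ⟨k, h⟩) else 0)
          = if h : (k : ℕ) < n then
              (fun i : Fin n => f (w (e.symm i)) (q (e.symm i)) (s (e.symm i))) ⟨k, h⟩ else 0 := by
        intro k; by_cases h : (k : ℕ) < n <;> simp [h, hf0]
      rw [Finset.sum_congr rfl fun k _ => this k,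
        sum_extend (by omega) (fun i : Fin n => f (w (e.symm i)) (q (e.symm i)) (s (e.symm i)))]
      exact Fintype.sum_equiv e.symm _ _ fun i => rfl
    have hzj : ∀ j : Fin 3, z j = ∑ i : ι, w i * y i j := by
      intro j
      rw [← hzeq]
      rw [Finset.sum_apply]
      exact Finset.sum_congr rfl fun i _ => rfl
    first
    | · rw [hsum (fun w' _ _ => w') rfl]; exact hwsum
    | · rw [hsum (fun w' q' _ => w' * q') (by ring), hzj 1]
        refine Finset.sum_congr rfl fun i _ => ?_
        rw [hyv i]; simp [vmode]
    | · rw [hsum (fun w' q' s' => w' * (s' ^ 2 * (a ^ 2 * q' * P + σ ^ 2))) (by ring), hzj 2]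
        refine Finset.sum_congr rfl fun i _ => ?_
        rw [hyv i]; simp [vmode]
    | · rw [hsum (fun w' q' s' => w' * Fr a b σ P q' s') (by ring), hzj 0]
        refine Finset.sum_congr rfl fun i _ => ?_
        rw [hyv i]; simp [vmode] }

lemma vmode0 (a b σ P p t : ℝ) : vmode a b σ P p t 0 = Fr a b σ P p t := rfl
lemma vmode1 (a b σ P p t : ℝ) : vmode a b σ P p t 1 = p := rfl
lemma vmode2 (a b σ P p t : ℝ) : vmode a b σ P p t 2 = t ^ 2 * (a ^ 2 * p * P + σ ^ 2) := rfl


/-- The 50-mode capacity expression of Theorem 2 (complex amplify-and-forward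
gains) coincides with the 8-mode expression of Corollary 1 (real gains) for real
channel coefficients with `ab ≠ 0`. -/
theorem fifty_modes_eq_eight_modes (a b : ℝ) (hab : a * b ≠ 0) (σ P γ : ℝ)
    (hσ : 0 < σ) (hP : 0 < P) (hγ : 0 < γ) :
    sSup {x : ℝ |
      ∃ (τ θ : Fin 50 → ℝ) (lb : Fin 49 → ℂ),
        (∀ j, 0 ≤ τ j) ∧ (∀ j, 0 ≤ θ j) ∧
        (∑ j, τ j = 1) ∧ (∑ j, θ j = 1) ∧
        (∀ j, τ j = 0 → θ j = 0) ∧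
        (∑ j : Fin 49, ‖lb j‖ ^ 2 * (a ^ 2 * θ j.succ * P + τ j.succ * σ ^ 2) ≤ γ * P) ∧
        x = τ 0 * ((1 / 2) * Real.log (1 + θ 0 * P / (τ 0 * σ ^ 2)))
          + ∑ j : Fin 49, τ j.succ * ((1 / 2) * Real.log
              (1 + (θ j.succ / τ j.succ) * (P / σ ^ 2)
                * ‖1 + ((a * b : ℝ) : ℂ) * lb j‖ ^ 2 / (1 + b ^ 2 * ‖lb j‖ ^ 2)))}
    = sSup {x : ℝ |
      ∃ (τ θ : Fin 8 → ℝ) (lb : Fin 7 → ℝ),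
        (∀ j, 0 ≤ τ j) ∧ (∀ j, 0 ≤ θ j) ∧
        (∑ j, τ j = 1) ∧ (∑ j, θ j = 1) ∧
        (∀ j, τ j = 0 → θ j = 0) ∧
        (∑ j : Fin 7, (lb j) ^ 2 * (a ^ 2 * θ j.succ * P + τ j.succ * σ ^ 2) ≤ γ * P) ∧
        x = τ 0 * ((1 / 2) * Real.log (1 + θ 0 * P / (τ 0 * σ ^ 2)))
          + ∑ j : Fin 7, τ j.succ * ((1 / 2) * Real.log
              (1 + (θ j.succ / τ j.succ) * (P / σ ^ 2)
                * (1 + a * b * lb j) ^ 2 / (1 + b ^ 2 * (lb j) ^ 2)))} := by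
  refine congrArg sSup (Set.Subset.antisymm ?_ ?_)
  · -- 50 modes ⊆ 8 modes
    rintro x ⟨τ, θ, lb, hτ, hθ, hτs, hθs, hzero, hpow, hx⟩
    choose t ht1 ht2 using fun j : Fin 49 => exists_real_gain (a * b) b (lb j)
    set p : Fin 50 → ℝ := fun j => θ j / τ j with hp
    set tt : Fin 50 → ℝ := Fin.cases 0 t with htt
    have htt0 : tt 0 = 0 := by simp [htt]
    have htts : ∀ j : Fin 49, tt j.succ = t j := fun j => by simp [htt]
    set z : Fin 3 → ℝ := ∑ j, τ j • vmode a b σ P (p j) (tt j) with hzdef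
    have hzj : ∀ j3 : Fin 3, z j3 = ∑ j, τ j * vmode a b σ P (p j) (tt j) j3 := by
      intro j3
      rw [hzdef, Finset.sum_apply]
      exact Finset.sum_congr rfl fun i _ => rfl
    have hτθ : ∀ j, τ j * (θ j / τ j) = θ j := by
      intro j; by_cases h : τ j = 0
      · simp [h, hzero j h]
      · field_simp
    have hzmem : z ∈ convexHull ℝ (Vset a b σ P) := by
      rw [hzdef, ← Finset.centerMass_eq_of_sum_1 _ _ hτs]
      exact Finset.centerMass_mem_convexHull _ (fun i _ => hτ i) (by rw [hτs]; norm_num)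
        (fun i _ => ⟨p i, tt i, div_nonneg (hθ i) (hτ i), rfl⟩)
    obtain ⟨w, q, s, hw, hq, hws, hwq, hwpow, hwval⟩ := reduce a b σ P z hzmem
    have hz1 : z 1 = 1 := by
      rw [hzj 1]
      calc ∑ j, τ j * vmode a b σ P (p j) (tt j) 1 = ∑ j, θ j := by
            refine Finset.sum_congr rfl fun j _ => ?_
            rw [vmode1, hp]; exact hτθ j
        _ = 1 := hθs
    have hz2 : z 2 ≤ γ * P := by
      rw [hzj 2]
      rw [Fin.sum_univ_succ]
      have h0 : τ 0 * vmode a b σ P (p 0) (tt 0) 2 = 0 := by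
        rw [vmode2, htt0]; ring
      rw [h0, zero_add]
      refine le_trans (Finset.sum_le_sum fun j _ => ?_) hpow
      have hθ' := hθ j.succ; have hτ' := hτ j.succ
      have hcoeff : (0:ℝ) ≤ a ^ 2 * θ j.succ * P + τ j.succ * σ ^ 2 := by positivity
      have heq : τ j.succ * vmode a b σ P (p j.succ) (tt j.succ) 2
          = t j ^ 2 * (a ^ 2 * θ j.succ * P + τ j.succ * σ ^ 2) := by
        rw [vmode2, htts j, hp]
        calc τ j.succ * (t j ^ 2 * (a ^ 2 * (θ j.succ / τ j.succ) * P + σ ^ 2))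
            = t j ^ 2 * (a ^ 2 * (τ j.succ * (θ j.succ / τ j.succ)) * P + τ j.succ * σ ^ 2) := by
              ring
          _ = t j ^ 2 * (a ^ 2 * θ j.succ * P + τ j.succ * σ ^ 2) := by rw [hτθ j.succ]
      rw [heq]
      exact mul_le_mul_of_nonneg_right (ht1 j) hcoeff
    have hz0 : z 0 = x := by
      rw [hzj 0, hx, Fin.sum_univ_succ]
      congr 1
      · -- mode 0
        have : vmode a b σ P (p 0) (tt 0) 0 = (1/2) * Real.log (1 + θ 0 * P / (τ 0 * σ ^ 2)) := by
          rw [vmode0, htt0, Fr, hp]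
          rw [show θ 0 / τ 0 * (P / σ ^ 2) * (1 + a * b * 0) ^ 2 / (1 + b ^ 2 * 0 ^ 2)
              = θ 0 * P / (τ 0 * σ ^ 2) by rw [← div_mul_div_comm]; ring]
        rw [this]
      · refine Finset.sum_congr rfl fun j _ => ?_
        have : vmode a b σ P (p j.succ) (tt j.succ) 0
            = (1 / 2) * Real.log (1 + (θ j.succ / τ j.succ) * (P / σ ^ 2)
                * ‖1 + ((a * b : ℝ) : ℂ) * lb j‖ ^ 2 / (1 + b ^ 2 * ‖lb j‖ ^ 2)) := by
          rw [vmode0, htts j, Fr, hp]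
          rw [mul_div_assoc, ht2 j, ← mul_div_assoc]
        rw [this]
    refine ⟨Fin.cases 0 w, Fin.cases 0 (fun k => w k * q k), s, ?_, ?_, ?_, ?_, ?_, ?_, ?_⟩
    · intro j; induction j using Fin.cases with
      | zero => simp
      | succ k => simpa using hw k
    · intro j; induction j using Fin.cases with
      | zero => simp
      | succ k => simpa using mul_nonneg (hw k) (hq k)
    · rw [Fin.sum_univ_succ]
      simp only [Fin.cases_zero, Fin.cases_succ, zero_add]
      exact hws
    · rw [Fin.sum_univ_succ]
      simp only [Fin.cases_zero, Fin.cases_succ, zero_add]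
      exact hwq.trans hz1
    · intro j; induction j using Fin.cases with
      | zero => simp
      | succ k => intro h; simp only [Fin.cases_succ] at h ⊢; rw [h, zero_mul]
    · refine le_trans (le_of_eq (Finset.sum_congr rfl fun k _ => ?_))
        ((le_of_eq hwpow).trans hz2)
      simp only [Fin.cases_succ]; ring
    · rw [← hz0, ← hwval]
      simp only [Fin.cases_zero, Fin.cases_succ, zero_mul, zero_add]
      refine Finset.sum_congr rfl fun k _ => ?_
      by_cases h : w k = 0
      · rw [h, zero_mul, zero_mul]
      · rw [mul_div_cancel_left₀ _ h, Fr]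
  · -- 8 modes ⊆ 50 modes
    rintro x ⟨τ, θ, lb, hτ, hθ, hτs, hθs, hzero, hpow, hx⟩
    refine ⟨fun k => if h : (k : ℕ) < 8 then τ ⟨k, h⟩ else 0,
      fun k => if h : (k : ℕ) < 8 then θ ⟨k, h⟩ else 0,
      fun k => if h : (k : ℕ) < 7 then ((lb ⟨k, h⟩ : ℝ) : ℂ) else 0, ?_, ?_, ?_, ?_, ?_, ?_, ?_⟩
    · intro j; by_cases h : (j : ℕ) < 8 <;> simp [h]; exact hτ _
    · intro j; by_cases h : (j : ℕ) < 8 <;> simp [h]; exact hθ _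
    · rw [sum_extend (by omega) τ]; exact hτs
    · rw [sum_extend (by omega) θ]; exact hθs
    · intro j h; dsimp only at h ⊢; by_cases hj : (j : ℕ) < 8
      · rw [dif_pos hj] at h ⊢; exact hzero _ h
      · rw [dif_neg hj]
    · have hterm : ∀ k : Fin 49,
          ‖(if h : (k : ℕ) < 7 then ((lb ⟨k, h⟩ : ℝ) : ℂ) else 0)‖ ^ 2
            * (a ^ 2 * (if h : ((k.succ : Fin 50) : ℕ) < 8 then θ ⟨k.succ, h⟩ else 0) * P
              + (if h : ((k.succ : Fin 50) : ℕ) < 8 then τ ⟨k.succ, h⟩ else 0) * σ ^ 2)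
          = if h : (k : ℕ) < 7 then
              (fun i : Fin 7 => (lb i) ^ 2 * (a ^ 2 * θ i.succ * P + τ i.succ * σ ^ 2)) ⟨k, h⟩
            else 0 := by
        intro k
        have hv : ((k.succ : Fin 50) : ℕ) = (k : ℕ) + 1 := rfl
        by_cases h : (k : ℕ) < 7
        · have h8 : ((k.succ : Fin 50) : ℕ) < 8 := by omega
          rw [dif_pos h, dif_pos h8, dif_pos h8, dif_pos h]
          have hs : (⟨((k.succ : Fin 50) : ℕ), h8⟩ : Fin 8) = (⟨(k : ℕ), h⟩ : Fin 7).succ := by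
            apply Fin.ext; simp [Fin.val_succ]
          rw [hs, Complex.norm_real]
          simp [Real.norm_eq_abs, sq_abs]
        · have h8 : ¬ ((k.succ : Fin 50) : ℕ) < 8 := by omega
          rw [dif_neg h, dif_neg h8, dif_neg h8, dif_neg h]
          simp
      rw [Finset.sum_congr rfl fun k _ => hterm k, sum_extend (by omega)
        (fun i : Fin 7 => (lb i) ^ 2 * (a ^ 2 * θ i.succ * P + τ i.succ * σ ^ 2))]
      exact hpow
    · dsimp only
      rw [hx]
      congr 1
      · have hterm : ∀ k : Fin 49,
            (if h : ((k.succ : Fin 50) : ℕ) < 8 then τ ⟨k.succ, h⟩ else 0)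
              * ((1 / 2) * Real.log (1 +
                ((if h : ((k.succ : Fin 50) : ℕ) < 8 then θ ⟨k.succ, h⟩ else 0)
                    / (if h : ((k.succ : Fin 50) : ℕ) < 8 then τ ⟨k.succ, h⟩ else 0))
                  * (P / σ ^ 2)
                  * ‖1 + ((a * b : ℝ) : ℂ) * (if h : (k : ℕ) < 7 then ((lb ⟨k, h⟩ : ℝ) : ℂ) else 0)‖ ^ 2
                  / (1 + b ^ 2 * ‖(if h : (k : ℕ) < 7 then ((lb ⟨k, h⟩ : ℝ) : ℂ) else 0)‖ ^ 2)))
            = if h : (k : ℕ) < 7 then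
                (fun i : Fin 7 => τ i.succ * ((1 / 2) * Real.log
                  (1 + (θ i.succ / τ i.succ) * (P / σ ^ 2)
                    * (1 + a * b * lb i) ^ 2 / (1 + b ^ 2 * (lb i) ^ 2)))) ⟨k, h⟩
              else 0 := by
          intro k
          have hv : ((k.succ : Fin 50) : ℕ) = (k : ℕ) + 1 := rfl
          by_cases h : (k : ℕ) < 7
          · have h8 : ((k.succ : Fin 50) : ℕ) < 8 := by omega
            have hs : (⟨((k.succ : Fin 50) : ℕ), h8⟩ : Fin 8) = (⟨(k : ℕ), h⟩ : Fin 7).succ := by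
              apply Fin.ext; simp [Fin.val_succ]
            simp only [dif_pos h, dif_pos h8]
            rw [hs]
            have hnc : ‖(1 : ℂ) + ((a * b : ℝ) : ℂ) * ((lb ⟨(k:ℕ), h⟩ : ℝ) : ℂ)‖ ^ 2
                = (1 + a * b * lb ⟨(k:ℕ), h⟩) ^ 2 := by
              rw [show (1 : ℂ) + ((a * b : ℝ) : ℂ) * ((lb ⟨(k:ℕ), h⟩ : ℝ) : ℂ)
                  = ((1 + a * b * lb ⟨(k:ℕ), h⟩ : ℝ) : ℂ) by push_cast; ring,
                Complex.norm_real, Real.norm_eq_abs, sq_abs]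
            rw [hnc, Complex.norm_real]
            simp [Real.norm_eq_abs, sq_abs]
          · have h8 : ¬ ((k.succ : Fin 50) : ℕ) < 8 := by omega
            simp only [dif_neg h, dif_neg h8, zero_mul]
        rw [Finset.sum_congr rfl fun k _ => hterm k, sum_extend (by omega)
          (fun i : Fin 7 => τ i.succ * ((1 / 2) * Real.log
            (1 + (θ i.succ / τ i.succ) * (P / σ ^ 2)
              * (1 + a * b * lb i) ^ 2 / (1 + b ^ 2 * (lb i) ^ 2))))]
end
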